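/- arXiv:math/0702004 — 6 statements merged into one kernel-verified Lean document; each statement's English description precedes it below -/
import Mathlib

section
/- For any symmetric bounded measurable function W : [0,1]² → ℝ, (1/2)·‖W‖_□ ≤ sup over measurable S ⊆ [0,1] of |∫_{S×S} W| ≤ ‖W‖_□. -/
open MeasureTheory

/-- The cut norm of a kernel `W` on `[0,1]²`: the supremum over measurable subsets
`S, T ⊆ [0,1]` of `|∫_{S×T} W|`. -/
noncomputable def cutNorm (W : ℝ → ℝ → ℝ) : ℝ :=
  sSup {r : ℝ | ∃ S T : Set ℝ, MeasurableSet S ∧ MeasurableSet T ∧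
    S ⊆ Set.Icc 0 1 ∧ T ⊆ Set.Icc 0 1 ∧ r = |∫ x in S, ∫ y in T, W x y|}

/-- The supremum of `|∫_{S×S} W|` over measurable `S ⊆ [0,1]`. -/
noncomputable def diagCutSup (W : ℝ → ℝ → ℝ) : ℝ :=
  sSup {r : ℝ | ∃ S : Set ℝ, MeasurableSet S ∧ S ⊆ Set.Icc 0 1 ∧
    r = |∫ x in S, ∫ y in S, W x y|}

/-- For any symmetric bounded measurable `W : [0,1]² → ℝ`,
`(1/2)·‖W‖_□ ≤ sup_S |∫_{S×S} W| ≤ ‖W‖_□`. -/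
theorem half_cutNorm_le_diagCutSup (W : ℝ → ℝ → ℝ)
    (hmeas : Measurable (Function.uncurry W))
    (hsymm : ∀ x y, W x y = W y x)
    (hbdd : ∃ C : ℝ, ∀ x y, |W x y| ≤ C) :
    (1 / 2) * cutNorm W ≤ diagCutSup W ∧ diagCutSup W ≤ cutNorm W := by
  classical
  obtain ⟨C, hC⟩ := hbdd
  have hC0 : 0 ≤ C := (abs_nonneg _).trans (hC 0 0)
  set I : Set ℝ := Set.Icc 0 1 with hIdef
  have hfin : ∀ {T : Set ℝ}, T ⊆ I → volume T ≤ 1 := by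
    intro T hT
    calc volume T ≤ volume I := measure_mono hT
    _ = 1 := by simp [hIdef]
  have hfin' : ∀ {T : Set ℝ}, T ⊆ I → volume T < ⊤ := fun hT =>
    lt_of_le_of_lt (hfin hT) (by norm_num)
  have hWx : ∀ x, Measurable (W x) := fun x => hmeas.comp measurable_prodMk_left
  -- integrability of W x on a measurable subset of I
  have hIntWx : ∀ (x : ℝ) {T : Set ℝ}, MeasurableSet T → T ⊆ I → IntegrableOn (W x) T := by
    intro x T hTm hTs
    exact Integrable.mono' (integrableOn_const (hfin' hTs).ne)
      ((hWx x).aestronglyMeasurable) (ae_of_all _ fun y => by simpa using hC x y)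
  -- the inner integral is strongly measurable and bounded by C
  have hfTmeas : ∀ (T : Set ℝ), StronglyMeasurable (fun x => ∫ y in T, W x y) := by
    intro T
    exact hmeas.stronglyMeasurable.integral_prod_right'
  have hIbound : ∀ {T : Set ℝ}, MeasurableSet T → T ⊆ I →
      ∀ x, |∫ y in T, W x y| ≤ C := by
    intro T hTm hTs x
    have h1 : ‖∫ y in T, W x y‖ ≤ C * (volume T).toReal :=
      norm_setIntegral_le_of_norm_le_const (hfin' hTs)
        (fun y _ => by simpa using hC x y)
    have h2 : (volume T).toReal ≤ 1 := by
      simpa using ENNReal.toReal_mono (by norm_num) (hfin hTs)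
    calc |∫ y in T, W x y| ≤ C * (volume T).toReal := h1
    _ ≤ C * 1 := by nlinarith
    _ = C := mul_one C
  -- integrability of the inner integral
  have hIntf : ∀ {S T : Set ℝ}, MeasurableSet S → S ⊆ I → MeasurableSet T → T ⊆ I →
      IntegrableOn (fun x => ∫ y in T, W x y) S := by
    intro S T hSm hSs hTm hTs
    exact Integrable.mono' (integrableOn_const (hfin' hSs).ne)
      (hfTmeas T).aestronglyMeasurable
      (ae_of_all _ fun x => by simpa using hIbound hTm hTs x)
  set F : Set ℝ → Set ℝ → ℝ := fun S T => ∫ x in S, ∫ y in T, W x y with hFdef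
  -- bound on F
  have hFbound : ∀ {S T : Set ℝ}, MeasurableSet S → S ⊆ I → MeasurableSet T → T ⊆ I →
      |F S T| ≤ C := by
    intro S T hSm hSs hTm hTs
    have h1 : ‖∫ x in S, ∫ y in T, W x y‖ ≤ C * (volume S).toReal :=
      norm_setIntegral_le_of_norm_le_const (hfin' hSs)
        (fun x _ => by simpa using hIbound hTm hTs x)
    have h2 : (volume S).toReal ≤ 1 := by
      simpa using ENNReal.toReal_mono (by norm_num) (hfin hSs)
    calc |F S T| ≤ C * (volume S).toReal := h1
    _ ≤ C * 1 := by nlinarith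
    _ = C := mul_one C
  -- additivity in the left argument
  have hFaddL : ∀ {A B T : Set ℝ}, MeasurableSet A → A ⊆ I → MeasurableSet B → B ⊆ I →
      MeasurableSet T → T ⊆ I → Disjoint A B → F (A ∪ B) T = F A T + F B T := by
    intro A B T hAm hAs hBm hBs hTm hTs hd
    exact setIntegral_union hd hBm (hIntf hAm hAs hTm hTs) (hIntf hBm hBs hTm hTs)
  -- additivity in the right argument
  have hFaddR : ∀ {S A B : Set ℝ}, MeasurableSet S → S ⊆ I → MeasurableSet A → A ⊆ I →
      MeasurableSet B → B ⊆ I → Disjoint A B → F S (A ∪ B) = F S A + F S B := by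
    intro S A B hSm hSs hAm hAs hBm hBs hd
    have h1 : ∀ x, ∫ y in A ∪ B, W x y = (∫ y in A, W x y) + ∫ y in B, W x y := fun x =>
      setIntegral_union hd hBm (hIntWx x hAm hAs) (hIntWx x hBm hBs)
    calc F S (A ∪ B) = ∫ x in S, ((∫ y in A, W x y) + ∫ y in B, W x y) := by
          simp only [hFdef]; exact integral_congr_ae (ae_of_all _ h1)
    _ = F S A + F S B := integral_add (hIntf hSm hSs hAm hAs) (hIntf hSm hSs hBm hBs)
  -- symmetry of F
  have hFsymm : ∀ {S T : Set ℝ}, MeasurableSet S → S ⊆ I → MeasurableSet T → T ⊆ I →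
      F S T = F T S := by
    intro S T hSm hSs hTm hTs
    haveI : IsFiniteMeasure (volume.restrict S) :=
      ⟨by rw [Measure.restrict_apply_univ]; exact hfin' hSs⟩
    haveI : IsFiniteMeasure (volume.restrict T) :=
      ⟨by rw [Measure.restrict_apply_univ]; exact hfin' hTs⟩
    have hint : Integrable (Function.uncurry fun x y => W y x)
        ((volume.restrict T).prod (volume.restrict S)) := by
      refine Integrable.mono' (integrable_const C)
        ((hmeas.comp measurable_swap).aestronglyMeasurable)
        (ae_of_all _ fun z => by simp only [Real.norm_eq_abs]; exact hC z.2 z.1)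
    have hswap := integral_integral_swap hint
    -- hswap : ∫ x in T, ∫ y in S, W y x = ∫ y in S, ∫ x in T, W y x
    have hL : F T S = ∫ x in T, ∫ y in S, W y x := by
      simp only [hFdef]
      refine integral_congr_ae (ae_of_all _ fun x => ?_)
      refine integral_congr_ae (ae_of_all _ fun y => hsymm x y)
    rw [hL, hswap]
  -- the key identity : 2 F S T = F (S∪T) (S∪T) + F (S∩T) (S∩T) - F (S\T) (S\T) - F (T\S) (T\S)
  have hkey : ∀ {S T : Set ℝ}, MeasurableSet S → S ⊆ I → MeasurableSet T → T ⊆ I →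
      2 * F S T = F (S ∪ T) (S ∪ T) + F (S ∩ T) (S ∩ T)
        - F (S \ T) (S \ T) - F (T \ S) (T \ S) := by
    intro S T hSm hSs hTm hTs
    set A : Set ℝ := S \ T with hA
    set B : Set ℝ := S ∩ T with hB
    set C2 : Set ℝ := T \ S with hC2
    have hAm : MeasurableSet A := hSm.diff hTm
    have hBm : MeasurableSet B := hSm.inter hTm
    have hC2m : MeasurableSet C2 := hTm.diff hSm
    have hAs : A ⊆ I := fun x hx => hSs hx.1
    have hBs : B ⊆ I := fun x hx => hSs hx.1
    have hC2s : C2 ⊆ I := fun x hx => hTs hx.1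
    have dAB : Disjoint A B := Set.disjoint_left.mpr fun x hx hx' => hx.2 hx'.2
    have dBC : Disjoint B C2 := Set.disjoint_left.mpr fun x hx hx' => hx'.2 hx.1
    have dAC : Disjoint A C2 := Set.disjoint_left.mpr fun x hx hx' => hx.2 hx'.1
    have dSC : Disjoint S C2 := Set.disjoint_left.mpr fun x hx hx' => hx'.2 hx
    have hSd : S = A ∪ B := (Set.diff_union_inter S T).symm
    have hTd : T = B ∪ C2 := by
      rw [hB, hC2, Set.inter_comm S T]
      exact (Set.inter_union_diff T S).symm
    have hUd : S ∪ T = S ∪ C2 := by rw [hC2, Set.union_diff_self]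
    have hSCm : MeasurableSet (S ∪ C2) := hSm.union hC2m
    have hSCs : S ∪ C2 ⊆ I := Set.union_subset hSs hC2s
    -- expand F S T
    have e1 : F S T = F A B + F A C2 + (F B B + F B C2) := by
      conv_lhs => rw [hSd, hTd]
      rw [hFaddL hAm hAs hBm hBs (by rw [← hTd]; exact hTm) (by rw [← hTd]; exact hTs) dAB,
        hFaddR hAm hAs hBm hBs hC2m hC2s dBC,
        hFaddR hBm hBs hBm hBs hC2m hC2s dBC]
    -- expand F (S∪T) (S∪T)
    have e2 : F (S ∪ T) (S ∪ T)
        = (F S S + F S C2) + (F C2 S + F C2 C2) := by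
      rw [hUd, hFaddL hSm hSs hC2m hC2s hSCm hSCs dSC,
        hFaddR hSm hSs hSm hSs hC2m hC2s dSC,
        hFaddR hC2m hC2s hSm hSs hC2m hC2s dSC]
    have e3 : F S S = F A A + F A B + (F B A + F B B) := by
      conv_lhs => rw [hSd]
      rw [hFaddL hAm hAs hBm hBs (hSd ▸ hSm) (hSd ▸ hSs) dAB,
        hFaddR hAm hAs hAm hAs hBm hBs dAB,
        hFaddR hBm hBs hAm hAs hBm hBs dAB]
    have e4 : F S C2 = F A C2 + F B C2 := by
      conv_lhs => rw [hSd]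
      exact hFaddL hAm hAs hBm hBs hC2m hC2s dAB
    have e5 : F C2 S = F S C2 := hFsymm hC2m hC2s hSm hSs
    have e6 : F B A = F A B := hFsymm hBm hBs hAm hAs
    have e7 : F (S ∩ T) (S ∩ T) = F B B := by rw [hB]
    have e8 : F (S \ T) (S \ T) = F A A := by rw [hA]
    have e9 : F (T \ S) (T \ S) = F C2 C2 := by rw [hC2]
    rw [e2, e7, e8, e9]
    rw [e3, e4, e5, e4, e6] at *
    linarith [e1]
  -- assemble
  have hbddCut : BddAbove {r : ℝ | ∃ S T : Set ℝ, MeasurableSet S ∧ MeasurableSet T ∧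
      S ⊆ Set.Icc 0 1 ∧ T ⊆ Set.Icc 0 1 ∧ r = |∫ x in S, ∫ y in T, W x y|} := by
    refine ⟨C, ?_⟩
    rintro r ⟨S, T, hS, hT, hSs, hTs, rfl⟩
    exact hFbound hS hSs hT hTs
  have hbddD : BddAbove {r : ℝ | ∃ S : Set ℝ, MeasurableSet S ∧ S ⊆ Set.Icc 0 1 ∧
      r = |∫ x in S, ∫ y in S, W x y|} := by
    refine ⟨C, ?_⟩
    rintro r ⟨S, hS, hSs, rfl⟩
    exact hFbound hS hSs hS hSs
  have hneD : ({r : ℝ | ∃ S : Set ℝ, MeasurableSet S ∧ S ⊆ Set.Icc 0 1 ∧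
      r = |∫ x in S, ∫ y in S, W x y|}).Nonempty :=
    ⟨_, ∅, MeasurableSet.empty, Set.empty_subset _, rfl⟩
  have hneCut : ({r : ℝ | ∃ S T : Set ℝ, MeasurableSet S ∧ MeasurableSet T ∧
      S ⊆ Set.Icc 0 1 ∧ T ⊆ Set.Icc 0 1 ∧ r = |∫ x in S, ∫ y in T, W x y|}).Nonempty :=
    ⟨_, ∅, ∅, MeasurableSet.empty, MeasurableSet.empty, Set.empty_subset _,
      Set.empty_subset _, rfl⟩
  have hDle : ∀ {S : Set ℝ}, MeasurableSet S → S ⊆ I → |F S S| ≤ diagCutSup W := by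
    intro S hS hSs
    exact le_csSup hbddD ⟨S, hS, hSs, rfl⟩
  constructor
  · have hcn : cutNorm W ≤ 2 * diagCutSup W := by
      refine csSup_le hneCut ?_
      rintro r ⟨S, T, hS, hT, hSs, hTs, rfl⟩
      have hkeyST := hkey hS hSs hT hTs
      have hUm : MeasurableSet (S ∪ T) := hS.union hT
      have hUs : S ∪ T ⊆ I := Set.union_subset hSs hTs
      have h1 := hDle hUm hUs
      have h2 := hDle (hS.inter hT) (fun x hx => hSs hx.1)
      have h3 := hDle (hS.diff hT) (fun x hx => hSs hx.1)
      have h4 := hDle (hT.diff hS) (fun x hx => hTs hx.1)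
      have habs : |2 * F S T| ≤ 4 * diagCutSup W := by
        rw [hkeyST]
        have := abs_sub (F (S ∪ T) (S ∪ T) + F (S ∩ T) (S ∩ T)) (F (S \ T) (S \ T))
        calc |F (S ∪ T) (S ∪ T) + F (S ∩ T) (S ∩ T) - F (S \ T) (S \ T) - F (T \ S) (T \ S)|
            ≤ |F (S ∪ T) (S ∪ T)| + |F (S ∩ T) (S ∩ T)| + |F (S \ T) (S \ T)|
              + |F (T \ S) (T \ S)| := by
              have := abs_add_le (F (S ∪ T) (S ∪ T)) (F (S ∩ T) (S ∩ T))
              have := abs_sub_abs_le_abs_sub (F (S ∪ T) (S ∪ T)) (F (S ∩ T) (S ∩ T))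
              calc _ ≤ |F (S ∪ T) (S ∪ T) + F (S ∩ T) (S ∩ T) - F (S \ T) (S \ T)|
                    + |F (T \ S) (T \ S)| := abs_sub _ _
              _ ≤ (|F (S ∪ T) (S ∪ T) + F (S ∩ T) (S ∩ T)| + |F (S \ T) (S \ T)|)
                    + |F (T \ S) (T \ S)| := by
                  gcongr
              _ ≤ _ := by
                  gcongr
        _ ≤ 4 * diagCutSup W := by linarith
      have : |F S T| ≤ 2 * diagCutSup W := by
        rw [abs_mul] at habs
        simp only [abs_two] at habs
        linarith
      exact this
    linarith
  · exact csSup_le_csSup hbddCut hneD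
      (by rintro r ⟨S, hS, hSs, rfl⟩; exact ⟨S, S, hS, hS, hSs, hSs, rfl⟩)
end

section
/- Let W be a symmetric bounded measurable function on [0,1]² with ‖W‖_∞ ≤ 1. Then (1/4)·t(C₄, W) ≤ ‖W‖_□ ≤ t(C₄, W)^{1/4}, where t(C₄, W) = ∫_{[0,1]⁴} W(x₁,x₂)W(x₂,x₃)W(x₃,x₄)W(x₄,x₁) dx₁dx₂dx₃dx₄. -/
open MeasureTheory

/-- The homomorphism density of the 4-cycle `C₄` in a kernel `W`:
`t(C₄,W) = ∫_{[0,1]⁴} W(x₁,x₂)W(x₂,x₃)W(x₃,x₄)W(x₄,x₁) dx`. -/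
noncomputable def tC4 (W : ℝ → ℝ → ℝ) : ℝ :=
  ∫ x₁ in Set.Icc (0:ℝ) 1, ∫ x₂ in Set.Icc (0:ℝ) 1, ∫ x₃ in Set.Icc (0:ℝ) 1,
    ∫ x₄ in Set.Icc (0:ℝ) 1, W x₁ x₂ * W x₂ x₃ * W x₃ x₄ * W x₄ x₁

local notation "I01" => Set.Icc (0:ℝ) 1

lemma volI01 : (volume (Set.Icc (0:ℝ) 1)) = 1 := by
  rw [Real.volume_Icc]; norm_num

lemma finRestrict {S : Set ℝ} (hS : S ⊆ I01) : IsFiniteMeasure (volume.restrict S) := by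
  constructor
  rw [Measure.restrict_apply_univ]
  exact lt_of_le_of_lt (measure_mono hS) (by rw [volI01]; exact ENNReal.one_lt_top)

lemma measRestrict_le_one {S : Set ℝ} (hS : S ⊆ I01) :
    ((volume.restrict S) Set.univ).toReal ≤ 1 := by
  rw [Measure.restrict_apply_univ]
  have h1 : volume S ≤ 1 := by rw [← volI01]; exact measure_mono hS
  have := ENNReal.toReal_mono (by norm_num) h1
  simpa using this

def cutSet (W : ℝ → ℝ → ℝ) : Set ℝ :=
  {r : ℝ | ∃ S T : Set ℝ, MeasurableSet S ∧ MeasurableSet T ∧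
    S ⊆ Set.Icc 0 1 ∧ T ⊆ Set.Icc 0 1 ∧ r = |∫ x in S, ∫ y in T, W x y|}

lemma cutNorm_eq (W : ℝ → ℝ → ℝ) : cutNorm W = sSup (cutSet W) := rfl

lemma cutSet_nonempty (W : ℝ → ℝ → ℝ) : (cutSet W).Nonempty := by
  refine ⟨0, ∅, ∅, MeasurableSet.empty, MeasurableSet.empty, by simp, by simp, by simp⟩

lemma cutSet_le_one {W : ℝ → ℝ → ℝ} (hbdd : ∀ x y, |W x y| ≤ 1) :
    ∀ r ∈ cutSet W, r ≤ 1 := by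
  rintro r ⟨S, T, hS, hT, hSsub, hTsub, rfl⟩
  haveI := finRestrict hSsub
  haveI := finRestrict hTsub
  have inner : ∀ x, ‖∫ y in T, W x y‖ ≤ 1 := by
    intro x
    calc ‖∫ y in T, W x y‖ ≤ 1 * ((volume.restrict T) Set.univ).toReal :=
          norm_integral_le_of_norm_le_const
            (Filter.Eventually.of_forall fun y => by simpa using hbdd x y)
      _ ≤ 1 := by rw [one_mul]; exact measRestrict_le_one hTsub
  calc |∫ x in S, ∫ y in T, W x y| ≤ 1 * ((volume.restrict S) Set.univ).toReal :=
        norm_integral_le_of_norm_le_const (Filter.Eventually.of_forall inner)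
    _ ≤ 1 := by rw [one_mul]; exact measRestrict_le_one hSsub

lemma cutSet_bddAbove {W : ℝ → ℝ → ℝ} (hbdd : ∀ x y, |W x y| ≤ 1) :
    BddAbove (cutSet W) := ⟨1, fun r hr => cutSet_le_one hbdd r hr⟩

lemma le_cutNorm {W : ℝ → ℝ → ℝ} (hbdd : ∀ x y, |W x y| ≤ 1) {r : ℝ} (hr : r ∈ cutSet W) :
    r ≤ cutNorm W := le_csSup (cutSet_bddAbove hbdd) hr

lemma cutNorm_nonneg {W : ℝ → ℝ → ℝ} (hbdd : ∀ x y, |W x y| ≤ 1) : 0 ≤ cutNorm W := by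
  have : (0:ℝ) ∈ cutSet W := cutSet_nonempty W |>.elim (fun r hr => by
    exact ⟨∅, ∅, MeasurableSet.empty, MeasurableSet.empty, by simp, by simp, by simp⟩)
  exact le_cutNorm hbdd this

lemma cutNorm_le_one {W : ℝ → ℝ → ℝ} (hbdd : ∀ x y, |W x y| ≤ 1) : cutNorm W ≤ 1 :=
  csSup_le (cutSet_nonempty W) (cutSet_le_one hbdd)

lemma cutNorm_neg (W : ℝ → ℝ → ℝ) : cutNorm (fun x y => -(W x y)) = cutNorm W := by
  unfold cutNorm
  congr 1
  ext r
  constructor <;> rintro ⟨S, T, hS, hT, hSs, hTs, rfl⟩ <;>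
    exact ⟨S, T, hS, hT, hSs, hTs, by simp [integral_neg]⟩

lemma intOfBdd {α : Type*} [MeasurableSpace α] {μ : Measure α} [IsFiniteMeasure μ]
    {f : α → ℝ} (hf : AEStronglyMeasurable f μ) {C : ℝ} (hC : ∀ x, |f x| ≤ C) :
    Integrable f μ := by
  refine Integrable.mono' (integrable_const C) hf ?_
  exact Filter.Eventually.of_forall (fun x => by simpa using hC x)

lemma measInt_right {T : Set ℝ} {F : ℝ × ℝ → ℝ} (hF : Measurable F) :
    Measurable fun x => ∫ y in T, F (x, y) :=
  (hF.stronglyMeasurable.integral_prod_right' (ν := volume.restrict T)).measurable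

lemma measInt_left {S : Set ℝ} {F : ℝ × ℝ → ℝ} (hF : Measurable F) :
    Measurable fun y => ∫ x in S, F (x, y) :=
  (hF.stronglyMeasurable.integral_prod_left' (μ := volume.restrict S)).measurable

lemma intProd {S T : Set ℝ} (hS : S ⊆ I01) (hT : T ⊆ I01) {F : ℝ × ℝ → ℝ}
    (hF : Measurable F) {C : ℝ} (hFb : ∀ p, |F p| ≤ C) :
    Integrable F ((volume.restrict S).prod (volume.restrict T)) := by
  haveI := finRestrict hS
  haveI := finRestrict hT
  exact intOfBdd hF.aestronglyMeasurable hFb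

/-- replacing a `[0,1]`-valued weight by an indicator only increases the integral -/
lemma weight_to_indicator {φ g : ℝ → ℝ} (hφ : Measurable φ) (hφb : ∀ x, |φ x| ≤ 1)
    (hg : Measurable g) (hg01 : ∀ x, 0 ≤ g x ∧ g x ≤ 1) :
    ∫ y in I01, g y * φ y ≤ ∫ y in I01 ∩ {y | 0 ≤ φ y}, φ y := by
  haveI := finRestrict (le_refl I01)
  have hPmeas : MeasurableSet {y : ℝ | 0 ≤ φ y} := measurableSet_le measurable_const hφ
  have hpt : ∀ y, g y * φ y ≤ ({y : ℝ | 0 ≤ φ y}).indicator φ y := by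
    intro y
    simp only [Set.indicator_apply, Set.mem_setOf_eq]
    by_cases h : 0 ≤ φ y
    · rw [if_pos h]
      exact mul_le_of_le_one_left h (hg01 y).2
    · rw [if_neg h]
      exact mul_nonpos_of_nonneg_of_nonpos (hg01 y).1 (le_of_not_ge h)
  have h1 : Integrable (fun y => g y * φ y) (volume.restrict I01) := by
    refine intOfBdd (hg.mul hφ).aestronglyMeasurable (C := 1) (fun y => ?_)
    rw [abs_mul]
    have hgy : |g y| ≤ 1 := abs_le.2 ⟨by linarith [(hg01 y).1], (hg01 y).2⟩
    nlinarith [abs_nonneg (g y), abs_nonneg (φ y), hφb y]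
  have h2 : Integrable (fun y => ({y : ℝ | 0 ≤ φ y}).indicator φ y) (volume.restrict I01) := by
    refine intOfBdd ((hφ.indicator hPmeas)).aestronglyMeasurable (C := 1) (fun y => ?_)
    simp only [Set.indicator_apply, Set.mem_setOf_eq]
    by_cases h : 0 ≤ φ y
    · rw [if_pos h]; exact hφb y
    · rw [if_neg h]; simp
  have step1 : ∫ y in I01, g y * φ y ≤ ∫ y in I01, ({y : ℝ | 0 ≤ φ y}).indicator φ y :=
    integral_mono h1 h2 hpt
  have step2 : ∫ y in I01, ({y : ℝ | 0 ≤ φ y}).indicator φ y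
      = ∫ y in I01 ∩ {y | 0 ≤ φ y}, φ y := setIntegral_indicator hPmeas
  linarith

lemma intAbs_le_one {T : Set ℝ} (hT : T ⊆ I01) {h : ℝ → ℝ} (hb : ∀ y, |h y| ≤ 1) :
    |∫ y in T, h y| ≤ 1 := by
  haveI := finRestrict hT
  have h1 : ‖∫ y in T, h y‖ ≤ 1 * ((volume.restrict T) Set.univ).toReal :=
    norm_integral_le_of_norm_le_const (Filter.Eventually.of_forall fun y => by
      rw [Real.norm_eq_abs]; exact hb y)
  rw [Real.norm_eq_abs, one_mul] at h1
  exact h1.trans (measRestrict_le_one hT)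

lemma bilinear_le (W : ℝ → ℝ → ℝ) (hmeas : Measurable (Function.uncurry W))
    (hbdd : ∀ x y, |W x y| ≤ 1) (f g : ℝ → ℝ) (hf : Measurable f) (hg : Measurable g)
    (hf01 : ∀ x, 0 ≤ f x ∧ f x ≤ 1) (hg01 : ∀ x, 0 ≤ g x ∧ g x ≤ 1) :
    ∫ x in I01, ∫ y in I01, f x * W x y * g y ≤ cutNorm W := by
  set φ : ℝ → ℝ := fun x => ∫ y in I01, W x y * g y with hφdef
  have hφmeas : Measurable φ :=
    measInt_right (F := fun p => W p.1 p.2 * g p.2) (hmeas.mul (hg.comp measurable_snd))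
  have hφb : ∀ x, |φ x| ≤ 1 := fun x => intAbs_le_one (le_refl _) (fun y => by
    rw [abs_mul]
    nlinarith [abs_nonneg (W x y), abs_nonneg (g y), hbdd x y,
      abs_le.2 ⟨by linarith [(hg01 y).1], (hg01 y).2⟩])
  have eq1 : ∫ x in I01, ∫ y in I01, f x * W x y * g y = ∫ x in I01, f x * φ x := by
    refine integral_congr_ae (Filter.Eventually.of_forall fun x => ?_)
    simp only [mul_assoc]
    exact integral_const_mul (f x) _
  set S : Set ℝ := I01 ∩ {x | 0 ≤ φ x} with hSdef
  have hSmeas : MeasurableSet S :=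
    measurableSet_Icc.inter (measurableSet_le measurable_const hφmeas)
  have hSsub : S ⊆ I01 := Set.inter_subset_left
  have step1 : ∫ x in I01, f x * φ x ≤ ∫ x in S, φ x := by
    have := weight_to_indicator hφmeas hφb hf hf01
    exact this
  have swap1 : ∫ x in S, φ x = ∫ y in I01, g y * (∫ x in S, W x y) := by
    have h := integral_integral_swap (μ := volume.restrict S) (ν := volume.restrict I01)
      (f := fun x y => W x y * g y)
      (intProd hSsub (le_refl _) (F := fun p => W p.1 p.2 * g p.2)
        (hmeas.mul (hg.comp measurable_snd)) (C := 1) (fun p => by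
          rw [abs_mul]
          nlinarith [abs_nonneg (W p.1 p.2), abs_nonneg (g p.2), hbdd p.1 p.2,
            abs_le.2 ⟨by linarith [(hg01 p.2).1], (hg01 p.2).2⟩]))
    rw [hφdef]
    rw [h]
    refine integral_congr_ae (Filter.Eventually.of_forall fun y => ?_)
    show (∫ x in S, W x y * g y) = g y * ∫ x in S, W x y
    rw [integral_mul_const, mul_comm]
  set ψ : ℝ → ℝ := fun y => ∫ x in S, W x y with hψdef
  have hψmeas : Measurable ψ := measInt_left (F := Function.uncurry W) hmeas
  have hψb : ∀ y, |ψ y| ≤ 1 := fun y => intAbs_le_one hSsub (fun x => hbdd x y)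
  set T : Set ℝ := I01 ∩ {y | 0 ≤ ψ y} with hTdef
  have hTmeas : MeasurableSet T :=
    measurableSet_Icc.inter (measurableSet_le measurable_const hψmeas)
  have hTsub : T ⊆ I01 := Set.inter_subset_left
  have step2 : ∫ y in I01, g y * ψ y ≤ ∫ y in T, ψ y :=
    weight_to_indicator hψmeas hψb hg hg01
  have swap2 : ∫ y in T, ψ y = ∫ x in S, ∫ y in T, W x y := by
    rw [hψdef]
    exact integral_integral_swap (μ := volume.restrict T) (ν := volume.restrict S)
      (f := fun y x => W x y)
      (intProd hTsub hSsub (F := fun p => W p.2 p.1)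
        (hmeas.comp measurable_swap) (C := 1) (fun p => hbdd p.2 p.1))
  have final : ∫ x in S, ∫ y in T, W x y ≤ cutNorm W := by
    refine le_trans (le_abs_self _) (le_cutNorm hbdd ?_)
    exact ⟨S, T, hSmeas, hTmeas, hSsub, hTsub, rfl⟩
  calc ∫ x in I01, ∫ y in I01, f x * W x y * g y = ∫ x in I01, f x * φ x := eq1
    _ ≤ ∫ x in S, φ x := step1
    _ = ∫ y in I01, g y * ψ y := swap1
    _ ≤ ∫ y in T, ψ y := step2
    _ = ∫ x in S, ∫ y in T, W x y := swap2
    _ ≤ cutNorm W := final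

lemma abs3 {a b c : ℝ} (ha : |a| ≤ 1) (hb : |b| ≤ 1) (hc : |c| ≤ 1) : |a * b * c| ≤ 1 := by
  rw [abs_mul, abs_mul]
  calc |a| * |b| * |c| ≤ 1 * 1 * 1 :=
        mul_le_mul (mul_le_mul ha hb (abs_nonneg _) zero_le_one) hc (abs_nonneg _) (by norm_num)
    _ = 1 := by norm_num

lemma bilinear_abs (W : ℝ → ℝ → ℝ) (hmeas : Measurable (Function.uncurry W))
    (hbdd : ∀ x y, |W x y| ≤ 1) (f g : ℝ → ℝ) (hf : Measurable f) (hg : Measurable g)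
    (hf01 : ∀ x, 0 ≤ f x ∧ f x ≤ 1) (hg01 : ∀ x, 0 ≤ g x ∧ g x ≤ 1) :
    |∫ x in I01, ∫ y in I01, f x * W x y * g y| ≤ cutNorm W := by
  rw [abs_le]
  constructor
  · have hneg := bilinear_le (fun x y => -(W x y)) hmeas.neg
      (fun x y => by rw [abs_neg]; exact hbdd x y) f g hf hg hf01 hg01
    rw [cutNorm_neg] at hneg
    have : ∫ x in I01, ∫ y in I01, f x * -(W x y) * g y
        = -∫ x in I01, ∫ y in I01, f x * W x y * g y := by
      rw [← integral_neg]
      refine integral_congr_ae (Filter.Eventually.of_forall fun x => ?_)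
      show (∫ y in I01, f x * -(W x y) * g y) = -∫ y in I01, f x * W x y * g y
      rw [← integral_neg]
      refine integral_congr_ae (Filter.Eventually.of_forall fun y => ?_)
      ring
    rw [this] at hneg
    linarith
  · exact bilinear_le W hmeas hbdd f g hf hg hf01 hg01

lemma bilinear_four (W : ℝ → ℝ → ℝ) (hmeas : Measurable (Function.uncurry W))
    (hbdd : ∀ x y, |W x y| ≤ 1) (f g : ℝ → ℝ) (hf : Measurable f) (hg : Measurable g)
    (hf1 : ∀ x, |f x| ≤ 1) (hg1 : ∀ x, |g x| ≤ 1) :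
    |∫ x in I01, ∫ y in I01, f x * W x y * g y| ≤ 4 * cutNorm W := by
  haveI := finRestrict (le_refl I01)
  set fp : ℝ → ℝ := fun x => max (f x) 0 with hfp
  set fm : ℝ → ℝ := fun x => max (-f x) 0 with hfm
  set gp : ℝ → ℝ := fun x => max (g x) 0 with hgp
  set gm : ℝ → ℝ := fun x => max (-g x) 0 with hgm
  have hfpm : Measurable fp := hf.max measurable_const
  have hfmm : Measurable fm := hf.neg.max measurable_const
  have hgpm : Measurable gp := hg.max measurable_const
  have hgmm : Measurable gm := hg.neg.max measurable_const
  have hfp01 : ∀ x, 0 ≤ fp x ∧ fp x ≤ 1 := fun x =>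
    ⟨le_max_right _ _, max_le (abs_le.1 (hf1 x)).2 zero_le_one⟩
  have hfm01 : ∀ x, 0 ≤ fm x ∧ fm x ≤ 1 := fun x =>
    ⟨le_max_right _ _, max_le (by linarith [(abs_le.1 (hf1 x)).1]) zero_le_one⟩
  have hgp01 : ∀ x, 0 ≤ gp x ∧ gp x ≤ 1 := fun x =>
    ⟨le_max_right _ _, max_le (abs_le.1 (hg1 x)).2 zero_le_one⟩
  have hgm01 : ∀ x, 0 ≤ gm x ∧ gm x ≤ 1 := fun x =>
    ⟨le_max_right _ _, max_le (by linarith [(abs_le.1 (hg1 x)).1]) zero_le_one⟩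
  have hfsplit : ∀ x, f x = fp x - fm x := fun x => (max_zero_sub_eq_self (f x)).symm
  have hgsplit : ∀ x, g x = gp x - gm x := fun x => (max_zero_sub_eq_self (g x)).symm
  have hWy : ∀ x, Measurable (fun y => W x y) := fun x =>
    hmeas.comp (measurable_const.prodMk measurable_id)
  -- integrability in y of pieces
  have hint : ∀ (x : ℝ) (c : ℝ) (b : ℝ → ℝ), Measurable b → (∀ y, |b y| ≤ 1) → |c| ≤ 1 →
      Integrable (fun y => c * W x y * b y) (volume.restrict I01) := by
    intro x c b hb hb1 hc
    refine intOfBdd ((measurable_const.mul (hWy x)).mul hb).aestronglyMeasurable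
      (C := 1) (fun y => ?_)
    exact abs3 hc (hbdd x y) (hb1 y)
  -- inner splitting
  have inner : ∀ x, (∫ y in I01, f x * W x y * g y)
      = (∫ y in I01, fp x * W x y * gp y) - (∫ y in I01, fp x * W x y * gm y)
        - (∫ y in I01, fm x * W x y * gp y) + (∫ y in I01, fm x * W x y * gm y) := by
    intro x
    have hA := hint x (fp x) gp hgpm (fun y => abs_le.2 ⟨by linarith [(hgp01 y).1], (hgp01 y).2⟩)
      (abs_le.2 ⟨by linarith [(hfp01 x).1], (hfp01 x).2⟩)
    have hB := hint x (fp x) gm hgmm (fun y => abs_le.2 ⟨by linarith [(hgm01 y).1], (hgm01 y).2⟩)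
      (abs_le.2 ⟨by linarith [(hfp01 x).1], (hfp01 x).2⟩)
    have hC := hint x (fm x) gp hgpm (fun y => abs_le.2 ⟨by linarith [(hgp01 y).1], (hgp01 y).2⟩)
      (abs_le.2 ⟨by linarith [(hfm01 x).1], (hfm01 x).2⟩)
    have hD := hint x (fm x) gm hgmm (fun y => abs_le.2 ⟨by linarith [(hgm01 y).1], (hgm01 y).2⟩)
      (abs_le.2 ⟨by linarith [(hfm01 x).1], (hfm01 x).2⟩)
    have heq : (fun y => f x * W x y * g y)
        = fun y => fp x * W x y * gp y - fp x * W x y * gm y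
            - fm x * W x y * gp y + fm x * W x y * gm y := by
      funext y
      rw [hfsplit x, hgsplit y]
      ring
    rw [heq]
    have h1 : Integrable (fun y => fp x * W x y * gp y - fp x * W x y * gm y)
        (volume.restrict I01) := hA.sub hB
    have h2 : Integrable (fun y => fp x * W x y * gp y - fp x * W x y * gm y
        - fm x * W x y * gp y) (volume.restrict I01) := h1.sub hC
    rw [integral_add h2 hD, integral_sub h1 hC, integral_sub hA hB]
  -- outer splitting
  have houter : ∀ (a b : ℝ → ℝ), Measurable a → Measurable b →
      (∀ x, 0 ≤ a x ∧ a x ≤ 1) → (∀ x, 0 ≤ b x ∧ b x ≤ 1) →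
      Integrable (fun x => ∫ y in I01, a x * W x y * b y) (volume.restrict I01) := by
    intro a b ha hb ha01 hb01
    refine intOfBdd ?_ (C := 1) (fun x => intAbs_le_one (le_refl _) (fun y => by
      exact abs3 (abs_le.2 ⟨by linarith [(ha01 x).1], (ha01 x).2⟩) (hbdd x y)
        (abs_le.2 ⟨by linarith [(hb01 y).1], (hb01 y).2⟩)))
    exact (measInt_right (F := fun p => a p.1 * W p.1 p.2 * b p.2)
      (((ha.comp measurable_fst).mul hmeas).mul (hb.comp measurable_snd))).aestronglyMeasurable
  have hA' := houter fp gp hfpm hgpm hfp01 hgp01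
  have hB' := houter fp gm hfpm hgmm hfp01 hgm01
  have hC' := houter fm gp hfmm hgpm hfm01 hgp01
  have hD' := houter fm gm hfmm hgmm hfm01 hgm01
  have split : (∫ x in I01, ∫ y in I01, f x * W x y * g y)
      = (∫ x in I01, ∫ y in I01, fp x * W x y * gp y)
        - (∫ x in I01, ∫ y in I01, fp x * W x y * gm y)
        - (∫ x in I01, ∫ y in I01, fm x * W x y * gp y)
        + (∫ x in I01, ∫ y in I01, fm x * W x y * gm y) := by
    rw [show (fun x => ∫ y in I01, f x * W x y * g y)
        = fun x => (∫ y in I01, fp x * W x y * gp y) - (∫ y in I01, fp x * W x y * gm y)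
            - (∫ y in I01, fm x * W x y * gp y) + (∫ y in I01, fm x * W x y * gm y)
      from funext inner]
    have h1 : Integrable (fun x => (∫ y in I01, fp x * W x y * gp y)
        - (∫ y in I01, fp x * W x y * gm y)) (volume.restrict I01) := hA'.sub hB'
    have h2 : Integrable (fun x => (∫ y in I01, fp x * W x y * gp y)
        - (∫ y in I01, fp x * W x y * gm y) - (∫ y in I01, fm x * W x y * gp y))
        (volume.restrict I01) := h1.sub hC'
    rw [integral_add h2 hD', integral_sub h1 hC', integral_sub hA' hB']
  have bA := bilinear_abs W hmeas hbdd fp gp hfpm hgpm hfp01 hgp01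
  have bB := bilinear_abs W hmeas hbdd fp gm hfpm hgmm hfp01 hgm01
  have bC := bilinear_abs W hmeas hbdd fm gp hfmm hgpm hfm01 hgp01
  have bD := bilinear_abs W hmeas hbdd fm gm hfmm hgmm hfm01 hgm01
  rw [split]
  rw [abs_le] at bA bB bC bD ⊢
  constructor <;> [skip; skip] <;>
    · obtain ⟨a1, a2⟩ := bA; obtain ⟨b1, b2⟩ := bB
      obtain ⟨c1, c2⟩ := bC; obtain ⟨d1, d2⟩ := bD
      linarith


lemma intAbs_le {T : Set ℝ} (hT : T ⊆ I01) {h : ℝ → ℝ} {C : ℝ} (hC : 0 ≤ C)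
    (hb : ∀ y, |h y| ≤ C) : |∫ y in T, h y| ≤ C := by
  haveI := finRestrict hT
  have h1 : ‖∫ y in T, h y‖ ≤ C * ((volume.restrict T) Set.univ).toReal :=
    norm_integral_le_of_norm_le_const (Filter.Eventually.of_forall fun y => by
      rw [Real.norm_eq_abs]; exact hb y)
  rw [Real.norm_eq_abs] at h1
  refine h1.trans ?_
  calc C * ((volume.restrict T) Set.univ).toReal ≤ C * 1 :=
        mul_le_mul_of_nonneg_left (measRestrict_le_one hT) hC
    _ = C := mul_one C

lemma tC4_abs_le (W : ℝ → ℝ → ℝ) (hmeas : Measurable (Function.uncurry W))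
    (hbdd : ∀ x y, |W x y| ≤ 1) : |tC4 W| ≤ 4 * cutNorm W := by
  have hc : 0 ≤ 4 * cutNorm W := by linarith [cutNorm_nonneg hbdd]
  have hWy : ∀ x, Measurable (fun y => W x y) := fun x =>
    hmeas.comp (measurable_const.prodMk measurable_id)
  have hWx : ∀ y, Measurable (fun x => W x y) := fun y =>
    hmeas.comp (measurable_id.prodMk measurable_const)
  have hin : ∀ x1 x2, |∫ x3 in I01, ∫ x4 in I01, W x2 x3 * W x3 x4 * W x4 x1| ≤ 4 * cutNorm W :=
    fun x1 x2 => bilinear_four W hmeas hbdd (fun t => W x2 t) (fun t => W t x1)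
      (hWy x2) (hWx x1) (fun t => hbdd x2 t) (fun t => hbdd t x1)
  have heq : tC4 W = ∫ x1 in I01, ∫ x2 in I01,
      W x1 x2 * ∫ x3 in I01, ∫ x4 in I01, W x2 x3 * W x3 x4 * W x4 x1 := by
    unfold tC4
    refine integral_congr_ae (Filter.Eventually.of_forall fun x1 => ?_)
    refine integral_congr_ae (Filter.Eventually.of_forall fun x2 => ?_)
    show (∫ x3 in I01, ∫ x4 in I01, W x1 x2 * W x2 x3 * W x3 x4 * W x4 x1)
      = W x1 x2 * ∫ x3 in I01, ∫ x4 in I01, W x2 x3 * W x3 x4 * W x4 x1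
    rw [← integral_const_mul]
    refine integral_congr_ae (Filter.Eventually.of_forall fun x3 => ?_)
    show (∫ x4 in I01, W x1 x2 * W x2 x3 * W x3 x4 * W x4 x1)
      = W x1 x2 * ∫ x4 in I01, W x2 x3 * W x3 x4 * W x4 x1
    rw [← integral_const_mul]
    refine integral_congr_ae (Filter.Eventually.of_forall fun x4 => ?_)
    ring
  rw [heq]
  refine intAbs_le (le_refl _) hc (fun x1 => ?_)
  refine intAbs_le (le_refl _) hc (fun x2 => ?_)
  rw [abs_mul]
  calc |W x1 x2| * |∫ x3 in I01, ∫ x4 in I01, W x2 x3 * W x3 x4 * W x4 x1|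
      ≤ 1 * (4 * cutNorm W) :=
        mul_le_mul (hbdd x1 x2) (hin x1 x2) (abs_nonneg _) zero_le_one
    _ = 4 * cutNorm W := one_mul _

lemma measInt_left' {β : Type*} [MeasurableSpace β] {S : Set ℝ} {F : ℝ × β → ℝ}
    (hF : Measurable F) : Measurable fun y => ∫ x in S, F (x, y) :=
  (hF.stronglyMeasurable.integral_prod_left' (μ := volume.restrict S)).measurable

section Hkernel

variable (W : ℝ → ℝ → ℝ)

noncomputable def Hk : ℝ → ℝ → ℝ := fun y z => ∫ x in I01, W x y * W x z

lemma Hk_meas (hmeas : Measurable (Function.uncurry W)) :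
    Measurable (Function.uncurry (Hk W)) :=
  measInt_left' (F := fun q : ℝ × (ℝ × ℝ) => W q.1 q.2.1 * W q.1 q.2.2)
    ((hmeas.comp (measurable_fst.prodMk (measurable_fst.comp measurable_snd))).mul
      (hmeas.comp (measurable_fst.prodMk (measurable_snd.comp measurable_snd))))

lemma Hk_bdd (hbdd : ∀ x y, |W x y| ≤ 1) : ∀ y z, |Hk W y z| ≤ 1 := by
  intro y z
  refine intAbs_le_one (le_refl _) (fun x => ?_)
  rw [abs_mul]
  nlinarith [abs_nonneg (W x y), abs_nonneg (W x z), hbdd x y, hbdd x z]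

lemma Hk_symm : ∀ y z, Hk W y z = Hk W z y := by
  intro y z
  unfold Hk
  exact integral_congr_ae (Filter.Eventually.of_forall fun x => mul_comm _ _)

lemma tC4_eq_H (hmeas : Measurable (Function.uncurry W)) (hsymm : ∀ x y, W x y = W y x)
    (hbdd : ∀ x y, |W x y| ≤ 1) :
    tC4 W = ∫ y in I01, ∫ z in I01, (Hk W y z) ^ 2 := by
  have hHmeas := Hk_meas W hmeas
  have hHbdd := Hk_bdd W hbdd
  unfold tC4
  refine integral_congr_ae (Filter.Eventually.of_forall fun x1 => ?_)
  show (∫ x2 in I01, ∫ x3 in I01, ∫ x4 in I01, W x1 x2 * W x2 x3 * W x3 x4 * W x4 x1)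
    = ∫ x3 in I01, (Hk W x1 x3) ^ 2
  have E1 : ∀ x2 x3, (∫ x4 in I01, W x1 x2 * W x2 x3 * W x3 x4 * W x4 x1)
      = W x1 x2 * W x2 x3 * Hk W x3 x1 := by
    intro x2 x3
    have : (∫ x4 in I01, W x1 x2 * W x2 x3 * W x3 x4 * W x4 x1)
        = ∫ x4 in I01, (W x1 x2 * W x2 x3) * (W x4 x3 * W x4 x1) := by
      refine integral_congr_ae (Filter.Eventually.of_forall fun x4 => ?_)
      show W x1 x2 * W x2 x3 * W x3 x4 * W x4 x1 = W x1 x2 * W x2 x3 * (W x4 x3 * W x4 x1)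
      rw [hsymm x3 x4]; ring
    rw [this, integral_const_mul]
    rfl
  have step1 : (∫ x2 in I01, ∫ x3 in I01, ∫ x4 in I01, W x1 x2 * W x2 x3 * W x3 x4 * W x4 x1)
      = ∫ x2 in I01, ∫ x3 in I01, W x1 x2 * W x2 x3 * Hk W x3 x1 := by
    refine integral_congr_ae (Filter.Eventually.of_forall fun x2 => ?_)
    exact integral_congr_ae (Filter.Eventually.of_forall fun x3 => E1 x2 x3)
  have hHx1 : Measurable fun t => Hk W t x1 :=
    (Hk_meas W hmeas).comp (measurable_id.prodMk measurable_const)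
  have step2 : (∫ x2 in I01, ∫ x3 in I01, W x1 x2 * W x2 x3 * Hk W x3 x1)
      = ∫ x3 in I01, ∫ x2 in I01, W x1 x2 * W x2 x3 * Hk W x3 x1 := by
    refine integral_integral_swap (f := fun x2 x3 => W x1 x2 * W x2 x3 * Hk W x3 x1) ?_
    refine intProd (le_refl _) (le_refl _)
      (F := fun p => W x1 p.1 * W p.1 p.2 * Hk W p.2 x1) ?_ (C := 1) (fun p => ?_)
    · exact ((hmeas.comp (measurable_const.prodMk measurable_fst)).mul hmeas).mul
        (hHx1.comp measurable_snd)
    · exact abs3 (hbdd x1 p.1) (hbdd p.1 p.2) (hHbdd p.2 x1)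
  have E3 : ∀ x3, (∫ x2 in I01, W x1 x2 * W x2 x3 * Hk W x3 x1) = (Hk W x1 x3) ^ 2 := by
    intro x3
    have : (∫ x2 in I01, W x1 x2 * W x2 x3 * Hk W x3 x1)
        = ∫ x2 in I01, (W x2 x1 * W x2 x3) * Hk W x3 x1 := by
      refine integral_congr_ae (Filter.Eventually.of_forall fun x2 => ?_)
      show W x1 x2 * W x2 x3 * Hk W x3 x1 = W x2 x1 * W x2 x3 * Hk W x3 x1
      rw [hsymm x1 x2]
    rw [this, integral_mul_const]
    have : (∫ x2 in I01, W x2 x1 * W x2 x3) = Hk W x1 x3 := rfl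
    rw [this, Hk_symm W x3 x1, sq]
  rw [step1, step2]
  exact integral_congr_ae (Filter.Eventually.of_forall E3)

end Hkernel

/-- Cauchy–Schwarz with constant function. -/
lemma cs_integral {α : Type*} [MeasurableSpace α] (μ : Measure α) [IsFiniteMeasure μ]
    {f : α → ℝ} (hf : Integrable f μ) (hf2 : Integrable (fun x => f x ^ 2) μ) :
    (∫ x, f x ∂μ) ^ 2 ≤ (μ Set.univ).toReal * ∫ x, f x ^ 2 ∂μ := by
  set m := (μ Set.univ).toReal with hm
  set A := ∫ x, f x ∂μ with hA
  set B := ∫ x, f x ^ 2 ∂μ with hB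
  have key : (0:ℝ) ≤ ∫ x, ∫ y, (f x - f y) ^ 2 ∂μ ∂μ := by
    apply integral_nonneg; intro x
    apply integral_nonneg; intro y
    positivity
  have expand : ∀ x : α, ∫ y, (f x - f y) ^ 2 ∂μ = m * f x ^ 2 - 2 * f x * A + B := by
    intro x
    have : (fun y => (f x - f y) ^ 2) = fun y => f x ^ 2 - (2 * f x) * f y + f y ^ 2 := by
      funext y; ring
    rw [this]
    rw [integral_add (by exact (integrable_const _).sub (hf.const_mul _)) hf2]
    rw [integral_sub (integrable_const _) (hf.const_mul _)]
    rw [integral_const, integral_const_mul]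
    simp only [smul_eq_mul, measureReal_def, ← hm, ← hA, ← hB]
  rw [show (∫ x, ∫ y, (f x - f y) ^ 2 ∂μ ∂μ) = ∫ x, m * f x ^ 2 - 2 * f x * A + B ∂μ from
    integral_congr_ae (Filter.Eventually.of_forall expand)] at key
  have h1 : Integrable (fun x => m * f x ^ 2) μ := hf2.const_mul _
  have h2 : Integrable (fun x => 2 * f x * A) μ := by
    have := (hf.const_mul 2).mul_const A
    simpa [mul_assoc, mul_comm] using this
  have h12 : Integrable (fun x => m * f x ^ 2 - 2 * f x * A) μ := h1.sub h2
  rw [integral_add h12 (integrable_const _), integral_sub h1 h2,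
    integral_const_mul] at key
  have h3 : ∫ x, 2 * f x * A ∂μ = 2 * A * A := by
    have : (fun x => 2 * f x * A) = fun x => (2 * A) * f x := by funext x; ring
    rw [this, integral_const_mul]
  rw [h3, integral_const] at key
  simp only [smul_eq_mul, measureReal_def, ← hm, ← hB] at key
  nlinarith [key]

lemma measInt_right' {α : Type*} [MeasurableSpace α] {T : Set ℝ} {F : α × ℝ → ℝ}
    (hF : Measurable F) : Measurable fun x => ∫ y in T, F (x, y) :=
  (hF.stronglyMeasurable.integral_prod_right' (ν := volume.restrict T)).measurable

lemma fourth_le_tC4 (W : ℝ → ℝ → ℝ) (hmeas : Measurable (Function.uncurry W))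
    (hsymm : ∀ x y, W x y = W y x) (hbdd : ∀ x y, |W x y| ≤ 1)
    {S T : Set ℝ} (hS : MeasurableSet S) (hT : MeasurableSet T)
    (hSsub : S ⊆ I01) (hTsub : T ⊆ I01) :
    (∫ x in S, ∫ y in T, W x y) ^ 4 ≤ tC4 W := by
  haveI := finRestrict hSsub
  haveI := finRestrict hTsub
  haveI := finRestrict (le_refl I01)
  set F : ℝ → ℝ := fun x => ∫ y in T, W x y with hFdef
  have hFmeas : Measurable F := measInt_right (F := Function.uncurry W) hmeas
  have hFb : ∀ x, |F x| ≤ 1 := fun x => intAbs_le_one hTsub (fun y => hbdd x y)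
  set A : ℝ := ∫ x in S, F x with hAdef
  set B : ℝ := ∫ x in I01, F x ^ 2 with hBdef
  have hF2b : ∀ x, |F x ^ 2| ≤ 1 := fun x => by
    rw [abs_pow]
    exact pow_le_one₀ (abs_nonneg _) (hFb x)
  have hCS1 : A ^ 2 ≤ ((volume.restrict S) Set.univ).toReal * ∫ x in S, F x ^ 2 :=
    cs_integral (volume.restrict S) (intOfBdd hFmeas.aestronglyMeasurable hFb)
      (intOfBdd (hFmeas.pow_const 2).aestronglyMeasurable hF2b)
  have hSmono : ∫ x in S, F x ^ 2 ≤ B := by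
    refine setIntegral_mono_set (intOfBdd (hFmeas.pow_const 2).aestronglyMeasurable hF2b)
      (Filter.Eventually.of_forall fun x => sq_nonneg _) ?_
    exact Filter.Eventually.of_forall hSsub
  have hSnn : 0 ≤ ∫ x in S, F x ^ 2 := integral_nonneg fun x => sq_nonneg _
  have hA2B : A ^ 2 ≤ B := by
    refine hCS1.trans ?_
    calc ((volume.restrict S) Set.univ).toReal * ∫ x in S, F x ^ 2
        ≤ 1 * ∫ x in S, F x ^ 2 :=
          mul_le_mul_of_nonneg_right (measRestrict_le_one hSsub) hSnn
      _ = ∫ x in S, F x ^ 2 := one_mul _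
      _ ≤ B := hSmono
  -- B = ∫_T ∫_T Hk
  have hx : ∀ x, F x ^ 2 = ∫ y in T, ∫ z in T, W x y * W x z := by
    intro x
    have h1 : ∀ y, (∫ z in T, W x y * W x z) = W x y * F x := fun y =>
      integral_const_mul _ _
    calc F x ^ 2 = F x * F x := sq (F x)
      _ = ∫ y in T, W x y * F x := (integral_mul_const _ _).symm
      _ = ∫ y in T, ∫ z in T, W x y * W x z :=
          (integral_congr_ae (Filter.Eventually.of_forall fun y => (h1 y).symm))
  have hBeq : B = ∫ y in T, ∫ z in T, Hk W y z := by
    have e1 : B = ∫ x in I01, ∫ y in T, ∫ z in T, W x y * W x z :=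
      integral_congr_ae (Filter.Eventually.of_forall hx)
    have swapA : (∫ x in I01, ∫ y in T, ∫ z in T, W x y * W x z)
        = ∫ y in T, ∫ x in I01, ∫ z in T, W x y * W x z := by
      refine integral_integral_swap (f := fun x y => ∫ z in T, W x y * W x z) ?_
      refine intProd (le_refl _) hTsub
        (F := fun p : ℝ × ℝ => ∫ z in T, W p.1 p.2 * W p.1 z) ?_ (C := 1) (fun p => ?_)
      · exact measInt_right' (F := fun q : (ℝ × ℝ) × ℝ => W q.1.1 q.1.2 * W q.1.1 q.2)
          ((hmeas.comp ((measurable_fst.comp measurable_fst).prodMk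
              (measurable_snd.comp measurable_fst))).mul
            (hmeas.comp ((measurable_fst.comp measurable_fst).prodMk measurable_snd)))
      · refine intAbs_le_one hTsub (fun z => ?_)
        rw [abs_mul]
        nlinarith [abs_nonneg (W p.1 p.2), abs_nonneg (W p.1 z), hbdd p.1 p.2, hbdd p.1 z]
    have swapB : ∀ y, (∫ x in I01, ∫ z in T, W x y * W x z)
        = ∫ z in T, Hk W y z := by
      intro y
      refine integral_integral_swap (f := fun x z => W x y * W x z) ?_
      refine intProd (le_refl _) hTsub
        (F := fun p : ℝ × ℝ => W p.1 y * W p.1 p.2) ?_ (C := 1) (fun p => ?_)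
      · exact (hmeas.comp (measurable_fst.prodMk measurable_const)).mul
          (hmeas.comp (measurable_fst.prodMk measurable_snd))
      · rw [abs_mul]
        nlinarith [abs_nonneg (W p.1 y), abs_nonneg (W p.1 p.2), hbdd p.1 y, hbdd p.1 p.2]
    rw [e1, swapA]
    exact integral_congr_ae (Filter.Eventually.of_forall swapB)
  set D : ℝ → ℝ := fun y => ∫ z in T, Hk W y z with hDdef
  have hHmeas := Hk_meas W hmeas
  have hHbdd := Hk_bdd W hbdd
  have hDmeas : Measurable D := measInt_right (F := Function.uncurry (Hk W)) hHmeas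
  have hDb : ∀ y, |D y| ≤ 1 := fun y => intAbs_le_one hTsub (fun z => hHbdd y z)
  have hD2b : ∀ y, |D y ^ 2| ≤ 1 := fun y => by
    rw [abs_pow]; exact pow_le_one₀ (abs_nonneg _) (hDb y)
  have hH2b : ∀ y z, |(Hk W y z) ^ 2| ≤ 1 := fun y z => by
    rw [abs_pow]; exact pow_le_one₀ (abs_nonneg _) (hHbdd y z)
  have hCS2 : B ^ 2 ≤ ((volume.restrict T) Set.univ).toReal * ∫ y in T, D y ^ 2 := by
    rw [hBeq]
    exact cs_integral (volume.restrict T) (intOfBdd hDmeas.aestronglyMeasurable hDb)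
      (intOfBdd (hDmeas.pow_const 2).aestronglyMeasurable hD2b)
  have hTnn : 0 ≤ ∫ y in T, D y ^ 2 := integral_nonneg fun y => sq_nonneg _
  have hTmono : ∫ y in T, D y ^ 2 ≤ ∫ y in I01, D y ^ 2 := by
    refine setIntegral_mono_set (intOfBdd (hDmeas.pow_const 2).aestronglyMeasurable hD2b)
      (Filter.Eventually.of_forall fun y => sq_nonneg _) ?_
    exact Filter.Eventually.of_forall hTsub
  have hCS3 : ∀ y, D y ^ 2 ≤ ∫ z in I01, (Hk W y z) ^ 2 := by
    intro y
    have hHy : Measurable fun z => Hk W y z :=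
      hHmeas.comp (measurable_const.prodMk measurable_id)
    have c1 : D y ^ 2 ≤ ((volume.restrict T) Set.univ).toReal * ∫ z in T, (Hk W y z) ^ 2 :=
      cs_integral (volume.restrict T) (intOfBdd hHy.aestronglyMeasurable (fun z => hHbdd y z))
        (intOfBdd (hHy.pow_const 2).aestronglyMeasurable (fun z => hH2b y z))
    have c2 : ∫ z in T, (Hk W y z) ^ 2 ≤ ∫ z in I01, (Hk W y z) ^ 2 := by
      refine setIntegral_mono_set
        (intOfBdd (hHy.pow_const 2).aestronglyMeasurable (fun z => hH2b y z))
        (Filter.Eventually.of_forall fun z => sq_nonneg _) ?_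
      exact Filter.Eventually.of_forall hTsub
    have c3 : 0 ≤ ∫ z in T, (Hk W y z) ^ 2 := integral_nonneg fun z => sq_nonneg _
    calc D y ^ 2 ≤ ((volume.restrict T) Set.univ).toReal * ∫ z in T, (Hk W y z) ^ 2 := c1
      _ ≤ 1 * ∫ z in T, (Hk W y z) ^ 2 :=
          mul_le_mul_of_nonneg_right (measRestrict_le_one hTsub) c3
      _ = ∫ z in T, (Hk W y z) ^ 2 := one_mul _
      _ ≤ ∫ z in I01, (Hk W y z) ^ 2 := c2
  have hmono2 : ∫ y in I01, D y ^ 2 ≤ ∫ y in I01, ∫ z in I01, (Hk W y z) ^ 2 := by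
    refine integral_mono (intOfBdd (hDmeas.pow_const 2).aestronglyMeasurable hD2b) ?_ hCS3
    refine intOfBdd ?_ (C := 1) (fun y => intAbs_le_one (le_refl _) (fun z => hH2b y z))
    exact (measInt_right (F := fun p : ℝ × ℝ => (Hk W p.1 p.2) ^ 2)
      (hHmeas.pow_const 2)).aestronglyMeasurable
  have hB2 : B ^ 2 ≤ tC4 W := by
    rw [tC4_eq_H W hmeas hsymm hbdd]
    calc B ^ 2 ≤ ((volume.restrict T) Set.univ).toReal * ∫ y in T, D y ^ 2 := hCS2
      _ ≤ 1 * ∫ y in T, D y ^ 2 := mul_le_mul_of_nonneg_right (measRestrict_le_one hTsub) hTnn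
      _ = ∫ y in T, D y ^ 2 := one_mul _
      _ ≤ ∫ y in I01, D y ^ 2 := hTmono
      _ ≤ ∫ y in I01, ∫ z in I01, (Hk W y z) ^ 2 := hmono2
  calc (∫ x in S, ∫ y in T, W x y) ^ 4 = (A ^ 2) ^ 2 := by rw [hAdef]; ring
    _ ≤ B ^ 2 := pow_le_pow_left₀ (sq_nonneg A) hA2B 2
    _ ≤ tC4 W := hB2

/-- For a symmetric measurable `W : [0,1]² → ℝ` with `‖W‖_∞ ≤ 1`,
`(1/4)·t(C₄,W) ≤ ‖W‖_□ ≤ t(C₄,W)^{1/4}`. -/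
theorem tC4_cutNorm_bounds (W : ℝ → ℝ → ℝ)
    (hmeas : Measurable (Function.uncurry W))
    (hsymm : ∀ x y, W x y = W y x)
    (hbdd : ∀ x y, |W x y| ≤ 1) :
    (1 / 4) * tC4 W ≤ cutNorm W ∧ cutNorm W ≤ (tC4 W) ^ ((1 : ℝ) / 4) := by
  constructor
  · have h := tC4_abs_le W hmeas hbdd
    have h2 := le_abs_self (tC4 W)
    linarith
  · rw [cutNorm_eq]
    refine csSup_le (cutSet_nonempty W) ?_
    rintro r ⟨S, T, hS, hT, hSsub, hTsub, rfl⟩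
    set A : ℝ := ∫ x in S, ∫ y in T, W x y with hAdef
    have h4 : A ^ 4 ≤ tC4 W := fourth_le_tC4 W hmeas hsymm hbdd hS hT hSsub hTsub
    have hA0 : (0:ℝ) ≤ |A| := abs_nonneg A
    have habs : |A| ^ 4 ≤ tC4 W := by
      have : |A| ^ 4 = A ^ 4 := by
        rw [pow_abs]
        exact abs_of_nonneg (by positivity)
      rw [this]; exact h4
    have hkey : (|A| ^ (4:ℕ)) ^ ((1:ℝ)/4) = |A| := by
      rw [← Real.rpow_natCast |A| 4, ← Real.rpow_mul hA0]
      norm_num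
    calc |A| = (|A| ^ (4:ℕ)) ^ ((1:ℝ)/4) := hkey.symm
      _ ≤ (tC4 W) ^ ((1:ℝ)/4) := Real.rpow_le_rpow (by positivity) habs (by norm_num)
end

section
/- Let F be a simple graph with m edges and let W, W' be graphons with C = max{1, ‖W‖_∞, ‖W'‖_∞}. Then |t(F, W) − t(F, W')| ≤ 4 m C^{m−1} · ‖W − W'‖_□, where t(F, W) = ∫_{[0,1]^{V(F)}} ∏_{ij ∈ E(F)} W(x_i, x_j) dx. -/
open MeasureTheory

/-- Homomorphism density `t(F,W) = ∫_{[0,1]^k} ∏_{ij ∈ E(F)} W(x_i,x_j) dx` of a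
simple graph `F` on `k` vertices in a symmetric kernel `W`. -/
noncomputable def homDensity {k : ℕ} (F : SimpleGraph (Fin k)) [DecidableRel F.Adj]
    (W : ℝ → ℝ → ℝ) (hsymm : ∀ x y, W x y = W y x) : ℝ :=
  ∫ x in Set.univ.pi (fun _ : Fin k => Set.Icc (0:ℝ) 1),
    ∏ e ∈ F.edgeFinset,
      Sym2.lift ⟨fun u v => W (x u) (x v), fun a b => hsymm (x a) (x b)⟩ e

open Function Set

noncomputable def mu01 : Measure ℝ := volume.restrict (Set.Icc 0 1)

instance : IsProbabilityMeasure mu01 := by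
  constructor; simp [mu01, Real.volume_Icc]

lemma integrable_of_bdd {α : Type*} [MeasurableSpace α] {μ : Measure α} [IsFiniteMeasure μ]
    {f : α → ℝ} (hf : AEStronglyMeasurable f μ) (M : ℝ) (h : ∀ x, |f x| ≤ M) :
    Integrable f μ :=
  (integrable_const M).mono' hf (Filter.Eventually.of_forall (by simpa [Real.norm_eq_abs] using h))

section cut
variable {D : ℝ → ℝ → ℝ} {M : ℝ}

lemma vol_toReal_le {S : Set ℝ} (hSs : S ⊆ Set.Icc 0 1) :
    (volume S).toReal ≤ 1 := by
  have h1 : volume S ≤ volume (Set.Icc (0:ℝ) 1) := measure_mono hSs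
  have : (volume (Set.Icc (0:ℝ) 1)).toReal = 1 := by simp [Real.volume_Icc]
  rw [← this]
  exact ENNReal.toReal_mono (by simp [Real.volume_Icc]) h1


lemma finite_restrict {S : Set ℝ} (hSs : S ⊆ Set.Icc 0 1) :
    IsFiniteMeasure (volume.restrict S) := by
  constructor
  rw [Measure.restrict_apply MeasurableSet.univ, Set.univ_inter]
  calc volume S ≤ volume (Set.Icc (0:ℝ) 1) := measure_mono hSs
    _ < ⊤ := by simp [Real.volume_Icc]

lemma cut_bdd (hM : 0 ≤ M) (hDb : ∀ x y, |D x y| ≤ M) :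
    M ∈ upperBounds {r : ℝ | ∃ S T : Set ℝ, MeasurableSet S ∧ MeasurableSet T ∧
      S ⊆ Set.Icc 0 1 ∧ T ⊆ Set.Icc 0 1 ∧ r = |∫ x in S, ∫ y in T, D x y|} := by
  rintro r ⟨S, T, hS, hT, hSs, hTs, rfl⟩
  haveI := finite_restrict hSs
  haveI := finite_restrict hTs
  have hinner : ∀ x, ‖∫ y in T, D x y‖ ≤ M := by
    intro x
    calc ‖∫ y in T, D x y‖ ≤ M * (volume.restrict T Set.univ).toReal :=
          norm_integral_le_of_norm_le_const
            (Filter.Eventually.of_forall fun y => by simpa [Real.norm_eq_abs] using hDb x y)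
      _ ≤ M * 1 := by
          refine mul_le_mul_of_nonneg_left ?_ hM
          simpa [Measure.restrict_apply] using vol_toReal_le hTs
      _ = M := mul_one M
  calc |∫ x in S, ∫ y in T, D x y| ≤ M * (volume.restrict S Set.univ).toReal := by
        rw [← Real.norm_eq_abs]
        exact norm_integral_le_of_norm_le_const (Filter.Eventually.of_forall hinner)
    _ ≤ M * 1 := by
        refine mul_le_mul_of_nonneg_left ?_ hM
        simpa [Measure.restrict_apply] using vol_toReal_le hSs
    _ = M := mul_one M

lemma abs_le_cutNorm (hM : 0 ≤ M) (hDb : ∀ x y, |D x y| ≤ M) {S T : Set ℝ}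
    (hS : MeasurableSet S) (hT : MeasurableSet T) (hSs : S ⊆ Set.Icc 0 1)
    (hTs : T ⊆ Set.Icc 0 1) :
    |∫ x in S, ∫ y in T, D x y| ≤ cutNorm D :=
  le_csSup ⟨M, cut_bdd hM hDb⟩ ⟨S, T, hS, hT, hSs, hTs, rfl⟩

lemma cutNorm_nonneg_s4 (hM : 0 ≤ M) (hDb : ∀ x y, |D x y| ≤ M) : 0 ≤ cutNorm D :=
  le_csSup ⟨M, cut_bdd hM hDb⟩ ⟨∅, ∅, .empty, .empty, empty_subset _, empty_subset _, by simp⟩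

end cut

section funbound
variable {D : ℝ → ℝ → ℝ} {M : ℝ}

lemma abs_integral_split {g : ℝ → ℝ} (hg : Measurable g) (Mg : ℝ) (hgb : ∀ x, |g x| ≤ Mg)
    {c : ℝ} (hc : ∀ S : Set ℝ, MeasurableSet S → S ⊆ Set.Icc 0 1 → |∫ x in S, g x| ≤ c) :
    ∫ x, |g x| ∂mu01 ≤ 2 * c := by
  have hE : MeasurableSet {x : ℝ | 0 < g x} := measurableSet_lt measurable_const hg
  have hint : Integrable (fun x => |g x|) mu01 :=
    integrable_of_bdd hg.abs.aestronglyMeasurable Mg (fun x => by simpa using hgb x)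
  rw [← integral_add_compl hE hint]
  have h1 : ∫ x in {x : ℝ | 0 < g x}, |g x| ∂mu01 ≤ c := by
    have he : ∫ x in {x : ℝ | 0 < g x}, |g x| ∂mu01
        = ∫ x in ({x : ℝ | 0 < g x} ∩ Set.Icc 0 1), g x := by
      rw [mu01, Measure.restrict_restrict hE]
      exact setIntegral_congr_fun (hE.inter measurableSet_Icc) fun x hx => abs_of_pos hx.1
    rw [he]
    exact le_trans (le_abs_self _) (hc _ (hE.inter measurableSet_Icc) inter_subset_right)
  have h2 : ∫ x in {x : ℝ | 0 < g x}ᶜ, |g x| ∂mu01 ≤ c := by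
    have he : ∫ x in {x : ℝ | 0 < g x}ᶜ, |g x| ∂mu01
        = -∫ x in ({x : ℝ | 0 < g x}ᶜ ∩ Set.Icc 0 1), g x := by
      rw [mu01, Measure.restrict_restrict hE.compl, ← integral_neg]
      refine setIntegral_congr_fun (hE.compl.inter measurableSet_Icc) fun x hx => ?_
      have : ¬ 0 < g x := hx.1
      simp [abs_of_nonpos (not_lt.mp this)]
    rw [he]
    exact le_trans (neg_le_abs _) (hc _ (hE.compl.inter measurableSet_Icc) inter_subset_right)
  linarith

lemma set_inner_le (hD : Measurable (Function.uncurry D)) (hM : 0 ≤ M)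
    (hDb : ∀ x y, |D x y| ≤ M) {v : ℝ → ℝ} {B : ℝ}
    (hv : Measurable v) (hB : 0 ≤ B) (hvb : ∀ y, |v y| ≤ B)
    {S : Set ℝ} (hS : MeasurableSet S) (hSs : S ⊆ Set.Icc 0 1) :
    ∫ x in S, (∫ y, D x y * v y ∂mu01) ≤ 2 * B * cutNorm D := by
  haveI := finite_restrict hSs
  have hmeas : Measurable (Function.uncurry fun x y => D x y * v y) :=
    hD.mul (hv.comp measurable_snd)
  have swap1 : ∫ x in S, (∫ y, D x y * v y ∂mu01) = ∫ y, (∫ x in S, D x y * v y) ∂mu01 :=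
    integral_integral_swap (integrable_of_bdd hmeas.aestronglyMeasurable (M * B)
      (fun p => by
        calc |D p.1 p.2 * v p.2| = |D p.1 p.2| * |v p.2| := abs_mul _ _
          _ ≤ M * B := mul_le_mul (hDb _ _) (hvb _) (abs_nonneg _) hM))
  rw [swap1]
  set ψ : ℝ → ℝ := fun y => ∫ x in S, D x y with hψ
  have hpull : ∀ y, ∫ x in S, D x y * v y = ψ y * v y := fun y => integral_mul_const _ _
  have hψm : Measurable ψ := by
    have : StronglyMeasurable (Function.uncurry fun y x => D x y) :=
      ((hD.comp measurable_swap).stronglyMeasurable)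
    exact this.integral_prod_right'.measurable
  have hψb : ∀ y, |ψ y| ≤ M := by
    intro y
    rw [← Real.norm_eq_abs]
    calc ‖∫ x in S, D x y‖ ≤ M * (volume.restrict S Set.univ).toReal :=
        norm_integral_le_of_norm_le_const
          (Filter.Eventually.of_forall fun x => by simpa [Real.norm_eq_abs] using hDb x y)
      _ ≤ M * 1 := by
          refine mul_le_mul_of_nonneg_left ?_ hM
          simpa [Measure.restrict_apply] using vol_toReal_le hSs
      _ = M := mul_one M
  have hsplit : ∫ y, |ψ y| ∂mu01 ≤ 2 * cutNorm D := by
    refine abs_integral_split hψm M hψb fun T hT hTs => ?_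
    haveI := finite_restrict hTs
    have swap2 : ∫ y in T, ψ y = ∫ x in S, ∫ y in T, D x y := by
      refine integral_integral_swap ?_
      exact integrable_of_bdd ((hD.comp measurable_swap).aestronglyMeasurable) M
        (fun p => hDb p.2 p.1)
    rw [swap2]
    exact abs_le_cutNorm hM hDb hS hT hSs hTs
  calc ∫ y, (∫ x in S, D x y * v y) ∂mu01 = ∫ y, ψ y * v y ∂mu01 := by
        simp only [hpull]
    _ ≤ ∫ y, B * |ψ y| ∂mu01 := by
        refine integral_mono
          (integrable_of_bdd (hψm.mul hv).aestronglyMeasurable (M * B) fun y => by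
            calc |ψ y * v y| = |ψ y| * |v y| := abs_mul _ _
              _ ≤ M * B := mul_le_mul (hψb _) (hvb _) (abs_nonneg _) hM)
          (integrable_of_bdd (hψm.abs.const_mul B).aestronglyMeasurable (B * M) fun y => by
            rw [abs_mul, abs_abs, abs_of_nonneg hB]
            exact mul_le_mul_of_nonneg_left (hψb _) hB)
          (fun y => by
            calc ψ y * v y ≤ |ψ y * v y| := le_abs_self _
              _ = |ψ y| * |v y| := abs_mul _ _
              _ ≤ |ψ y| * B := mul_le_mul_of_nonneg_left (hvb _) (abs_nonneg _)
              _ = B * |ψ y| := mul_comm _ _)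
    _ = B * (∫ y, |ψ y| ∂mu01) := integral_const_mul B _
    _ ≤ B * (2 * cutNorm D) := mul_le_mul_of_nonneg_left hsplit hB
    _ = 2 * B * cutNorm D := by ring

lemma set_inner_abs (hD : Measurable (Function.uncurry D)) (hM : 0 ≤ M)
    (hDb : ∀ x y, |D x y| ≤ M) {v : ℝ → ℝ} {B : ℝ}
    (hv : Measurable v) (hB : 0 ≤ B) (hvb : ∀ y, |v y| ≤ B)
    {S : Set ℝ} (hS : MeasurableSet S) (hSs : S ⊆ Set.Icc 0 1) :
    |∫ x in S, (∫ y, D x y * v y ∂mu01)| ≤ 2 * B * cutNorm D := by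
  rw [abs_le]
  constructor
  · have := set_inner_le hD hM hDb hv.neg hB (fun y => by simpa using hvb y) hS hSs (v := fun y => -v y)
    have heq : ∫ x in S, (∫ y, D x y * (-v y) ∂mu01) = -∫ x in S, (∫ y, D x y * v y ∂mu01) := by
      simp [mul_neg, integral_neg]
    linarith [heq ▸ this]
  · exact set_inner_le hD hM hDb hv hB hvb hS hSs
end funbound

lemma double_bound_le {D : ℝ → ℝ → ℝ} {M : ℝ} (hD : Measurable (Function.uncurry D))
    (hM : 0 ≤ M) (hDb : ∀ x y, |D x y| ≤ M) {u v : ℝ → ℝ} {A B : ℝ}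
    (hu : Measurable u) (hv : Measurable v) (hA : 0 ≤ A) (hB : 0 ≤ B)
    (hub : ∀ x, |u x| ≤ A) (hvb : ∀ y, |v y| ≤ B) :
    ∫ x, (∫ y, D x y * u x * v y ∂mu01) ∂mu01 ≤ 4 * A * B * cutNorm D := by
  set φ : ℝ → ℝ := fun x => ∫ y, D x y * v y ∂mu01 with hφ
  have hφm : Measurable φ := by
    have : StronglyMeasurable (Function.uncurry fun x y => D x y * v y) :=
      (hD.mul (hv.comp measurable_snd)).stronglyMeasurable
    exact this.integral_prod_right'.measurable
  have hφb : ∀ x, |φ x| ≤ M * B := by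
    intro x
    rw [← Real.norm_eq_abs]
    calc ‖∫ y, D x y * v y ∂mu01‖ ≤ (M * B) * (mu01 Set.univ).toReal :=
        norm_integral_le_of_norm_le_const (Filter.Eventually.of_forall fun y => by
          rw [Real.norm_eq_abs, abs_mul]
          exact mul_le_mul (hDb _ _) (hvb _) (abs_nonneg _) hM)
      _ = M * B := by simp
  have hpull : ∀ x, (∫ y, D x y * u x * v y ∂mu01) = u x * φ x := by
    intro x
    rw [hφ, ← integral_const_mul]
    congr 1; funext y; ring
  have hsplit : ∫ x, |φ x| ∂mu01 ≤ 2 * (2 * B * cutNorm D) := by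
    refine abs_integral_split hφm (M * B) hφb fun S hS hSs => ?_
    exact set_inner_abs hD hM hDb hv hB hvb hS hSs
  calc ∫ x, (∫ y, D x y * u x * v y ∂mu01) ∂mu01 = ∫ x, u x * φ x ∂mu01 := by
        simp only [hpull]
    _ ≤ ∫ x, A * |φ x| ∂mu01 := by
        refine integral_mono
          (integrable_of_bdd (hu.mul hφm).aestronglyMeasurable (A * (M * B)) fun x => by
            rw [abs_mul]
            exact mul_le_mul (hub _) (hφb _) (abs_nonneg _) hA)
          (integrable_of_bdd (hφm.abs.const_mul A).aestronglyMeasurable (A * (M * B)) fun x => by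
            rw [abs_mul, abs_abs, abs_of_nonneg hA]
            exact mul_le_mul_of_nonneg_left (hφb _) hA)
          (fun x => by
            calc u x * φ x ≤ |u x * φ x| := le_abs_self _
              _ = |u x| * |φ x| := abs_mul _ _
              _ ≤ A * |φ x| := mul_le_mul_of_nonneg_right (hub _) (abs_nonneg _))
    _ = A * ∫ x, |φ x| ∂mu01 := integral_const_mul A _
    _ ≤ A * (2 * (2 * B * cutNorm D)) := mul_le_mul_of_nonneg_left hsplit hA
    _ = 4 * A * B * cutNorm D := by ring

lemma double_bound_abs {D : ℝ → ℝ → ℝ} {M : ℝ} (hD : Measurable (Function.uncurry D))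
    (hM : 0 ≤ M) (hDb : ∀ x y, |D x y| ≤ M) {u v : ℝ → ℝ} {A B : ℝ}
    (hu : Measurable u) (hv : Measurable v) (hA : 0 ≤ A) (hB : 0 ≤ B)
    (hub : ∀ x, |u x| ≤ A) (hvb : ∀ y, |v y| ≤ B) :
    |∫ x, (∫ y, D x y * u x * v y ∂mu01) ∂mu01| ≤ 4 * A * B * cutNorm D := by
  rw [abs_le]
  refine ⟨?_, double_bound_le hD hM hDb hu hv hA hB hub hvb⟩
  have hneg := double_bound_le hD hM hDb hu.neg hv hA hB
    (fun x => by simpa using hub x) hvb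
  have heq : ∫ x, (∫ y, D x y * (-u x) * v y ∂mu01) ∂mu01
      = -∫ x, (∫ y, D x y * u x * v y ∂mu01) ∂mu01 := by
    rw [← integral_neg]
    congr 1; funext x
    rw [← integral_neg]
    congr 1; funext y; ring
  linarith [heq ▸ hneg]

noncomputable def Ppi (k : ℕ) : Measure (Fin k → ℝ) := Measure.pi fun _ => mu01

instance {k : ℕ} : IsProbabilityMeasure (Ppi k) := by
  unfold Ppi; infer_instance

lemma restrict_pi_eq (k : ℕ) :
    (volume : Measure (Fin k → ℝ)).restrict (Set.univ.pi fun _ => Set.Icc 0 1) = Ppi k := by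
  refine (Measure.pi_eq fun s hs => ?_).symm
  rw [Measure.restrict_apply (MeasurableSet.univ_pi hs), ← Set.pi_inter_distrib,
    MeasureTheory.volume_pi, Measure.pi_pi]
  simp [mu01, Measure.restrict_apply (hs _)]

noncomputable def esym {k : ℕ} (G : ℝ → ℝ → ℝ) (hG : ∀ x y, G x y = G y x)
    (e : Sym2 (Fin k)) (x : Fin k → ℝ) : ℝ :=
  Sym2.lift ⟨fun u v => G (x u) (x v), fun a b => hG (x a) (x b)⟩ e

lemma esym_mk {k : ℕ} {G : ℝ → ℝ → ℝ} {hG : ∀ x y, G x y = G y x} {i j : Fin k}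
    {x : Fin k → ℝ} : esym G hG s(i, j) x = G (x i) (x j) := rfl

lemma esym_congr {k : ℕ} {G : ℝ → ℝ → ℝ} {hG : ∀ x y, G x y = G y x} {e : Sym2 (Fin k)}
    {x y : Fin k → ℝ} (h : ∀ i ∈ e, x i = y i) : esym G hG e x = esym G hG e y := by
  induction e with
  | _ i j =>
    rw [esym_mk, esym_mk, h i (Sym2.mem_mk_left i j), h j (Sym2.mem_mk_right i j)]

lemma measurable_esym {k : ℕ} {G : ℝ → ℝ → ℝ} {hG : ∀ x y, G x y = G y x}
    (hGm : Measurable (Function.uncurry G)) (e : Sym2 (Fin k)) :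
    Measurable fun x : Fin k → ℝ => esym G hG e x := by
  induction e with
  | _ i j =>
    exact hGm.comp ((measurable_pi_apply i).prodMk (measurable_pi_apply j)) (f := fun x : Fin k → ℝ => (x i, x j))

lemma abs_esym_le {k : ℕ} {G : ℝ → ℝ → ℝ} {hG : ∀ x y, G x y = G y x} {C : ℝ}
    (hGb : ∀ x y, |G x y| ≤ C) (e : Sym2 (Fin k)) (x : Fin k → ℝ) :
    |esym G hG e x| ≤ C := by
  induction e with
  | _ i j => exact hGb _ _

lemma esym_sub {k : ℕ} {W W' : ℝ → ℝ → ℝ} {h : ∀ x y, W x y = W y x}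
    {h' : ∀ x y, W' x y = W' y x} (e : Sym2 (Fin k)) (x : Fin k → ℝ) :
    esym (fun a b => W a b - W' a b) (fun a b => by show W a b - W' a b = W b a - W' b a; rw [h, h']) e x
      = esym W h e x - esym W' h' e x := by
  induction e with
  | _ i j => rfl

section update
open Function

lemma measurePreserving_update {k : ℕ} (i : Fin k) :
    MeasurePreserving (fun q : (Fin k → ℝ) × ℝ => Function.update q.1 i q.2)
      ((Ppi k).prod mu01) (Ppi k) := by
  classical
  refine ⟨measurable_update', ?_⟩
  unfold Ppi
  refine (Measure.pi_eq fun s hs => ?_).symm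
  rw [Measure.map_apply measurable_update' (MeasurableSet.univ_pi hs)]
  have hpre : (fun q : (Fin k → ℝ) × ℝ => Function.update q.1 i q.2) ⁻¹'
      (Set.univ.pi s) = (Set.univ.pi (Function.update s i Set.univ)) ×ˢ s i := by
    ext ⟨z, t⟩
    simp only [Set.mem_preimage, Set.mem_pi, Set.mem_univ, forall_true_left, Set.mem_prod]
    constructor
    · intro h
      refine ⟨fun j => ?_, by simpa using h i⟩
      by_cases hj : j = i
      · subst hj; simp
      · have := h j
        rw [Function.update_of_ne hj] at this ⊢
        exact this
    · rintro ⟨h1, h2⟩ j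
      by_cases hj : j = i
      · subst hj; simpa using h2
      · have := h1 j
        rw [Function.update_of_ne hj] at this ⊢
        exact this
  rw [hpre, Measure.prod_prod, Measure.pi_pi]
  have hcomp : (fun j => mu01 (Function.update s i Set.univ j))
      = Function.update (fun j => mu01 (s j)) i (mu01 Set.univ) := by
    funext j
    by_cases hj : j = i
    · subst hj; simp
    · rw [Function.update_of_ne hj, Function.update_of_ne hj]
  rw [hcomp, Finset.prod_update_of_mem (Finset.mem_univ i)]
  rw [← Finset.mul_prod_erase Finset.univ (fun j => mu01 (s j)) (Finset.mem_univ i)]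
  have : mu01 Set.univ = 1 := measure_univ
  rw [this, one_mul, Finset.sdiff_singleton_eq_erase]
  ring

lemma integral_update {k : ℕ} (i : Fin k) (f : (Fin k → ℝ) → ℝ) (hf : Measurable f)
    (M : ℝ) (hM : ∀ x, |f x| ≤ M) :
    ∫ x, f x ∂(Ppi k) = ∫ z, (∫ s, f (Function.update z i s) ∂mu01) ∂(Ppi k) := by
  have hmp := measurePreserving_update i
  have h1 := integral_map (μ := (Ppi k).prod mu01) hmp.measurable.aemeasurable
    (f := f) hf.aestronglyMeasurable
  rw [hmp.map_eq] at h1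
  rw [h1]
  exact integral_prod _ (integrable_of_bdd
    (hf.comp hmp.measurable).aestronglyMeasurable M (fun q => hM _))

end update

section keystep
open Function

lemma key_step {k : ℕ} {D : ℝ → ℝ → ℝ} {MD C : ℝ} (hD : Measurable (Function.uncurry D))
    (hDs : ∀ x y, D x y = D y x) (hMD : 0 ≤ MD) (hDb : ∀ x y, |D x y| ≤ MD)
    (hC : 1 ≤ C)
    (K : Sym2 (Fin k) → ℝ → ℝ → ℝ) (hKs : ∀ e x y, K e x y = K e y x)
    (hKm : ∀ e, Measurable (Function.uncurry (K e))) (hKb : ∀ e x y, |K e x y| ≤ C)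
    (a b : Fin k) (hab : a ≠ b) (S : Finset (Sym2 (Fin k)))
    (hS : ∀ e ∈ S, ¬(a ∈ e ∧ b ∈ e)) :
    |∫ x, esym D hDs s(a, b) x * ∏ e ∈ S, esym (K e) (hKs e) e x ∂(Ppi k)|
      ≤ 4 * C ^ S.card * cutNorm D := by
  classical
  have hC0 : (0:ℝ) < C := lt_of_lt_of_le one_pos hC
  set f : (Fin k → ℝ) → ℝ :=
    fun x => esym D hDs s(a, b) x * ∏ e ∈ S, esym (K e) (hKs e) e x with hfdef
  have hfm : Measurable f :=
    (measurable_esym hD _).mul (Finset.measurable_prod _ fun e _ => measurable_esym (hKm e) e)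
  have hprodb : ∀ (T : Finset (Sym2 (Fin k))) (x : Fin k → ℝ),
      |∏ e ∈ T, esym (K e) (hKs e) e x| ≤ C ^ T.card := by
    intro T x
    rw [Finset.abs_prod]
    calc ∏ e ∈ T, |esym (K e) (hKs e) e x| ≤ ∏ _e ∈ T, C :=
        Finset.prod_le_prod (fun e _ => abs_nonneg _) (fun e _ => abs_esym_le (hKb e) e x)
      _ = C ^ T.card := Finset.prod_const C
  have hfb : ∀ x, |f x| ≤ MD * C ^ S.card := by
    intro x
    rw [hfdef, abs_mul]
    exact mul_le_mul (abs_esym_le hDb _ x) (hprodb S x) (abs_nonneg _) hMD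
  -- split off coordinates b then a
  set G : (Fin k → ℝ) → ℝ := fun z => ∫ t, f (Function.update z b t) ∂mu01 with hGdef
  have hGm : Measurable G := by
    have : StronglyMeasurable (Function.uncurry fun z t => f (Function.update z b t)) :=
      (hfm.comp measurable_update').stronglyMeasurable
    exact this.integral_prod_right'.measurable
  have hGb : ∀ z, |G z| ≤ MD * C ^ S.card := by
    intro z
    rw [← Real.norm_eq_abs]
    calc ‖G z‖ ≤ (MD * C ^ S.card) * (mu01 Set.univ).toReal :=
        norm_integral_le_of_norm_le_const (Filter.Eventually.of_forall fun t => by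
          simpa [Real.norm_eq_abs] using hfb _)
      _ = MD * C ^ S.card := by simp
  have step1 : ∫ x, f x ∂(Ppi k) = ∫ z, (∫ s, G (Function.update z a s) ∂mu01) ∂(Ppi k) := by
    rw [integral_update b f hfm (MD * C ^ S.card) hfb]
    exact integral_update a G hGm (MD * C ^ S.card) hGb
  rw [show |∫ x, esym D hDs s(a, b) x * ∏ e ∈ S, esym (K e) (hKs e) e x ∂(Ppi k)|
      = |∫ x, f x ∂(Ppi k)| from rfl, step1]
  -- bound the inner double integral for each fixed z
  have hinner : ∀ z : Fin k → ℝ,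
      |∫ s, (∫ t, f (Function.update (Function.update z a s) b t) ∂mu01) ∂mu01|
        ≤ 4 * C ^ S.card * cutNorm D := by
    intro z
    set Sa := S.filter (fun e => a ∈ e) with hSa
    set Sr := S.filter (fun e => ¬ a ∈ e) with hSr
    set Sb := Sr.filter (fun e => b ∈ e) with hSb
    set S0 := Sr.filter (fun e => ¬ b ∈ e) with hS0
    set u : ℝ → ℝ := fun s =>
      (∏ e ∈ Sa, esym (K e) (hKs e) e (Function.update z a s)) *
        ∏ e ∈ S0, esym (K e) (hKs e) e z with hu
    set v : ℝ → ℝ := fun t => ∏ e ∈ Sb, esym (K e) (hKs e) e (Function.update z b t) with hv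
    have hum : Measurable u := by
      refine Measurable.mul ?_ measurable_const
      exact Finset.measurable_prod _ fun e _ =>
        (measurable_esym (hG := hKs e) (hKm e) e).comp (measurable_update z)
    have hvm : Measurable v :=
      Finset.measurable_prod _ fun e _ =>
        (measurable_esym (hG := hKs e) (hKm e) e).comp (measurable_update z)
    have hub : ∀ s, |u s| ≤ C ^ Sa.card * C ^ S0.card := by
      intro s
      rw [hu, abs_mul]
      exact mul_le_mul (hprodb Sa _) (hprodb S0 _) (abs_nonneg _) (by positivity)
    have hvb : ∀ t, |v t| ≤ C ^ Sb.card := fun t => hprodb Sb _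
    have hfe : ∀ s t : ℝ,
        f (Function.update (Function.update z a s) b t) = D s t * u s * v t := by
      intro s t
      set y := Function.update (Function.update z a s) b t with hy
      have hya : y a = s := by
        rw [hy, Function.update_of_ne hab, Function.update_self]
      have hyb : y b = t := by rw [hy, Function.update_self]
      have h1 : esym D hDs s(a, b) y = D s t := by rw [esym_mk, hya, hyb]
      have hsplit1 : ∏ e ∈ S, esym (K e) (hKs e) e y
          = (∏ e ∈ Sa, esym (K e) (hKs e) e y) * ∏ e ∈ Sr, esym (K e) (hKs e) e y :=
        (Finset.prod_filter_mul_prod_filter_not S _ _).symm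
      have hsplit2 : ∏ e ∈ Sr, esym (K e) (hKs e) e y
          = (∏ e ∈ Sb, esym (K e) (hKs e) e y) * ∏ e ∈ S0, esym (K e) (hKs e) e y :=
        (Finset.prod_filter_mul_prod_filter_not Sr _ _).symm
      have ha' : ∀ e ∈ Sa, esym (K e) (hKs e) e y
          = esym (K e) (hKs e) e (Function.update z a s) := by
        intro e he
        rw [hSa, Finset.mem_filter] at he
        have hbe : b ∉ e := fun hbe => hS e he.1 ⟨he.2, hbe⟩
        refine esym_congr fun i hi => ?_
        have hib : i ≠ b := fun h => hbe (h ▸ hi)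
        rw [hy, Function.update_of_ne hib]
      have hb' : ∀ e ∈ Sb, esym (K e) (hKs e) e y
          = esym (K e) (hKs e) e (Function.update z b t) := by
        intro e he
        rw [hSb, Finset.mem_filter, hSr, Finset.mem_filter] at he
        refine esym_congr fun i hi => ?_
        have hia : i ≠ a := fun h => he.1.2 (h ▸ hi)
        by_cases hib : i = b
        · subst hib
          rw [hyb, Function.update_self]
        · rw [hy, Function.update_of_ne hib, Function.update_of_ne hia,
            Function.update_of_ne hib]
      have h0' : ∀ e ∈ S0, esym (K e) (hKs e) e y = esym (K e) (hKs e) e z := by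
        intro e he
        rw [hS0, Finset.mem_filter, hSr, Finset.mem_filter] at he
        refine esym_congr fun i hi => ?_
        have hia : i ≠ a := fun h => he.1.2 (h ▸ hi)
        have hib : i ≠ b := fun h => he.2 (h ▸ hi)
        rw [hy, Function.update_of_ne hib, Function.update_of_ne hia]
      rw [hfdef]
      simp only []
      rw [h1, hsplit1, hsplit2, Finset.prod_congr rfl ha', Finset.prod_congr rfl hb',
        Finset.prod_congr rfl h0', hu, hv]
      ring
    have hbound := double_bound_abs hD hMD hDb hum hvm
      (by positivity : (0:ℝ) ≤ C ^ Sa.card * C ^ S0.card)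
      (by positivity : (0:ℝ) ≤ C ^ Sb.card) hub hvb
    have hcards : Sa.card + (Sb.card + S0.card) = S.card := by
      have h1 : Sa.card + Sr.card = S.card := by
        rw [hSa, hSr]
        exact Finset.card_filter_add_card_filter_not _
      have h2 : Sb.card + S0.card = Sr.card := by
        rw [hSb, hS0]
        exact Finset.card_filter_add_card_filter_not _
      omega
    calc |∫ s, (∫ t, f (Function.update (Function.update z a s) b t) ∂mu01) ∂mu01|
        = |∫ s, (∫ t, D s t * u s * v t ∂mu01) ∂mu01| := by
          simp only [hfe]
      _ ≤ 4 * (C ^ Sa.card * C ^ S0.card) * C ^ Sb.card * cutNorm D := hbound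
      _ = 4 * C ^ S.card * cutNorm D := by
          rw [← pow_add, mul_assoc (4:ℝ), ← pow_add, ← hcards]
          ring_nf
  rw [← Real.norm_eq_abs]
  calc ‖∫ z, (∫ s, G (Function.update z a s) ∂mu01) ∂(Ppi k)‖
      ≤ (4 * C ^ S.card * cutNorm D) * ((Ppi k) Set.univ).toReal :=
        norm_integral_le_of_norm_le_const (Filter.Eventually.of_forall fun z => by
          rw [Real.norm_eq_abs]
          exact hinner z)
    _ = 4 * C ^ S.card * cutNorm D := by simp

end keystep

section main
open Function

lemma esym_ext {k : ℕ} {G G' : ℝ → ℝ → ℝ} {h : ∀ x y, G x y = G y x}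
    {h' : ∀ x y, G' x y = G' y x} {e : Sym2 (Fin k)} {x : Fin k → ℝ}
    (hgg : ∀ x y, G x y = G' x y) : esym G h e x = esym G' h' e x := by
  induction e with
  | _ i j => rw [esym_mk, esym_mk, hgg]

noncomputable def mix {k : ℕ} (W W' : ℝ → ℝ → ℝ) (B : Finset (Sym2 (Fin k)))
    (e : Sym2 (Fin k)) : ℝ → ℝ → ℝ :=
  fun a b => if e ∈ B then W a b else W' a b

lemma mix_symm {k : ℕ} {W W' : ℝ → ℝ → ℝ} (hsymm : ∀ x y, W x y = W y x)
    (hsymm' : ∀ x y, W' x y = W' y x) (B : Finset (Sym2 (Fin k))) (e : Sym2 (Fin k)) :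
    ∀ x y, mix W W' B e x y = mix W W' B e y x := by
  intro x y
  unfold mix
  split <;> [exact hsymm x y; exact hsymm' x y]

lemma telescope {k : ℕ} {W W' : ℝ → ℝ → ℝ}
    (hmeas : Measurable (Function.uncurry W)) (hmeas' : Measurable (Function.uncurry W'))
    (hsymm : ∀ x y, W x y = W y x) (hsymm' : ∀ x y, W' x y = W' y x)
    {C : ℝ} (hC1 : 1 ≤ C)
    (hb : ∀ x y, |W x y| ≤ C) (hb' : ∀ x y, |W' x y| ≤ C)
    (E : Finset (Sym2 (Fin k))) (hE : ∀ e ∈ E, ¬ e.IsDiag)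
    (B : Finset (Sym2 (Fin k))) (hBE : B ⊆ E) :
    |(∫ x, ∏ e ∈ E, esym (mix W W' B e) (mix_symm hsymm hsymm' B e) e x ∂(Ppi k))
        - ∫ x, ∏ e ∈ E, esym W' hsymm' e x ∂(Ppi k)|
      ≤ 4 * B.card * C ^ (E.card - 1) * cutNorm (fun x y => W x y - W' x y) := by
  classical
  have hC0 : (0:ℝ) < C := lt_of_lt_of_le one_pos hC1
  have hcut0 : 0 ≤ cutNorm (fun x y => W x y - W' x y) :=
    cutNorm_nonneg_s4 (M := 2 * C) (by linarith) (fun x y => by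
      have := abs_sub (W x y) (W' x y)
      calc |W x y - W' x y| ≤ |W x y| + |W' x y| := abs_sub _ _
        _ ≤ 2 * C := by linarith [hb x y, hb' x y])
  induction B using Finset.induction_on with
  | empty =>
    have hempty : (fun x : Fin k → ℝ => ∏ e ∈ E, esym (mix W W' ∅ e)
        (mix_symm hsymm hsymm' ∅ e) e x) = fun x => ∏ e ∈ E, esym W' hsymm' e x := by
      funext x
      exact Finset.prod_congr rfl fun e _ => esym_ext (fun a b => by simp [mix])
    rw [hempty]
    simp [hcut0]
  | insert ε s hnotmem ih =>
    have hεE : ε ∈ E := hBE (Finset.mem_insert_self ε s)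
    have hsE : s ⊆ E := fun e he => hBE (Finset.mem_insert_of_mem he)
    have ihs := ih hsE
    -- kernels for the telescoping step
    have hmixm : ∀ e, Measurable (Function.uncurry (mix W W' s e)) := by
      intro e
      by_cases h : e ∈ s
      · have : mix W W' s e = W := by funext a b; simp [mix, h]
        rw [this]; exact hmeas
      · have : mix W W' s e = W' := by funext a b; simp [mix, h]
        rw [this]; exact hmeas'
    have hmixb : ∀ e x y, |mix W W' s e x y| ≤ C := by
      intro e x y
      unfold mix
      split <;> [exact hb x y; exact hb' x y]
    -- integrability of the two products
    have hintegr : ∀ (B' : Finset (Sym2 (Fin k))),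
        Integrable (fun x => ∏ e ∈ E, esym (mix W W' B' e)
          (mix_symm hsymm hsymm' B' e) e x) (Ppi k) := by
      intro B'
      refine integrable_of_bdd ?_ (C ^ E.card) ?_
      · exact (Finset.measurable_prod _ fun e _ => measurable_esym
          (hG := mix_symm hsymm hsymm' B' e) (by
            by_cases h : e ∈ B'
            · have : mix W W' B' e = W := by funext a b; simp [mix, h]
              rw [this]; exact hmeas
            · have : mix W W' B' e = W' := by funext a b; simp [mix, h]
              rw [this]; exact hmeas') e).aestronglyMeasurable
      · intro x
        rw [Finset.abs_prod]
        calc ∏ e ∈ E, |esym (mix W W' B' e) (mix_symm hsymm hsymm' B' e) e x|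
            ≤ ∏ _e ∈ E, C := Finset.prod_le_prod (fun e _ => abs_nonneg _)
              (fun e _ => abs_esym_le (fun x y => by
                unfold mix; split <;> [exact hb x y; exact hb' x y]) e x)
          _ = C ^ E.card := Finset.prod_const C
    -- the one-step difference
    have hstep : (∫ x, ∏ e ∈ E, esym (mix W W' (insert ε s) e)
          (mix_symm hsymm hsymm' (insert ε s) e) e x ∂(Ppi k))
        - (∫ x, ∏ e ∈ E, esym (mix W W' s e) (mix_symm hsymm hsymm' s e) e x ∂(Ppi k))
        = ∫ x, esym (fun a b => W a b - W' a b)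
            (fun a b => by show W a b - W' a b = W b a - W' b a; rw [hsymm, hsymm']) ε x *
            ∏ e ∈ E.erase ε, esym (mix W W' s e) (mix_symm hsymm hsymm' s e) e x
            ∂(Ppi k) := by
      rw [← integral_sub (hintegr (insert ε s)) (hintegr s)]
      congr 1
      funext x
      rw [← Finset.mul_prod_erase E _ hεE, ← Finset.mul_prod_erase E
        (fun e => esym (mix W W' s e) (mix_symm hsymm hsymm' s e) e x) hεE]
      have hrest : ∏ e ∈ E.erase ε, esym (mix W W' (insert ε s) e)
          (mix_symm hsymm hsymm' (insert ε s) e) e x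
          = ∏ e ∈ E.erase ε, esym (mix W W' s e) (mix_symm hsymm hsymm' s e) e x := by
        refine Finset.prod_congr rfl fun e he => esym_ext fun a b => ?_
        have hne : e ≠ ε := (Finset.mem_erase.mp he).1
        simp [mix, Finset.mem_insert, hne]
      rw [hrest]
      have h1 : esym (mix W W' (insert ε s) ε) (mix_symm hsymm hsymm' (insert ε s) ε) ε x
          = esym W hsymm ε x := esym_ext fun a b => by simp [mix]
      have h2 : esym (mix W W' s ε) (mix_symm hsymm hsymm' s ε) ε x
          = esym W' hsymm' ε x := esym_ext fun a b => by simp [mix, hnotmem]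
      rw [h1, h2, ← sub_mul]
      congr 1
      exact (esym_sub (h := hsymm) (h' := hsymm') ε x).symm
    -- bound the one-step difference via key_step
    obtain ⟨⟨v, w⟩, rfl⟩ := Quot.exists_rep ε
    have hvw : v ≠ w := by
      intro h
      exact hE _ hεE (by subst h; exact Sym2.mk_isDiag_iff.mpr rfl)
    have hSprop : ∀ e ∈ E.erase (Quot.mk _ (v, w)), ¬(v ∈ e ∧ w ∈ e) := by
      intro e he hmem
      have := (Sym2.mem_and_mem_iff hvw).mp hmem
      exact (Finset.mem_erase.mp he).1 (by exact this)
    have hkey := key_step (MD := 2 * C)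
      (hD := by
        have : (Function.uncurry fun x y => W x y - W' x y)
            = fun p : ℝ × ℝ => Function.uncurry W p - Function.uncurry W' p := rfl
        rw [this]; exact hmeas.sub hmeas')
      (hDs := fun a b => by show W a b - W' a b = W b a - W' b a; rw [hsymm, hsymm'])
      (hMD := by linarith)
      (hDb := fun x y => by
        calc |W x y - W' x y| ≤ |W x y| + |W' x y| := abs_sub _ _
          _ ≤ 2 * C := by linarith [hb x y, hb' x y])
      hC1 (mix W W' s) (mix_symm hsymm hsymm' s) hmixm hmixb v w hvw
      (E.erase (Quot.mk _ (v, w))) hSprop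
    have hcard : (E.erase (Quot.mk _ (v, w))).card = E.card - 1 :=
      Finset.card_erase_of_mem hεE
    rw [hcard] at hkey
    -- combine
    calc |(∫ x, ∏ e ∈ E, esym (mix W W' (insert (Quot.mk _ (v, w)) s) e)
            (mix_symm hsymm hsymm' _ e) e x ∂(Ppi k))
          - ∫ x, ∏ e ∈ E, esym W' hsymm' e x ∂(Ppi k)|
        ≤ |(∫ x, ∏ e ∈ E, esym (mix W W' (insert (Quot.mk _ (v, w)) s) e)
            (mix_symm hsymm hsymm' _ e) e x ∂(Ppi k))
          - ∫ x, ∏ e ∈ E, esym (mix W W' s e) (mix_symm hsymm hsymm' s e) e x ∂(Ppi k)|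
          + |(∫ x, ∏ e ∈ E, esym (mix W W' s e) (mix_symm hsymm hsymm' s e) e x ∂(Ppi k))
          - ∫ x, ∏ e ∈ E, esym W' hsymm' e x ∂(Ppi k)| := abs_sub_le _ _ _
      _ ≤ 4 * C ^ (E.card - 1) * cutNorm (fun x y => W x y - W' x y)
          + 4 * s.card * C ^ (E.card - 1) * cutNorm (fun x y => W x y - W' x y) := by
          refine add_le_add ?_ ihs
          rw [hstep]
          exact hkey
      _ = 4 * ((insert (Quot.mk _ (v, w)) s).card : ℝ) * C ^ (E.card - 1)
          * cutNorm (fun x y => W x y - W' x y) := by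
          rw [Finset.card_insert_of_notMem hnotmem]
          push_cast
          ring

end main

/-- Counting lemma: for a simple graph `F` with `m` edges and graphons `W, W'`
bounded by `C ≥ 1`, `|t(F,W) − t(F,W')| ≤ 4 m C^{m−1} ‖W − W'‖_□`. -/
theorem counting_lemma {k : ℕ} (F : SimpleGraph (Fin k)) [DecidableRel F.Adj]
    (W W' : ℝ → ℝ → ℝ)
    (hmeas : Measurable (Function.uncurry W)) (hmeas' : Measurable (Function.uncurry W'))
    (hsymm : ∀ x y, W x y = W y x) (hsymm' : ∀ x y, W' x y = W' y x)
    (C : ℝ) (hC1 : 1 ≤ C)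
    (hb : ∀ x y, |W x y| ≤ C) (hb' : ∀ x y, |W' x y| ≤ C) :
    |homDensity F W hsymm - homDensity F W' hsymm'| ≤
      4 * F.edgeFinset.card * C ^ (F.edgeFinset.card - 1) *
        cutNorm (fun x y => W x y - W' x y) := by
  classical
  have hE : ∀ e ∈ F.edgeFinset, ¬ e.IsDiag := fun e he =>
    F.not_isDiag_of_mem_edgeSet (SimpleGraph.mem_edgeFinset.mp he)
  have h1 : homDensity F W hsymm = ∫ x, ∏ e ∈ F.edgeFinset,
      esym (mix W W' F.edgeFinset e) (mix_symm hsymm hsymm' F.edgeFinset e) e x ∂(Ppi k) := by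
    unfold homDensity
    rw [restrict_pi_eq]
    congr 1
    funext x
    refine Finset.prod_congr rfl fun e he => ?_
    show esym W hsymm e x = _
    exact esym_ext (fun a b => by simp [mix, he])
  have h2 : homDensity F W' hsymm' = ∫ x, ∏ e ∈ F.edgeFinset,
      esym W' hsymm' e x ∂(Ppi k) := by
    unfold homDensity
    rw [restrict_pi_eq]
    rfl
  rw [h1, h2]
  exact telescope hmeas hmeas' hsymm hsymm' hC1 hb hb' F.edgeFinset hE F.edgeFinset
    (subset_refl _)
end

section
/- For any graphon W with ‖W‖_∞ ≤ C and any finite simple graph F with at least one edge, |t(F, W)| ≤ 4 C^{|E(F)|−1} · ‖W‖_□. -/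
open MeasureTheory Set Function
open scoped ENNReal

namespace CutAux

noncomputable def muI : Measure ℝ := volume.restrict (Set.Icc 0 1)

instance : IsProbabilityMeasure muI :=
  ⟨by rw [muI, Measure.restrict_apply_univ, Real.volume_Icc]; norm_num⟩

lemma integrable_of_bdd {α : Type*} [MeasurableSpace α] {ν : Measure α} [IsFiniteMeasure ν]
    {f : α → ℝ} (hf : AEStronglyMeasurable f ν) {B : ℝ} (h : ∀ x, |f x| ≤ B) :
    Integrable f ν :=
  ⟨hf, HasFiniteIntegral.of_bounded (C := B) (ae_of_all _ fun x => by
    simpa [Real.norm_eq_abs] using h x)⟩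

lemma abs_integral_le_bound {α : Type*} [MeasurableSpace α] {ν : Measure α}
    [IsProbabilityMeasure ν] {g : α → ℝ} {B : ℝ} (h : ∀ x, |g x| ≤ B) :
    |∫ x, g x ∂ν| ≤ B := by
  have := norm_integral_le_of_norm_le_const (μ := ν) (f := g) (C := B)
    (ae_of_all _ fun x => by simpa [Real.norm_eq_abs] using h x)
  simpa [Real.norm_eq_abs, measure_univ] using this

variable {W : ℝ → ℝ → ℝ} {C : ℝ}

lemma hC0 (hb : ∀ x y, |W x y| ≤ C) : 0 ≤ C := (abs_nonneg _).trans (hb 0 0)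

lemma volIcc : (volume (Set.Icc (0:ℝ) 1)) = 1 := by rw [Real.volume_Icc]; norm_num

lemma inner_bdd (hmeas : Measurable (Function.uncurry W)) (hb : ∀ x y, |W x y| ≤ C)
    {T : Set ℝ} (hTsub : T ⊆ Set.Icc 0 1) (x : ℝ) :
    |∫ y in T, W x y| ≤ C := by
  have hT1 : volume T ≤ 1 := by rw [← volIcc]; exact measure_mono hTsub
  have := norm_setIntegral_le_of_norm_le_const (μ := volume) (s := T) (f := fun y => W x y)
    (C := C) (lt_of_le_of_lt hT1 (by norm_num))
    (fun y _ => by simpa [Real.norm_eq_abs] using hb x y)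
  rw [Real.norm_eq_abs] at this
  refine this.trans ?_
  have : (volume T).toReal ≤ 1 := by
    simpa using ENNReal.toReal_mono ENNReal.one_ne_top hT1
  calc C * (volume T).toReal ≤ C * 1 :=
        mul_le_mul_of_nonneg_left this (hC0 hb)
    _ = C := mul_one C

lemma setInt_bdd (hmeas : Measurable (Function.uncurry W)) (hb : ∀ x y, |W x y| ≤ C)
    {S T : Set ℝ} (hSsub : S ⊆ Set.Icc 0 1) (hTsub : T ⊆ Set.Icc 0 1) :
    |∫ x in S, ∫ y in T, W x y| ≤ C := by
  have hS1 : volume S ≤ 1 := by rw [← volIcc]; exact measure_mono hSsub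
  have hmg : AEStronglyMeasurable (fun x => ∫ y in T, W x y) (volume.restrict S) :=
    (hmeas.stronglyMeasurable.integral_prod_right'
      (ν := volume.restrict T)).aestronglyMeasurable
  have := norm_setIntegral_le_of_norm_le_const (μ := volume) (s := S)
    (f := fun x => ∫ y in T, W x y) (C := C) (lt_of_le_of_lt hS1 (by norm_num))
    (fun x _ => by simpa [Real.norm_eq_abs] using inner_bdd hmeas hb hTsub x)
  rw [Real.norm_eq_abs] at this
  refine this.trans ?_
  have h1 : (volume S).toReal ≤ 1 := by
    simpa using ENNReal.toReal_mono ENNReal.one_ne_top hS1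
  calc C * (volume S).toReal ≤ C * 1 := mul_le_mul_of_nonneg_left h1 (hC0 hb)
    _ = C := mul_one C

lemma cutNorm_bddAbove (hmeas : Measurable (Function.uncurry W)) (hb : ∀ x y, |W x y| ≤ C) :
    BddAbove {r : ℝ | ∃ S T : Set ℝ, MeasurableSet S ∧ MeasurableSet T ∧
      S ⊆ Set.Icc 0 1 ∧ T ⊆ Set.Icc 0 1 ∧ r = |∫ x in S, ∫ y in T, W x y|} := by
  refine ⟨C, ?_⟩
  rintro r ⟨S, T, _, _, hSsub, hTsub, rfl⟩
  exact setInt_bdd hmeas hb hSsub hTsub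

lemma le_cutNorm (hmeas : Measurable (Function.uncurry W)) (hb : ∀ x y, |W x y| ≤ C)
    {S T : Set ℝ} (hS : MeasurableSet S) (hT : MeasurableSet T)
    (hSsub : S ⊆ Set.Icc 0 1) (hTsub : T ⊆ Set.Icc 0 1) :
    |∫ x in S, ∫ y in T, W x y| ≤ cutNorm W :=
  le_csSup (cutNorm_bddAbove hmeas hb) ⟨S, T, hS, hT, hSsub, hTsub, rfl⟩

lemma cutNorm_nonneg (hmeas : Measurable (Function.uncurry W)) (hb : ∀ x y, |W x y| ≤ C) :
    0 ≤ cutNorm W :=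
  (abs_nonneg _).trans (le_cutNorm hmeas hb MeasurableSet.empty MeasurableSet.empty
    (empty_subset _) (empty_subset _))

lemma abs_split {h : ℝ → ℝ} (hm : Measurable h) {B : ℝ} (hB : ∀ x, |h x| ≤ B) :
    ∫ x in Set.Icc (0:ℝ) 1, |h x| ≤
      |∫ x in Set.Icc (0:ℝ) 1 ∩ {x | 0 ≤ h x}, h x| +
      |∫ x in Set.Icc (0:ℝ) 1 \ {x | 0 ≤ h x}, h x| := by
  set I : Set ℝ := Set.Icc 0 1
  set S : Set ℝ := I ∩ {x | 0 ≤ h x} with hSdef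
  have hPm : MeasurableSet {x | 0 ≤ h x} := measurableSet_le measurable_const hm
  have hSm : MeasurableSet S := measurableSet_Icc.inter hPm
  have hDm : MeasurableSet (I \ {x | 0 ≤ h x}) := measurableSet_Icc.diff hPm
  have hunion : S ∪ (I \ {x | 0 ≤ h x}) = I := by
    rw [hSdef]; exact inter_union_diff I _
  have hdisj : Disjoint S (I \ {x | 0 ≤ h x}) := by
    refine Set.disjoint_left.mpr ?_
    rintro x ⟨_, hx⟩ ⟨_, hx'⟩
    exact hx' hx
  have hint : ∀ U : Set ℝ, U ⊆ I → IntegrableOn (fun x => |h x|) U volume := by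
    intro U hU
    haveI : IsFiniteMeasure (volume.restrict U) := by
      constructor
      rw [Measure.restrict_apply_univ]
      exact lt_of_le_of_lt ((measure_mono hU).trans volIcc.le) (by norm_num)
    exact integrable_of_bdd hm.abs.aestronglyMeasurable (B := B)
      (fun x => by simpa using hB x)
  have hinth : ∀ U : Set ℝ, U ⊆ I → IntegrableOn h U volume := by
    intro U hU
    haveI : IsFiniteMeasure (volume.restrict U) := by
      constructor
      rw [Measure.restrict_apply_univ]
      exact lt_of_le_of_lt ((measure_mono hU).trans volIcc.le) (by norm_num)
    exact integrable_of_bdd hm.aestronglyMeasurable hB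
  have h1 : ∫ x in I, |h x| = (∫ x in S, |h x|) + ∫ x in I \ {x | 0 ≤ h x}, |h x| := by
    rw [← setIntegral_union hdisj hDm (hint S inter_subset_left) (hint _ diff_subset), hunion]
  have h2 : ∫ x in S, |h x| = ∫ x in S, h x :=
    setIntegral_congr_fun hSm fun x hx => abs_of_nonneg hx.2
  have h3 : ∫ x in I \ {x | 0 ≤ h x}, |h x| = - ∫ x in I \ {x | 0 ≤ h x}, h x := by
    rw [← integral_neg]
    exact setIntegral_congr_fun hDm fun x hx => abs_of_neg (lt_of_not_ge hx.2)
  rw [h1, h2, h3]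
  exact add_le_add (le_abs_self _) (neg_le_abs _)


lemma finOn {U : Set ℝ} (hU : U ⊆ Set.Icc 0 1) : IsFiniteMeasure (volume.restrict U) := by
  constructor
  rw [Measure.restrict_apply_univ]
  exact lt_of_le_of_lt ((measure_mono hU).trans volIcc.le) (by norm_num)

lemma swap_int (hmeas : Measurable (Function.uncurry W)) (hb : ∀ x y, |W x y| ≤ C)
    {S T : Set ℝ} (hSsub : S ⊆ Set.Icc 0 1) (hTsub : T ⊆ Set.Icc 0 1)
    {g : ℝ → ℝ} (hg : Measurable g) {N : ℝ} (hgN : ∀ y, |g y| ≤ N) :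
    ∫ x in S, ∫ y in T, W x y * g y = ∫ y in T, ∫ x in S, W x y * g y := by
  haveI := finOn hSsub
  haveI := finOn hTsub
  refine integral_integral_swap ?_
  refine integrable_of_bdd ((hmeas.mul (hg.comp measurable_snd)).aestronglyMeasurable)
    (B := C * N) (fun p => ?_)
  have hN0 : 0 ≤ N := (abs_nonneg _).trans (hgN 0)
  calc |Function.uncurry (fun x y => W x y * g y) p| = |W p.1 p.2| * |g p.2| := by
        simp [Function.uncurry, abs_mul]
    _ ≤ C * N := mul_le_mul (hb _ _) (hgN _) (abs_nonneg _) (hC0 hb)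

lemma step (hmeas : Measurable (Function.uncurry W)) (hb : ∀ x y, |W x y| ≤ C)
    {S : Set ℝ} (hS : MeasurableSet S) (hSsub : S ⊆ Set.Icc 0 1)
    {g : ℝ → ℝ} (hg : Measurable g) {N : ℝ} (hgN : ∀ y, |g y| ≤ N) :
    |∫ x in S, ∫ y in Set.Icc (0:ℝ) 1, W x y * g y| ≤ 2 * N * cutNorm W := by
  haveI := finOn hSsub
  have hN0 : 0 ≤ N := (abs_nonneg _).trans (hgN 0)
  rw [swap_int hmeas hb hSsub Subset.rfl hg hgN]
  simp_rw [integral_mul_const]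
  set kk : ℝ → ℝ := fun y => ∫ x in S, W x y with hkk
  have hkm : Measurable kk :=
    (hmeas.stronglyMeasurable.integral_prod_left' (μ := volume.restrict S)).measurable
  have hkB : ∀ y, |kk y| ≤ C := by
    intro y
    have hS1 : volume S ≤ 1 := by rw [← volIcc]; exact measure_mono hSsub
    have := norm_setIntegral_le_of_norm_le_const (μ := volume) (s := S)
      (f := fun x => W x y) (C := C) (lt_of_le_of_lt hS1 (by norm_num))
      (fun x _ => by simpa [Real.norm_eq_abs] using hb x y)
    rw [Real.norm_eq_abs] at this
    refine this.trans ?_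
    have h1 : (volume S).toReal ≤ 1 := by
      simpa using ENNReal.toReal_mono ENNReal.one_ne_top hS1
    calc C * (volume S).toReal ≤ C * 1 := mul_le_mul_of_nonneg_left h1 (hC0 hb)
      _ = C := mul_one C
  have habs : |∫ y in Set.Icc (0:ℝ) 1, kk y * g y| ≤ ∫ y in Set.Icc (0:ℝ) 1, |kk y * g y| := by
    have := norm_integral_le_integral_norm (μ := volume.restrict (Set.Icc 0 1))
      (fun y => kk y * g y)
    simp only [Real.norm_eq_abs] at this
    exact this
  have hmono : ∫ y in Set.Icc (0:ℝ) 1, |kk y * g y| ≤ ∫ y in Set.Icc (0:ℝ) 1, |kk y| * N := by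
    haveI := finOn (Subset.rfl : Set.Icc (0:ℝ) 1 ⊆ _)
    refine integral_mono ?_ ?_ ?_
    · exact integrable_of_bdd (hkm.mul hg).abs.aestronglyMeasurable (B := C * N)
        (fun y => by
          rw [abs_abs, abs_mul]
          exact mul_le_mul (hkB y) (hgN y) (abs_nonneg _) (hC0 hb))
    · exact integrable_of_bdd (hkm.abs.mul measurable_const).aestronglyMeasurable (B := C * N)
        (fun y => by
          rw [abs_mul, abs_abs, abs_of_nonneg hN0]
          exact mul_le_mul_of_nonneg_right (hkB y) hN0)
    · intro y
      dsimp only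
      rw [abs_mul]
      exact mul_le_mul_of_nonneg_left (hgN y) (abs_nonneg _)
  have hsplit : ∫ y in Set.Icc (0:ℝ) 1, |kk y| ≤ 2 * cutNorm W := by
    have h2 := abs_split hkm hkB
    refine h2.trans ?_
    have key : ∀ U : Set ℝ, MeasurableSet U → U ⊆ Set.Icc 0 1 →
        |∫ y in U, kk y| ≤ cutNorm W := by
      intro U hU hUsub
      have hswap : ∫ y in U, ∫ x in S, W x y = ∫ x in S, ∫ y in U, W x y := by
        haveI := finOn hSsub
        haveI := finOn hUsub
        refine integral_integral_swap ?_
        refine integrable_of_bdd ((hmeas.comp measurable_swap).aestronglyMeasurable)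
          (B := C) (fun p => hb _ _)
      calc |∫ y in U, kk y| = |∫ x in S, ∫ y in U, W x y| := by rw [hkk]; rw [hswap]
        _ ≤ cutNorm W := le_cutNorm hmeas hb hS hU hSsub hUsub
    have hA := key (Set.Icc 0 1 ∩ {x | 0 ≤ kk x})
      (measurableSet_Icc.inter (measurableSet_le measurable_const hkm)) inter_subset_left
    have hB2 := key (Set.Icc 0 1 \ {x | 0 ≤ kk x})
      (measurableSet_Icc.diff (measurableSet_le measurable_const hkm)) diff_subset
    calc |∫ y in Set.Icc (0:ℝ) 1 ∩ {x | 0 ≤ kk x}, kk y| +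
          |∫ y in Set.Icc (0:ℝ) 1 \ {x | 0 ≤ kk x}, kk y| ≤ cutNorm W + cutNorm W :=
          add_le_add hA hB2
      _ = 2 * cutNorm W := by ring
  calc |∫ y in Set.Icc (0:ℝ) 1, kk y * g y| ≤ ∫ y in Set.Icc (0:ℝ) 1, |kk y| * N :=
        habs.trans hmono
    _ = (∫ y in Set.Icc (0:ℝ) 1, |kk y|) * N := integral_mul_const _ _
    _ ≤ (2 * cutNorm W) * N := mul_le_mul_of_nonneg_right hsplit hN0
    _ = 2 * N * cutNorm W := by ring

lemma bilin (hmeas : Measurable (Function.uncurry W)) (hb : ∀ x y, |W x y| ≤ C)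
    {f g : ℝ → ℝ} (hf : Measurable f) (hg : Measurable g)
    {M N : ℝ} (hfM : ∀ x, |f x| ≤ M) (hgN : ∀ y, |g y| ≤ N) :
    |∫ x in Set.Icc (0:ℝ) 1, ∫ y in Set.Icc (0:ℝ) 1, W x y * f x * g y| ≤
      4 * M * N * cutNorm W := by
  have hM0 : 0 ≤ M := (abs_nonneg _).trans (hfM 0)
  have hN0 : 0 ≤ N := (abs_nonneg _).trans (hgN 0)
  haveI := finOn (Subset.rfl : Set.Icc (0:ℝ) 1 ⊆ _)
  have hre : ∀ x, ∫ y in Set.Icc (0:ℝ) 1, W x y * f x * g y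
      = f x * ∫ y in Set.Icc (0:ℝ) 1, W x y * g y := by
    intro x
    rw [← integral_const_mul]
    congr 1
    funext y
    ring
  simp_rw [hre]
  set h : ℝ → ℝ := fun x => ∫ y in Set.Icc (0:ℝ) 1, W x y * g y with hh
  have hhm : Measurable h :=
    ((hmeas.mul (hg.comp measurable_snd)).stronglyMeasurable.integral_prod_right'
      (ν := volume.restrict (Set.Icc 0 1))).measurable
  have hhB : ∀ x, |h x| ≤ C * N := by
    intro x
    have := norm_setIntegral_le_of_norm_le_const (μ := volume) (s := Set.Icc (0:ℝ) 1)
      (f := fun y => W x y * g y) (C := C * N) (by rw [volIcc]; norm_num)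
      (fun y _ => by
        rw [Real.norm_eq_abs, abs_mul]
        exact mul_le_mul (hb _ _) (hgN _) (abs_nonneg _) (hC0 hb))
    rw [Real.norm_eq_abs, Measure.real, volIcc] at this
    simpa using this
  have habs : |∫ x in Set.Icc (0:ℝ) 1, f x * h x| ≤ ∫ x in Set.Icc (0:ℝ) 1, |f x * h x| := by
    have := norm_integral_le_integral_norm (μ := volume.restrict (Set.Icc 0 1))
      (fun x => f x * h x)
    simp only [Real.norm_eq_abs] at this
    exact this
  have hmono : ∫ x in Set.Icc (0:ℝ) 1, |f x * h x| ≤ ∫ x in Set.Icc (0:ℝ) 1, M * |h x| := by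
    refine integral_mono ?_ ?_ ?_
    · exact integrable_of_bdd (hf.mul hhm).abs.aestronglyMeasurable (B := M * (C * N))
        (fun x => by
          rw [abs_abs, abs_mul]
          exact mul_le_mul (hfM x) (hhB x) (abs_nonneg _) hM0)
    · exact integrable_of_bdd (measurable_const.mul hhm.abs).aestronglyMeasurable
        (B := M * (C * N)) (fun x => by
          rw [abs_mul, abs_abs, abs_of_nonneg hM0]
          exact mul_le_mul_of_nonneg_left (hhB x) hM0)
    · intro x
      dsimp only
      rw [abs_mul]
      exact mul_le_mul_of_nonneg_right (hfM x) (abs_nonneg _)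
  have hsplit : ∫ x in Set.Icc (0:ℝ) 1, |h x| ≤ 4 * N * cutNorm W := by
    refine (abs_split hhm hhB).trans ?_
    have hA := step hmeas hb (S := Set.Icc 0 1 ∩ {x | 0 ≤ h x})
      (measurableSet_Icc.inter (measurableSet_le measurable_const hhm))
      inter_subset_left hg hgN
    have hB2 := step hmeas hb (S := Set.Icc 0 1 \ {x | 0 ≤ h x})
      (measurableSet_Icc.diff (measurableSet_le measurable_const hhm))
      diff_subset hg hgN
    calc |∫ x in Set.Icc (0:ℝ) 1 ∩ {x | 0 ≤ h x}, h x| +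
          |∫ x in Set.Icc (0:ℝ) 1 \ {x | 0 ≤ h x}, h x|
        ≤ 2 * N * cutNorm W + 2 * N * cutNorm W := add_le_add hA hB2
      _ = 4 * N * cutNorm W := by ring
  calc |∫ x in Set.Icc (0:ℝ) 1, f x * h x| ≤ ∫ x in Set.Icc (0:ℝ) 1, M * |h x| :=
        habs.trans hmono
    _ = M * ∫ x in Set.Icc (0:ℝ) 1, |h x| := integral_const_mul _ _
    _ ≤ M * (4 * N * cutNorm W) := mul_le_mul_of_nonneg_left hsplit hM0
    _ = 4 * M * N * cutNorm W := by ring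


variable {k : ℕ}

lemma pi_restrict :
    (volume : Measure (Fin k → ℝ)).restrict (Set.univ.pi fun _ => Set.Icc 0 1)
      = Measure.pi (fun _ : Fin k => muI) := by
  refine (Measure.pi_eq fun s hs => ?_).symm
  rw [Measure.restrict_apply (MeasurableSet.univ_pi hs), ← pi_inter_distrib, volume_pi_pi]
  refine Finset.prod_congr rfl fun i _ => ?_
  rw [muI, Measure.restrict_apply (hs i)]

lemma mp_update (i : Fin k) :
    MeasurePreserving (fun p : (Fin k → ℝ) × ℝ => update p.1 i p.2)
      ((Measure.pi fun _ : Fin k => muI).prod muI) (Measure.pi fun _ : Fin k => muI) := by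
  refine ⟨measurable_update', ?_⟩
  refine (Measure.pi_eq fun s hs => ?_).symm
  rw [Measure.map_apply measurable_update' (MeasurableSet.univ_pi hs)]
  have hpre : (fun p : (Fin k → ℝ) × ℝ => update p.1 i p.2) ⁻¹' (Set.univ.pi s)
      = (Set.univ.pi (update s i Set.univ)) ×ˢ (s i) := by
    ext p
    simp only [mem_preimage, mem_pi, mem_univ, forall_true_left, mem_prod, true_implies]
    constructor
    · intro hmem
      refine ⟨fun j => ?_, by simpa using hmem i⟩
      rcases eq_or_ne j i with rfl | hj
      · simp
      · rw [update_of_ne hj]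
        have := hmem j
        rwa [update_of_ne hj] at this
    · rintro ⟨h1, h2⟩ j
      rcases eq_or_ne j i with rfl | hj
      · simpa using h2
      · have := h1 j
        rw [update_of_ne hj] at this
        rwa [update_of_ne hj]
  rw [hpre, Measure.prod_prod, Measure.pi_pi]
  rw [Finset.prod_eq_mul_prod_sdiff_singleton_of_mem (Finset.mem_univ i)
    (fun j => muI (update s i Set.univ j))]
  have h1 : muI (update s i Set.univ i) = 1 := by rw [update_self]; exact measure_univ
  have hcongr : ∏ j ∈ Finset.univ \ {i}, muI (update s i Set.univ j)
      = ∏ j ∈ Finset.univ \ {i}, muI (s j) := by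
    refine Finset.prod_congr rfl fun j hj => ?_
    have hji : j ≠ i := by
      simpa using (Finset.mem_sdiff.mp hj).2
    rw [update_of_ne hji]
  rw [h1, one_mul, hcongr,
    Finset.prod_eq_mul_prod_sdiff_singleton_of_mem (Finset.mem_univ i) (fun j => muI (s j)), mul_comm]

lemma integral_update (i : Fin k) {f : (Fin k → ℝ) → ℝ} (hf : Measurable f)
    {B : ℝ} (hB : ∀ x, |f x| ≤ B) :
    ∫ x, f x ∂(Measure.pi fun _ : Fin k => muI)
      = ∫ x, (∫ a, f (update x i a) ∂muI) ∂(Measure.pi fun _ : Fin k => muI) := by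
  have h1 : ∫ x, f x ∂(Measure.pi fun _ : Fin k => muI)
      = ∫ p : (Fin k → ℝ) × ℝ, f (update p.1 i p.2)
          ∂((Measure.pi fun _ : Fin k => muI).prod muI) := by
    conv_lhs => rw [← (mp_update i).map_eq]
    exact integral_map measurable_update'.aemeasurable hf.aestronglyMeasurable
  rw [h1]
  haveI : IsProbabilityMeasure (Measure.pi fun _ : Fin k => muI) :=
    Measure.pi.instIsProbabilityMeasure _
  haveI : IsProbabilityMeasure ((Measure.pi fun _ : Fin k => muI).prod muI) := by
    infer_instance
  have hint : Integrable (fun p : (Fin k → ℝ) × ℝ => f (update p.1 i p.2))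
      ((Measure.pi fun _ : Fin k => muI).prod muI) :=
    integrable_of_bdd (hf.comp measurable_update').aestronglyMeasurable (fun p => hB _)
  exact integral_prod _ hint

end CutAux

open CutAux in
/-- For a graphon `W` with `‖W‖_∞ ≤ C` and a simple graph `F` with at least one
edge, `|t(F,W)| ≤ 4 C^{|E(F)|−1} ‖W‖_□`. -/
theorem homDensity_le_cutNorm {k : ℕ} (F : SimpleGraph (Fin k)) [DecidableRel F.Adj]
    (hF : F.edgeFinset.Nonempty)
    (W : ℝ → ℝ → ℝ) (hmeas : Measurable (Function.uncurry W))
    (hsymm : ∀ x y, W x y = W y x)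
    (C : ℝ) (hb : ∀ x y, |W x y| ≤ C) :
    |homDensity F W hsymm| ≤ 4 * C ^ (F.edgeFinset.card - 1) * cutNorm W := by
  classical
  obtain ⟨e, he⟩ := hF
  obtain ⟨u, v, rfl⟩ : ∃ u v, e = s(u, v) := by
    induction e using Sym2.ind with
    | _ u v => exact ⟨u, v, rfl⟩
  have hadj : F.Adj u v := by
    rwa [SimpleGraph.mem_edgeFinset, SimpleGraph.mem_edgeSet] at he
  have hne : u ≠ v := hadj.ne
  have hC0 : 0 ≤ C := CutAux.hC0 hb
  have hmuI : muI = volume.restrict (Set.Icc 0 1) := rfl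
  haveI : IsProbabilityMeasure (Measure.pi fun _ : Fin k => muI) :=
    Measure.pi.instIsProbabilityMeasure _
  set L : (Fin k → ℝ) → Sym2 (Fin k) → ℝ :=
    fun x e' => Sym2.lift ⟨fun p q => W (x p) (x q), fun p q => hsymm (x p) (x q)⟩ e'
    with hLdef
  set f : (Fin k → ℝ) → ℝ := fun x => ∏ e' ∈ F.edgeFinset, L x e' with hfdef
  -- basic facts about `L`
  have hLm : ∀ e', Measurable fun x : Fin k → ℝ => L x e' := by
    intro e'
    induction e' using Sym2.ind with
    | _ p q =>
      have hrw : (fun x : Fin k → ℝ => L x s(p, q))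
          = fun x => Function.uncurry W (x p, x q) := by
        funext x; simp [hLdef, Function.uncurry]
      rw [hrw]
      exact hmeas.comp ((measurable_pi_apply p).prodMk (measurable_pi_apply q))
  have hLb : ∀ x e', |L x e'| ≤ C := by
    intro x e'
    induction e' using Sym2.ind with
    | _ p q => simpa [hLdef] using hb (x p) (x q)
  have hLind : ∀ (e' : Sym2 (Fin k)) (i : Fin k), i ∉ e' →
      ∀ (x : Fin k → ℝ) (a : ℝ), L (Function.update x i a) e' = L x e' := by
    intro e'
    induction e' using Sym2.ind with
    | _ p q =>
      intro i hi x a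
      rw [Sym2.mem_iff] at hi
      push_neg at hi
      simp [hLdef, Function.update_of_ne (Ne.symm hi.1), Function.update_of_ne (Ne.symm hi.2)]
  have hprodb : ∀ (s : Finset (Sym2 (Fin k))) (z : Fin k → ℝ),
      |∏ e' ∈ s, L z e'| ≤ C ^ s.card := by
    intro s z
    rw [Finset.abs_prod]
    calc ∏ e' ∈ s, |L z e'| ≤ ∏ e' ∈ s, C :=
          Finset.prod_le_prod (fun _ _ => abs_nonneg _) (fun e' _ => hLb z e')
      _ = C ^ s.card := Finset.prod_const C
  have hfm : Measurable f := Finset.measurable_prod _ fun e' _ => hLm e'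
  have hfb : ∀ x, |f x| ≤ C ^ F.edgeFinset.card := fun x => hprodb _ x
  -- rewrite `homDensity` as an integral against the product probability measure
  have hhd : homDensity F W hsymm = ∫ x, f x ∂(Measure.pi fun _ : Fin k => muI) := by
    have h0 : homDensity F W hsymm
        = ∫ x in Set.univ.pi (fun _ : Fin k => Set.Icc (0:ℝ) 1), f x := rfl
    rw [h0, ← pi_restrict]
  -- peel off the two coordinates u, v
  have h1 : ∫ x, f x ∂(Measure.pi fun _ : Fin k => muI)
      = ∫ x, (∫ a, f (Function.update x u a) ∂muI) ∂(Measure.pi fun _ : Fin k => muI) :=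
    integral_update u hfm hfb
  set F1 : (Fin k → ℝ) → ℝ := fun x => ∫ a, f (Function.update x u a) ∂muI with hF1def
  have hF1m : Measurable F1 :=
    ((hfm.comp (measurable_update' (a := u))).stronglyMeasurable.integral_prod_right'
      (ν := muI)).measurable
  have hF1b : ∀ x, |F1 x| ≤ C ^ F.edgeFinset.card := fun x =>
    abs_integral_le_bound (fun a => hfb _)
  have h2 : ∫ x, F1 x ∂(Measure.pi fun _ : Fin k => muI)
      = ∫ x, (∫ b, F1 (Function.update x v b) ∂muI) ∂(Measure.pi fun _ : Fin k => muI) :=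
    integral_update v hF1m hF1b
  -- edge decomposition
  set E' : Finset (Sym2 (Fin k)) := F.edgeFinset.erase s(u, v) with hE'
  set Au : Finset (Sym2 (Fin k)) := E'.filter (fun e' => u ∈ e') with hAu
  set R : Finset (Sym2 (Fin k)) := E'.filter (fun e' => ¬ u ∈ e') with hR
  set Av : Finset (Sym2 (Fin k)) := R.filter (fun e' => v ∈ e') with hAv
  set D : Finset (Sym2 (Fin k)) := R.filter (fun e' => ¬ v ∈ e') with hD
  have hcard : Av.card + (Au.card + D.card) = F.edgeFinset.card - 1 := by
    have c1 : Au.card + R.card = E'.card := by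
      rw [hAu, hR]; exact Finset.card_filter_add_card_filter_not _
    have c2 : Av.card + D.card = R.card := by
      rw [hAv, hD]; exact Finset.card_filter_add_card_filter_not _
    have c3 : E'.card = F.edgeFinset.card - 1 := by
      rw [hE']; exact Finset.card_erase_of_mem he
    omega
  -- pointwise evaluation of the integrand
  have heval : ∀ (x : Fin k → ℝ) (a b : ℝ),
      f (Function.update (Function.update x v b) u a)
        = W b a * (∏ e' ∈ Av, L (Function.update x v b) e')
            * ((∏ e' ∈ Au, L (Function.update x u a) e') * ∏ e' ∈ D, L x e') := by
    intro x a b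
    have hy : Function.update (Function.update x v b) u a
        = Function.update (Function.update x u a) v b :=
      Function.update_comm (Ne.symm hne) b a x
    have hyu : Function.update (Function.update x v b) u a u = a := by simp
    have hyv : Function.update (Function.update x v b) u a v = b := by
      rw [Function.update_of_ne (Ne.symm hne), Function.update_self]
    have hsplitE : f (Function.update (Function.update x v b) u a)
        = L (Function.update (Function.update x v b) u a) s(u, v)
          * ∏ e' ∈ E', L (Function.update (Function.update x v b) u a) e' := by
      simp only [hfdef, hE']
      exact (Finset.mul_prod_erase _ _ he).symm
    have hsplit2 : ∏ e' ∈ E', L (Function.update (Function.update x v b) u a) e'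
        = (∏ e' ∈ Au, L (Function.update (Function.update x v b) u a) e')
          * ((∏ e' ∈ Av, L (Function.update (Function.update x v b) u a) e')
            * ∏ e' ∈ D, L (Function.update (Function.update x v b) u a) e') := by
      rw [hAu, hAv, hD, hR]
      rw [← Finset.prod_filter_mul_prod_filter_not E' (fun e' => u ∈ e')]
      congr 1
      rw [← Finset.prod_filter_mul_prod_filter_not (E'.filter (fun e' => ¬ u ∈ e'))
        (fun e' => v ∈ e')]
    have hAu_eval : ∀ e' ∈ Au, L (Function.update (Function.update x v b) u a) e'
        = L (Function.update x u a) e' := by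
      intro e' he'
      have hu' : u ∈ e' := (Finset.mem_filter.mp he').2
      have hv' : v ∉ e' := by
        intro hv'
        have he'' : e' = s(u, v) := (Sym2.mem_and_mem_iff hne).mp ⟨hu', hv'⟩
        exact Finset.ne_of_mem_erase (Finset.mem_filter.mp he').1 he''
      rw [hy]
      exact hLind e' v hv' _ b
    have hAv_eval : ∀ e' ∈ Av, L (Function.update (Function.update x v b) u a) e'
        = L (Function.update x v b) e' := by
      intro e' he'
      have hu' : u ∉ e' := (Finset.mem_filter.mp (Finset.mem_filter.mp he').1).2
      exact hLind e' u hu' _ a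
    have hD_eval : ∀ e' ∈ D, L (Function.update (Function.update x v b) u a) e'
        = L x e' := by
      intro e' he'
      have hu' : u ∉ e' := (Finset.mem_filter.mp (Finset.mem_filter.mp he').1).2
      have hv' : v ∉ e' := (Finset.mem_filter.mp he').2
      calc L (Function.update (Function.update x v b) u a) e'
          = L (Function.update x v b) e' := hLind e' u hu' _ a
        _ = L x e' := hLind e' v hv' x b
    have hLe : L (Function.update (Function.update x v b) u a) s(u, v) = W a b := by
      simp only [hLdef, Sym2.lift_mk]
      rw [hyu, hyv]
    rw [hsplitE, hsplit2, hLe,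
      Finset.prod_congr rfl hAu_eval, Finset.prod_congr rfl hAv_eval,
      Finset.prod_congr rfl hD_eval, hsymm a b]
    ring
  -- the inner bilinear bound, for each fixed x
  have hinner : ∀ x : Fin k → ℝ,
      |∫ b, (∫ a, f (Function.update (Function.update x v b) u a) ∂muI) ∂muI|
        ≤ 4 * C ^ (F.edgeFinset.card - 1) * cutNorm W := by
    intro x
    have hQm : Measurable fun b => ∏ e' ∈ Av, L (Function.update x v b) e' :=
      Finset.measurable_prod _ fun e' _ => (hLm e').comp (measurable_update x)
    have hPm : Measurable fun a =>
        (∏ e' ∈ Au, L (Function.update x u a) e') * ∏ e' ∈ D, L x e' :=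
      (Finset.measurable_prod _ fun e' _ => (hLm e').comp (measurable_update x)).mul
        measurable_const
    have hQb : ∀ b, |∏ e' ∈ Av, L (Function.update x v b) e'| ≤ C ^ Av.card :=
      fun b => hprodb Av _
    have hPb : ∀ a, |(∏ e' ∈ Au, L (Function.update x u a) e') * ∏ e' ∈ D, L x e'|
        ≤ C ^ (Au.card + D.card) := by
      intro a
      rw [abs_mul, pow_add]
      exact mul_le_mul (hprodb Au _) (hprodb D x) (abs_nonneg _) (pow_nonneg hC0 _)
    have hbil := bilin hmeas hb hQm hPm hQb hPb
    rw [← hmuI] at hbil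
    have hrw : (∫ b, (∫ a, f (Function.update (Function.update x v b) u a) ∂muI) ∂muI)
        = ∫ b, (∫ a, W b a * (∏ e' ∈ Av, L (Function.update x v b) e')
            * ((∏ e' ∈ Au, L (Function.update x u a) e') * ∏ e' ∈ D, L x e') ∂muI) ∂muI := by
      congr 1
      funext b
      congr 1
      funext a
      exact heval x a b
    rw [hrw]
    have hpow : C ^ Av.card * C ^ (Au.card + D.card) = C ^ (F.edgeFinset.card - 1) := by
      rw [← pow_add, hcard]
    have heq : 4 * C ^ Av.card * C ^ (Au.card + D.card) * cutNorm W
        = 4 * C ^ (F.edgeFinset.card - 1) * cutNorm W := by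
      rw [← hpow]; ring
    exact hbil.trans (le_of_eq heq)
  -- put everything together
  rw [hhd, h1, h2]
  exact abs_integral_le_bound (fun x => hinner x)
end

section
/- Let W be a graphon and P a finite measurable partition of [0,1] into sets of positive measure. Then ‖W − W_P‖_□ ≤ 2 · min over step functions U with steps P of ‖W − U‖_□. -/
open MeasureTheory
open Finset



lemma sum_mul_le_filter {ι : Type*} [Fintype ι] (α h : ι → ℝ)
    (h0 : ∀ i, 0 ≤ α i) (h1 : ∀ i, α i ≤ 1) :
    ∑ i, α i * h i ≤ ∑ i ∈ Finset.univ.filter (fun i => 0 ≤ h i), h i := by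
  rw [Finset.sum_filter]
  apply Finset.sum_le_sum
  intro i _
  by_cases hh : 0 ≤ h i
  · simp only [hh, if_true]; nlinarith [h0 i, h1 i]
  · simp only [hh, if_false]; nlinarith [h0 i, not_le.mp hh]

lemma bilinear_upper {ι : Type*} [Fintype ι] (A : ι → ι → ℝ) (α β : ι → ℝ)
    (hα0 : ∀ i, 0 ≤ α i) (hα1 : ∀ i, α i ≤ 1)
    (hβ0 : ∀ j, 0 ≤ β j) (hβ1 : ∀ j, β j ≤ 1) :
    ∃ I J : Finset ι, ∑ i, ∑ j, α i * β j * A i j ≤ ∑ i ∈ I, ∑ j ∈ J, A i j := by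
  have key : ∑ i, ∑ j, α i * β j * A i j = ∑ i, α i * ∑ j, β j * A i j := by
    refine Finset.sum_congr rfl fun i _ => ?_
    rw [Finset.mul_sum]; exact Finset.sum_congr rfl fun j _ => by ring
  set I := Finset.univ.filter (fun i => 0 ≤ ∑ j, β j * A i j) with hI
  have h1 : ∑ i, α i * ∑ j, β j * A i j ≤ ∑ i ∈ I, ∑ j, β j * A i j :=
    sum_mul_le_filter _ _ hα0 hα1
  have h2 : ∑ i ∈ I, ∑ j, β j * A i j = ∑ j, β j * ∑ i ∈ I, A i j := by
    rw [Finset.sum_comm]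
    exact Finset.sum_congr rfl fun j _ => (Finset.mul_sum _ _ _).symm
  set J := Finset.univ.filter (fun j => 0 ≤ ∑ i ∈ I, A i j) with hJ
  have h3 : ∑ j, β j * ∑ i ∈ I, A i j ≤ ∑ j ∈ J, ∑ i ∈ I, A i j :=
    sum_mul_le_filter _ _ hβ0 hβ1
  refine ⟨I, J, ?_⟩
  have h4 : ∑ j ∈ J, ∑ i ∈ I, A i j = ∑ i ∈ I, ∑ j ∈ J, A i j := Finset.sum_comm
  rw [key]; linarith

lemma bilinear_vertex {ι : Type*} [Fintype ι] (A : ι → ι → ℝ) (α β : ι → ℝ)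
    (hα0 : ∀ i, 0 ≤ α i) (hα1 : ∀ i, α i ≤ 1)
    (hβ0 : ∀ j, 0 ≤ β j) (hβ1 : ∀ j, β j ≤ 1) :
    ∃ I J : Finset ι, |∑ i, ∑ j, α i * β j * A i j| ≤ |∑ i ∈ I, ∑ j ∈ J, A i j| := by
  rcases le_or_gt 0 (∑ i, ∑ j, α i * β j * A i j) with h | h
  · obtain ⟨I, J, hIJ⟩ := bilinear_upper A α β hα0 hα1 hβ0 hβ1
    exact ⟨I, J, (abs_of_nonneg h).le.trans (hIJ.trans (le_abs_self _))⟩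
  · obtain ⟨I, J, hIJ⟩ := bilinear_upper (fun i j => -(A i j)) α β hα0 hα1 hβ0 hβ1
    refine ⟨I, J, ?_⟩
    have e1 : ∑ i, ∑ j, α i * β j * -(A i j) = -∑ i, ∑ j, α i * β j * A i j := by
      simp [Finset.sum_neg_distrib, mul_neg]
    have e2 : ∑ i ∈ I, ∑ j ∈ J, -(A i j) = -∑ i ∈ I, ∑ j ∈ J, A i j := by
      simp [Finset.sum_neg_distrib]
    rw [e1, e2] at hIJ
    calc |∑ i, ∑ j, α i * β j * A i j| = -(∑ i, ∑ j, α i * β j * A i j) := abs_of_neg h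
      _ ≤ -∑ i ∈ I, ∑ j ∈ J, A i j := hIJ
      _ ≤ |∑ i ∈ I, ∑ j ∈ J, A i j| := neg_le_abs _

-- iterated integral bound for bounded measurable kernels on subsets of [0,1]
lemma iint_bound {f : ℝ → ℝ → ℝ} (hf : Measurable (Function.uncurry f)) {M : ℝ}
    (hb : ∀ x y, |f x y| ≤ M) {S T : Set ℝ}
    (hS : S ⊆ Set.Icc 0 1) (hT : T ⊆ Set.Icc 0 1) :
    |∫ x in S, ∫ y in T, f x y| ≤ M := by
  have hM : 0 ≤ M := (abs_nonneg _).trans (hb 0 0)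
  have hSv : volume S ≤ 1 := by
    calc volume S ≤ volume (Set.Icc (0:ℝ) 1) := measure_mono hS
    _ = 1 := by simp
  have hTv : volume T ≤ 1 := by
    calc volume T ≤ volume (Set.Icc (0:ℝ) 1) := measure_mono hT
    _ = 1 := by simp
  have hSlt : volume S < ⊤ := lt_of_le_of_lt hSv (by norm_num)
  have hTlt : volume T < ⊤ := lt_of_le_of_lt hTv (by norm_num)
  have inner_bd : ∀ x, |∫ y in T, f x y| ≤ M := by
    intro x
    have := norm_setIntegral_le_of_norm_le_const (f := fun y => f x y) (C := M) hTlt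
      (fun y _ => hb x y)
    calc |∫ y in T, f x y| ≤ M * (volume T).toReal := this
      _ ≤ M * 1 := by
          apply mul_le_mul_of_nonneg_left _ hM
          exact ENNReal.toReal_le_of_le_ofReal (by norm_num) (by simpa using hTv)
      _ = M := mul_one M
  have outer_meas : AEStronglyMeasurable (fun x => ∫ y in T, f x y) (volume.restrict S) :=
    (hf.stronglyMeasurable.integral_prod_right).aestronglyMeasurable
  have := norm_setIntegral_le_of_norm_le_const (f := fun x => ∫ y in T, f x y) (C := M) hSlt
      (fun x _ => inner_bd x)
  calc |∫ x in S, ∫ y in T, f x y| ≤ M * (volume S).toReal := this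
    _ ≤ M * 1 := by
        apply mul_le_mul_of_nonneg_left _ hM
        exact ENNReal.toReal_le_of_le_ofReal (by norm_num) (by simpa using hSv)
    _ = M := mul_one M


noncomputable def ind (s : Set ℝ) (x : ℝ) : ℝ := Set.indicator s (fun _ => (1:ℝ)) x

lemma ind_nonneg (s : Set ℝ) (x : ℝ) : 0 ≤ ind s x := by
  unfold ind; by_cases h : x ∈ s <;> simp [h]

lemma ind_le_one (s : Set ℝ) (x : ℝ) : ind s x ≤ 1 := by
  unfold ind; by_cases h : x ∈ s <;> simp [h]

lemma abs_ind_le_one (s : Set ℝ) (x : ℝ) : |ind s x| ≤ 1 := by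
  rw [abs_of_nonneg (ind_nonneg s x)]; exact ind_le_one s x

lemma ind_measurable {s : Set ℝ} (hs : MeasurableSet s) : Measurable (ind s) :=
  measurable_const.indicator hs

lemma integral_ind {s T : Set ℝ} (hs : MeasurableSet s) :
    ∫ y in T, ind s y = (volume (T ∩ s)).toReal := by
  unfold ind
  rw [setIntegral_indicator hs, setIntegral_const]
  simp
  rfl

-- integral over S×T of a single indicator-product term
lemma iint_term {Vi Vj : Set ℝ} (hVi : MeasurableSet Vi) (hVj : MeasurableSet Vj)
    (S T : Set ℝ) (k : ℝ) :
    ∫ x in S, ∫ y in T, ind Vi x * ind Vj y * k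
      = (volume (S ∩ Vi)).toReal * ((volume (T ∩ Vj)).toReal * k) := by
  have inner : ∀ x, ∫ y in T, ind Vi x * ind Vj y * k
      = ind Vi x * ((volume (T ∩ Vj)).toReal * k) := by
    intro x
    have rearr : ∀ y, ind Vi x * ind Vj y * k = (ind Vi x * k) * ind Vj y := fun y => by ring
    simp_rw [rearr]
    rw [MeasureTheory.integral_const_mul, integral_ind hVj]
    ring
  simp_rw [inner]
  rw [MeasureTheory.integral_mul_const, integral_ind hVi]

lemma intOn {g : ℝ → ℝ} {s : Set ℝ} (hg : AEStronglyMeasurable g (volume.restrict s))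
    {M : ℝ} (hb : ∀ x, |g x| ≤ M) (hμ : volume s < ⊤) : IntegrableOn g s :=
  ⟨hg, HasFiniteIntegral.restrict_of_bounded (C := M) hμ (Filter.Eventually.of_forall hb)⟩

lemma abs_mul_ind_le (a c : ℝ) (s : Set ℝ) (y : ℝ) : |a * ind s y * c| ≤ |a * c| := by
  rw [abs_mul, abs_mul, abs_mul]
  calc |a| * |ind s y| * |c| ≤ |a| * 1 * |c| := by gcongr; exact abs_ind_le_one s y
    _ = |a| * |c| := by ring

lemma iint_sum {ι : Type*} [Fintype ι] {V : ι → Set ℝ} (hV : ∀ i, MeasurableSet (V i))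
    {S T : Set ℝ} (hSv : volume S < ⊤) (hTv : volume T < ⊤) (k : ι → ι → ℝ) :
    ∫ x in S, ∫ y in T, (∑ i, ∑ j, ind (V i) x * ind (V j) y * k i j)
      = ∑ i, ∑ j, (volume (S ∩ V i)).toReal * ((volume (T ∩ V j)).toReal * k i j) := by
  have hint : ∀ (i j : ι) (x : ℝ), IntegrableOn (fun y => ind (V i) x * ind (V j) y * k i j) T := by
    intro i j x
    refine intOn ?_ (fun y => abs_mul_ind_le _ _ _ y) hTv
    exact (((ind_measurable (hV j)).const_mul _).mul_const _).aestronglyMeasurable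
  have inner : ∀ x, (∫ y in T, ∑ i, ∑ j, ind (V i) x * ind (V j) y * k i j)
      = ∑ i, ∑ j, ind (V i) x * ((volume (T ∩ V j)).toReal * k i j) := by
    intro x
    rw [integral_finset_sum _ (fun i _ => integrable_finset_sum _ (fun j _ => hint i j x))]
    refine Finset.sum_congr rfl fun i _ => ?_
    rw [integral_finset_sum _ (fun j _ => hint i j x)]
    refine Finset.sum_congr rfl fun j _ => ?_
    have rearr : ∀ y, ind (V i) x * ind (V j) y * k i j = (ind (V i) x * k i j) * ind (V j) y :=
      fun y => by ring
    simp_rw [rearr]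
    rw [MeasureTheory.integral_const_mul, integral_ind (hV j)]
    ring
  simp_rw [inner]
  have hint2 : ∀ (i j : ι), IntegrableOn
      (fun x => ind (V i) x * ((volume (T ∩ V j)).toReal * k i j)) S := by
    intro i j
    refine intOn ((ind_measurable (hV i)).mul_const _).aestronglyMeasurable
      (M := |(volume (T ∩ V j)).toReal * k i j|) (fun x => ?_) hSv
    have := abs_mul_ind_le 1 ((volume (T ∩ V j)).toReal * k i j) (V i) x
    simpa using this
  rw [integral_finset_sum _ (fun i _ => integrable_finset_sum _ (fun j _ => hint2 i j))]
  refine Finset.sum_congr rfl fun i _ => ?_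
  rw [integral_finset_sum _ (fun j _ => hint2 i j)]
  refine Finset.sum_congr rfl fun j _ => ?_
  rw [MeasureTheory.integral_mul_const, integral_ind (hV i)]

lemma iint_biUnion {ι : Type*} [Fintype ι] {V : ι → Set ℝ} (hV : ∀ i, MeasurableSet (V i))
    (hdisj : Pairwise (fun i j => Disjoint (V i) (V j))) (hfin : ∀ i, volume (V i) < ⊤)
    {D : ℝ → ℝ → ℝ} (hD : Measurable (Function.uncurry D)) {M : ℝ}
    (hb : ∀ x y, |D x y| ≤ M) (I J : Finset ι) :
    ∫ x in ⋃ i ∈ I, V i, ∫ y in ⋃ j ∈ J, V j, D x y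
      = ∑ i ∈ I, ∑ j ∈ J, ∫ x in V i, ∫ y in V j, D x y := by
  have hdisj' : Pairwise (Function.onFun Disjoint V) := hdisj
  have inner : ∀ x, (∫ y in ⋃ j ∈ J, V j, D x y) = ∑ j ∈ J, ∫ y in V j, D x y := by
    intro x
    exact integral_biUnion_finset J (fun j _ => hV j) (hdisj'.set_pairwise _)
      (fun j _ => intOn (hD.of_uncurry_left).aestronglyMeasurable (hb x) (hfin j))
  simp_rw [inner]
  have hintF : ∀ (j : ι) (s : Set ℝ), volume s < ⊤ →
      IntegrableOn (fun x => ∫ y in V j, D x y) s := by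
    intro j s hs
    refine intOn (hD.stronglyMeasurable.integral_prod_right).aestronglyMeasurable
      (M := M * (volume (V j)).toReal) (fun x => ?_) hs
    exact norm_setIntegral_le_of_norm_le_const (f := fun y => D x y) (hfin j) (fun y _ => hb x y)
  rw [integral_biUnion_finset I (fun i _ => hV i) (hdisj'.set_pairwise _)
    (fun i _ => integrable_finset_sum _ (fun j _ => hintF j (V i) (hfin i)))]
  exact Finset.sum_congr rfl fun i _ =>
    integral_finset_sum _ (fun j _ => hintF j (V i) (hfin i))

lemma stepfn_measurable {ι : Type*} [Fintype ι] {V : ι → Set ℝ} (hV : ∀ i, MeasurableSet (V i))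
    (c : ι → ι → ℝ) :
    Measurable (Function.uncurry (fun x y => ∑ i, ∑ j, ind (V i) x * ind (V j) y * c i j)) := by
  apply Finset.measurable_sum
  intro i _
  apply Finset.measurable_sum
  intro j _
  exact (((ind_measurable (hV i)).comp measurable_fst).mul
    ((ind_measurable (hV j)).comp measurable_snd)).mul_const _

lemma stepfn_bound {ι : Type*} [Fintype ι] (V : ι → Set ℝ) (c : ι → ι → ℝ) (x y : ℝ) :
    |∑ i, ∑ j, ind (V i) x * ind (V j) y * c i j| ≤ ∑ i, ∑ j, |c i j| := by
  calc |∑ i, ∑ j, ind (V i) x * ind (V j) y * c i j|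
      ≤ ∑ i, |∑ j, ind (V i) x * ind (V j) y * c i j| := Finset.abs_sum_le_sum_abs _ _
    _ ≤ ∑ i, ∑ j, |c i j| := by
        apply Finset.sum_le_sum; intro i _
        calc |∑ j, ind (V i) x * ind (V j) y * c i j|
            ≤ ∑ j, |ind (V i) x * ind (V j) y * c i j| := Finset.abs_sum_le_sum_abs _ _
          _ ≤ ∑ j, |c i j| := by
              apply Finset.sum_le_sum; intro j _
              calc |ind (V i) x * ind (V j) y * c i j| ≤ |ind (V i) x * c i j| :=
                    abs_mul_ind_le _ _ _ _
                _ = |ind (V i) x| * |c i j| := abs_mul _ _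
                _ ≤ 1 * |c i j| := by gcongr; exact abs_ind_le_one _ _
                _ = |c i j| := one_mul _

lemma stepfn_val {ι : Type*} [Fintype ι] {V : ι → Set ℝ}
    (hdisj : Pairwise (fun i j => Disjoint (V i) (V j))) (c : ι → ι → ℝ)
    {i j : ι} {x y : ℝ} (hx : x ∈ V i) (hy : y ∈ V j) :
    (∑ i', ∑ j', ind (V i') x * ind (V j') y * c i' j') = c i j := by
  have hxz : ∀ i', i' ≠ i → ind (V i') x = 0 := by
    intro i' h
    exact Set.indicator_of_notMem (Set.disjoint_left.mp (hdisj h) · hx) _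
  have hyz : ∀ j', j' ≠ j → ind (V j') y = 0 := by
    intro j' h
    exact Set.indicator_of_notMem (Set.disjoint_left.mp (hdisj h) · hy) _
  rw [Finset.sum_eq_single_of_mem i (Finset.mem_univ i)
    (fun i' _ h => by simp [hxz i' h])]
  rw [Finset.sum_eq_single_of_mem j (Finset.mem_univ j)
    (fun j' _ h => by simp [hyz j' h])]
  have : ind (V i) x = 1 := Set.indicator_of_mem hx _
  have h2 : ind (V j) y = 1 := Set.indicator_of_mem hy _
  rw [this, h2]; ring

lemma intF {D : ℝ → ℝ → ℝ} (hD : Measurable (Function.uncurry D)) {M : ℝ}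
    (hb : ∀ x y, |D x y| ≤ M) {T s : Set ℝ} (hT : volume T < ⊤) (hs : volume s < ⊤) :
    IntegrableOn (fun x => ∫ y in T, D x y) s := by
  refine intOn (hD.stronglyMeasurable.integral_prod_right).aestronglyMeasurable
    (M := M * (volume T).toReal) (fun x => ?_) hs
  exact norm_setIntegral_le_of_norm_le_const (f := fun y => D x y) hT (fun y _ => hb x y)


/-- `V : ι → Set ℝ` is a measurable partition of `[0,1]`. -/
def IsPartition {ι : Type*} (V : ι → Set ℝ) : Prop :=
  (∀ i, MeasurableSet (V i)) ∧ Pairwise (fun i j => Disjoint (V i) (V j)) ∧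
    (⋃ i, V i) = Set.Icc (0:ℝ) 1

/-- The stepping `W_P` of a kernel `W` on a finite partition `V`. -/
noncomputable def stepW {ι : Type*} [Fintype ι] (V : ι → Set ℝ) (W : ℝ → ℝ → ℝ)
    (x y : ℝ) : ℝ :=
  ∑ i, ∑ j,
    Set.indicator (V i) (fun _ => (1:ℝ)) x * Set.indicator (V j) (fun _ => (1:ℝ)) y *
      ((∫ u in V i, ∫ v in V j, W u v) /
        (MeasureTheory.volume (V i)).toReal / (MeasureTheory.volume (V j)).toReal)

/-- `U` is a (symmetric) step function with steps `V`. -/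
def IsStepFn {ι : Type*} (V : ι → Set ℝ) (U : ℝ → ℝ → ℝ) : Prop :=
  (∀ x y, U x y = U y x) ∧
    ∃ c : ι → ι → ℝ, ∀ i j, ∀ x ∈ V i, ∀ y ∈ V j, U x y = c i j

/-- `‖W − W_P‖_□ ≤ 2 ‖W − U‖_□` for every step function `U` with steps `P`;
i.e. `W_P` approximates `W` in the cut norm within a factor two of the best
step-function approximation. -/
theorem stepping_two_approximation {ι : Type*} [Fintype ι] (W : ℝ → ℝ → ℝ)
    (hmeas : Measurable (Function.uncurry W)) (hsymm : ∀ x y, W x y = W y x)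
    (hbdd : ∃ C : ℝ, ∀ x y, |W x y| ≤ C)
    (V : ι → Set ℝ) (hP : IsPartition V)
    (hpos : ∀ i, 0 < MeasureTheory.volume (V i)) :
    ∀ U : ℝ → ℝ → ℝ, IsStepFn V U →
      cutNorm (fun x y => W x y - stepW V W x y) ≤
        2 * cutNorm (fun x y => W x y - U x y) := by
  obtain ⟨hV, hdisj, hcover⟩ := hP
  obtain ⟨C, hC⟩ := hbdd
  intro U hU
  obtain ⟨-, c, hc⟩ := hU
  -- basic facts about the partition
  have hsub : ∀ i, V i ⊆ Set.Icc (0:ℝ) 1 := fun i => hcover ▸ Set.subset_iUnion V i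
  have hfin : ∀ i, volume (V i) < ⊤ := by
    intro i
    calc volume (V i) ≤ volume (Set.Icc (0:ℝ) 1) := measure_mono (hsub i)
      _ = 1 := by simp
      _ < ⊤ := by norm_num
  have hvpos : ∀ i, 0 < (volume (V i)).toReal :=
    fun i => ENNReal.toReal_pos (hpos i).ne' (hfin i).ne
  have hfinsub : ∀ {s : Set ℝ}, s ⊆ Set.Icc (0:ℝ) 1 → volume s < ⊤ := by
    intro s hs
    calc volume s ≤ volume (Set.Icc (0:ℝ) 1) := measure_mono hs
      _ = 1 := by simp
      _ < ⊤ := by norm_num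
  -- the canonical step function and the difference kernel
  set Ut : ℝ → ℝ → ℝ := fun x y => ∑ i, ∑ j, ind (V i) x * ind (V j) y * c i j with hUt
  set B := ∑ i : ι, ∑ j : ι, |c i j| with hB
  have hUt_meas : Measurable (Function.uncurry Ut) := stepfn_measurable hV c
  have hUt_bd : ∀ x y, |Ut x y| ≤ B := fun x y => stepfn_bound V c x y
  set D : ℝ → ℝ → ℝ := fun x y => W x y - Ut x y with hD
  have hD_meas : Measurable (Function.uncurry D) := by
    have : Function.uncurry D = fun p => Function.uncurry W p - Function.uncurry Ut p := rfl
    rw [this]; exact hmeas.sub hUt_meas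
  have hD_bd : ∀ x y, |D x y| ≤ C + B := by
    intro x y
    calc |D x y| ≤ |W x y| + |Ut x y| := abs_sub _ _
      _ ≤ C + B := add_le_add (hC x y) (hUt_bd x y)
  -- the averages of D
  set A : ι → ι → ℝ := fun i j => ∫ u in V i, ∫ v in V j, D u v with hA
  set k : ι → ι → ℝ := fun i j => A i j / (volume (V i)).toReal / (volume (V j)).toReal with hk
  -- key pointwise identity : stepW V W = Ut + stepW V D
  have hIntU : ∀ i j, (∫ u in V i, ∫ v in V j, Ut u v)
      = c i j * (volume (V i)).toReal * (volume (V j)).toReal := by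
    intro i j
    have inner : ∀ u ∈ V i, (∫ v in V j, Ut u v) = (volume (V j)).toReal * c i j := by
      intro u hu
      rw [setIntegral_congr_fun (hV j) (g := fun _ => c i j)
        (fun v hv => stepfn_val hdisj c hu hv)]
      rw [setIntegral_const]; simp [Measure.real]
    rw [setIntegral_congr_fun (hV i) (g := fun _ => (volume (V j)).toReal * c i j) inner]
    rw [setIntegral_const]; simp [Measure.real]; ring
  have hIntW : ∀ i j, (∫ u in V i, ∫ v in V j, W u v)
      = c i j * (volume (V i)).toReal * (volume (V j)).toReal + A i j := by
    intro i j
    have hWsplit : ∀ u, (fun v => W u v) = fun v => Ut u v + D u v := by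
      intro u; funext v; simp [hD]
    have inner : ∀ u, (∫ v in V j, W u v) = (∫ v in V j, Ut u v) + ∫ v in V j, D u v := by
      intro u
      rw [hWsplit u]
      exact integral_add
        (intOn (hUt_meas.of_uncurry_left).aestronglyMeasurable (hUt_bd u) (hfin j))
        (intOn (hD_meas.of_uncurry_left).aestronglyMeasurable (hD_bd u) (hfin j))
    simp_rw [inner]
    rw [integral_add (intF hUt_meas hUt_bd (hfin j) (hfin i))
      (intF hD_meas hD_bd (hfin j) (hfin i)), hIntU i j]
  have SW : ∀ x y, stepW V W x y = Ut x y + stepW V D x y := by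
    intro x y
    unfold stepW
    have : ∀ i j, ind (V i) x * ind (V j) y *
        ((∫ u in V i, ∫ v in V j, W u v) / (volume (V i)).toReal / (volume (V j)).toReal)
        = ind (V i) x * ind (V j) y * c i j + ind (V i) x * ind (V j) y *
          ((∫ u in V i, ∫ v in V j, D u v) / (volume (V i)).toReal / (volume (V j)).toReal) := by
      intro i j
      rw [hIntW i j]
      have h1 : (volume (V i)).toReal ≠ 0 := (hvpos i).ne'
      have h2 : (volume (V j)).toReal ≠ 0 := (hvpos j).ne'
      field_simp
      ring
    simp_rw [show ∀ (s : Set ℝ) (x : ℝ), Set.indicator s (fun _ => (1:ℝ)) x = ind s x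
      from fun _ _ => rfl]
    simp_rw [this, Finset.sum_add_distrib]
    rfl
  -- the two cut-norm sets coincide for W - U and W - Ut
  set setD := {r : ℝ | ∃ S T : Set ℝ, MeasurableSet S ∧ MeasurableSet T ∧
    S ⊆ Set.Icc 0 1 ∧ T ⊆ Set.Icc 0 1 ∧ r = |∫ x in S, ∫ y in T, D x y|} with hsetD
  have hUeq : ∀ x ∈ Set.Icc (0:ℝ) 1, ∀ y ∈ Set.Icc (0:ℝ) 1, U x y = Ut x y := by
    intro x hx y hy
    rw [← hcover] at hx hy
    obtain ⟨i, hi⟩ := Set.mem_iUnion.mp hx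
    obtain ⟨j, hj⟩ := Set.mem_iUnion.mp hy
    rw [hc i j x hi y hj]
    exact (stepfn_val hdisj c hi hj).symm
  have hcutEq : cutNorm (fun x y => W x y - U x y) = sSup setD := by
    unfold cutNorm
    congr 1
    ext r
    constructor
    · rintro ⟨S, T, hSm, hTm, hS, hT, hr⟩
      refine ⟨S, T, hSm, hTm, hS, hT, ?_⟩
      rw [hr]
      congr 1
      refine setIntegral_congr_fun hSm fun x hx => ?_
      refine setIntegral_congr_fun hTm fun y hy => ?_
      simp only [hD, hUeq x (hS hx) y (hT hy)]
    · rintro ⟨S, T, hSm, hTm, hS, hT, hr⟩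
      refine ⟨S, T, hSm, hTm, hS, hT, ?_⟩
      rw [hr]
      congr 1
      refine setIntegral_congr_fun hSm fun x hx => ?_
      refine setIntegral_congr_fun hTm fun y hy => ?_
      simp only [hD, hUeq x (hS hx) y (hT hy)]
  have hbddD : BddAbove setD := by
    refine ⟨C + B, ?_⟩
    rintro r ⟨S, T, hSm, hTm, hS, hT, hr⟩
    rw [hr]
    exact iint_bound hD_meas hD_bd hS hT
  have hzeroD : (0:ℝ) ∈ setD :=
    ⟨∅, ∅, MeasurableSet.empty, MeasurableSet.empty, Set.empty_subset _, Set.empty_subset _,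
      by simp⟩
  have hDnn : 0 ≤ sSup setD := le_csSup hbddD hzeroD
  rw [hcutEq]
  -- bound every element of the LHS set
  apply Real.sSup_le _ (by linarith)
  rintro r ⟨S, T, hSm, hTm, hS, hT, hr⟩
  have hSv : volume S < ⊤ := hfinsub hS
  have hTv : volume T < ⊤ := hfinsub hT
  -- the step kernel of D, as an explicit step function
  have hstep_eq : ∀ x y, stepW V D x y = ∑ i, ∑ j, ind (V i) x * ind (V j) y * k i j := by
    intro x y; rfl
  have hstep_meas : Measurable (Function.uncurry (stepW V D)) := by
    have : Function.uncurry (stepW V D)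
        = Function.uncurry (fun x y => ∑ i, ∑ j, ind (V i) x * ind (V j) y * k i j) := by
      funext p; exact hstep_eq p.1 p.2
    rw [this]; exact stepfn_measurable hV k
  set B2 := ∑ i : ι, ∑ j : ι, |k i j| with hB2
  have hstep_bd : ∀ x y, |stepW V D x y| ≤ B2 := by
    intro x y; rw [hstep_eq]; exact stepfn_bound V k x y
  -- split the integral
  have hmain : ∀ x y, W x y - stepW V W x y = D x y - stepW V D x y := by
    intro x y; rw [SW]; simp [hD]; ring
  have hsplit : (∫ x in S, ∫ y in T, (W x y - stepW V W x y))
      = (∫ x in S, ∫ y in T, D x y) - ∫ x in S, ∫ y in T, stepW V D x y := by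
    simp_rw [hmain]
    have inner : ∀ x, (∫ y in T, (D x y - stepW V D x y))
        = (∫ y in T, D x y) - ∫ y in T, stepW V D x y := by
      intro x
      exact integral_sub
        (intOn (hD_meas.of_uncurry_left).aestronglyMeasurable (hD_bd x) hTv)
        (intOn (hstep_meas.of_uncurry_left).aestronglyMeasurable (hstep_bd x) hTv)
    simp_rw [inner]
    exact integral_sub (intF hD_meas hD_bd hTv hSv) (intF hstep_meas hstep_bd hTv hSv)
  -- bound |∫∫ D| by sSup setD
  have h1 : |∫ x in S, ∫ y in T, D x y| ≤ sSup setD :=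
    le_csSup hbddD ⟨S, T, hSm, hTm, hS, hT, rfl⟩
  -- bound |∫∫ stepW V D| by sSup setD via the vertex argument
  have h2 : |∫ x in S, ∫ y in T, stepW V D x y| ≤ sSup setD := by
    have hcomp : (∫ x in S, ∫ y in T, stepW V D x y)
        = ∑ i, ∑ j, (volume (S ∩ V i)).toReal / (volume (V i)).toReal *
            ((volume (T ∩ V j)).toReal / (volume (V j)).toReal) * A i j := by
      simp_rw [hstep_eq]
      rw [iint_sum hV hSv hTv]
      refine Finset.sum_congr rfl fun i _ => Finset.sum_congr rfl fun j _ => ?_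
      have h1' : (volume (V i)).toReal ≠ 0 := (hvpos i).ne'
      have h2' : (volume (V j)).toReal ≠ 0 := (hvpos j).ne'
      simp only [hk]
      field_simp
    set α : ι → ℝ := fun i => (volume (S ∩ V i)).toReal / (volume (V i)).toReal with hα
    set β : ι → ℝ := fun j => (volume (T ∩ V j)).toReal / (volume (V j)).toReal with hβ
    have hα0 : ∀ i, 0 ≤ α i := fun i => div_nonneg ENNReal.toReal_nonneg ENNReal.toReal_nonneg
    have hα1 : ∀ i, α i ≤ 1 := by
      intro i
      rw [hα]
      apply div_le_one_of_le₀
      · exact ENNReal.toReal_mono (hfin i).ne (measure_mono Set.inter_subset_right)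
      · exact ENNReal.toReal_nonneg
    have hβ0 : ∀ j, 0 ≤ β j := fun j => div_nonneg ENNReal.toReal_nonneg ENNReal.toReal_nonneg
    have hβ1 : ∀ j, β j ≤ 1 := by
      intro j
      rw [hβ]
      apply div_le_one_of_le₀
      · exact ENNReal.toReal_mono (hfin j).ne (measure_mono Set.inter_subset_right)
      · exact ENNReal.toReal_nonneg
    obtain ⟨I, J, hIJ⟩ := bilinear_vertex A α β hα0 hα1 hβ0 hβ1
    have hbiU : (∫ x in ⋃ i ∈ I, V i, ∫ y in ⋃ j ∈ J, V j, D x y)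
        = ∑ i ∈ I, ∑ j ∈ J, A i j :=
      iint_biUnion hV hdisj hfin hD_meas hD_bd I J
    have hmem : |∑ i ∈ I, ∑ j ∈ J, A i j| ∈ setD := by
      refine ⟨⋃ i ∈ I, V i, ⋃ j ∈ J, V j, ?_, ?_, ?_, ?_, ?_⟩
      · exact MeasurableSet.biUnion I.countable_toSet (fun i _ => hV i)
      · exact MeasurableSet.biUnion J.countable_toSet (fun j _ => hV j)
      · exact Set.iUnion₂_subset fun i _ => hsub i
      · exact Set.iUnion₂_subset fun j _ => hsub j
      · rw [hbiU]
    calc |∫ x in S, ∫ y in T, stepW V D x y|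
        = |∑ i, ∑ j, α i * β j * A i j| := by rw [hcomp]
      _ ≤ |∑ i ∈ I, ∑ j ∈ J, A i j| := hIJ
      _ ≤ sSup setD := le_csSup hbddD hmem
  rw [hr, hsplit]
  calc |(∫ x in S, ∫ y in T, D x y) - ∫ x in S, ∫ y in T, stepW V D x y|
      ≤ |∫ x in S, ∫ y in T, D x y| + |∫ x in S, ∫ y in T, stepW V D x y| := abs_sub _ _
    _ ≤ sSup setD + sSup setD := add_le_add h1 h2
    _ = 2 * sSup setD := by ring
end

section
/- (Weak regularity lemma for graphons.) For every graphon W and every ε > 0 there exists a measurable partition P of [0,1] into at most 4^{1/ε²} sets such that ‖W − W_P‖_□ ≤ ε · ‖W‖_2. -/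
open MeasureTheory

/-- The `L²` norm of a kernel on `[0,1]²`. -/
noncomputable def L2Norm (W : ℝ → ℝ → ℝ) : ℝ :=
  Real.sqrt (∫ x in Set.Icc (0:ℝ) 1, ∫ y in Set.Icc (0:ℝ) 1, (W x y) ^ 2)

namespace WR
open Set

/-- good set -/
def Gd (S : Set ℝ) : Prop := MeasurableSet S ∧ S ⊆ Icc 0 1

/-- bounded measurable kernel -/
def Bnd (F : ℝ → ℝ → ℝ) : Prop :=
  Measurable (Function.uncurry F) ∧ ∃ C : ℝ, 0 ≤ C ∧ ∀ x y, |F x y| ≤ C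

noncomputable def II (S T : Set ℝ) (F : ℝ → ℝ → ℝ) : ℝ := ∫ x in S, ∫ y in T, F x y

lemma Gd.meas {S : Set ℝ} (h : Gd S) : MeasurableSet S := h.1
lemma Gd.sub {S : Set ℝ} (h : Gd S) : S ⊆ Icc 0 1 := h.2
lemma Gd.icc : Gd (Icc (0:ℝ) 1) := ⟨measurableSet_Icc, subset_rfl⟩
lemma Gd.fin {S : Set ℝ} (h : Gd S) : volume S < ⊤ :=
  lt_of_le_of_lt (measure_mono h.2) (by simp [Real.volume_Icc])
lemma Gd.le_one {S : Set ℝ} (h : Gd S) : (volume S).toReal ≤ 1 := by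
  have h1 : volume S ≤ volume (Icc (0:ℝ) 1) := measure_mono h.2
  have : volume (Icc (0:ℝ) 1) = 1 := by simp [Real.volume_Icc]
  rw [this] at h1
  simpa using ENNReal.toReal_le_of_le_ofReal zero_le_one (by simpa using h1)

lemma Bnd.measurable_left {F : ℝ → ℝ → ℝ} (hF : Bnd F) (x : ℝ) : Measurable (F x) :=
  hF.1.comp (measurable_prodMk_left)

lemma finRestrict {T : Set ℝ} (hT : Gd T) : IsFiniteMeasure (volume.restrict T) :=
  ⟨by simpa [Measure.restrict_apply_univ] using hT.fin⟩

lemma Bnd.inner_int {F : ℝ → ℝ → ℝ} (hF : Bnd F) {T : Set ℝ} (hT : Gd T) (x : ℝ) :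
    IntegrableOn (F x) T := by
  haveI := finRestrict hT
  obtain ⟨C, hC0, hC⟩ := hF.2
  refine Integrable.mono' (integrable_const C) (hF.measurable_left x).aestronglyMeasurable ?_
  · filter_upwards with y
    simpa [Real.norm_eq_abs] using hC x y

lemma Bnd.outer_meas {F : ℝ → ℝ → ℝ} (hF : Bnd F) (T : Set ℝ) :
    Measurable (fun x => ∫ y in T, F x y) := by
  have h := hF.1.stronglyMeasurable
  exact (StronglyMeasurable.integral_prod_right' (f := Function.uncurry F) h).measurable

lemma Bnd.outer_bound {F : ℝ → ℝ → ℝ} (hF : Bnd F) {T : Set ℝ} (hT : Gd T) {C : ℝ}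
    (hC : ∀ x y, |F x y| ≤ C) (x : ℝ) : |∫ y in T, F x y| ≤ C := by
  have hC0 : 0 ≤ C := le_trans (abs_nonneg _) (hC 0 0)
  haveI := finRestrict hT
  have h1 : ‖∫ y in T, F x y‖ ≤ C * (volume T).toReal := by
    have := norm_integral_le_of_norm_le_const (μ := volume.restrict T)
      (f := F x) (C := C) (by filter_upwards with y; simpa [Real.norm_eq_abs] using hC x y)
    simpa [Measure.restrict_apply_univ, measureReal_def] using this
  rw [Real.norm_eq_abs] at h1
  refine h1.trans ?_
  nlinarith [hT.le_one]

lemma Bnd.outer_int {F : ℝ → ℝ → ℝ} (hF : Bnd F) {S T : Set ℝ} (hS : Gd S) (hT : Gd T) :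
    IntegrableOn (fun x => ∫ y in T, F x y) S := by
  obtain ⟨C, hC0, hC⟩ := hF.2
  haveI := finRestrict hS
  refine Integrable.mono' (integrable_const C) (hF.outer_meas T).aestronglyMeasurable ?_
  filter_upwards with x
  simpa [Real.norm_eq_abs] using hF.outer_bound hT hC x


lemma Bnd.sub {F G : ℝ → ℝ → ℝ} (hF : Bnd F) (hG : Bnd G) :
    Bnd (fun x y => F x y - G x y) := by
  obtain ⟨C, hC0, hC⟩ := hF.2
  obtain ⟨D, hD0, hD⟩ := hG.2
  exact ⟨hF.1.sub hG.1, C + D, by positivity, fun x y =>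
    (abs_sub _ _).trans (add_le_add (hC x y) (hD x y))⟩

lemma Bnd.mul {F G : ℝ → ℝ → ℝ} (hF : Bnd F) (hG : Bnd G) :
    Bnd (fun x y => F x y * G x y) := by
  obtain ⟨C, hC0, hC⟩ := hF.2
  obtain ⟨D, hD0, hD⟩ := hG.2
  refine ⟨hF.1.mul hG.1, C * D, by positivity, fun x y => ?_⟩
  rw [abs_mul]
  exact mul_le_mul (hC x y) (hD x y) (abs_nonneg _) hC0

lemma Bnd.sum {ι : Type*} [Fintype ι] {F : ι → ℝ → ℝ → ℝ} (hF : ∀ i, Bnd (F i)) :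
    Bnd (fun x y => ∑ i, F i x y) := by
  classical
  constructor
  · have : (Function.uncurry (fun x y => ∑ i, F i x y)) = fun p => ∑ i, F i p.1 p.2 := rfl
    rw [this]
    exact Finset.measurable_sum _ (fun i _ => (hF i).1)
  · choose C hC0 hC using fun i => (hF i).2
    refine ⟨∑ i, C i, Finset.sum_nonneg (fun i _ => hC0 i), fun x y => ?_⟩
    exact (Finset.abs_sum_le_sum_abs _ _).trans
      (Finset.sum_le_sum (fun i _ => hC i x y))

lemma Bnd.const (c : ℝ) : Bnd (fun _ _ => c) :=
  ⟨measurable_const, |c|, abs_nonneg _, fun _ _ => le_refl _⟩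

lemma Bnd.indmul {A B : Set ℝ} (hA : MeasurableSet A) (hB : MeasurableSet B) (c : ℝ) :
    Bnd (fun x y => Set.indicator A (fun _ => (1:ℝ)) x * Set.indicator B (fun _ => (1:ℝ)) y * c) := by
  constructor
  · apply Measurable.mul
    apply Measurable.mul
    · exact (measurable_const.indicator hA).comp measurable_fst
    · exact (measurable_const.indicator hB).comp measurable_snd
    · exact measurable_const
  · refine ⟨|c|, abs_nonneg _, fun x y => ?_⟩
    rw [abs_mul, abs_mul]
    by_cases hx : x ∈ A <;> by_cases hy : y ∈ B <;>
      simp [hx, hy, abs_nonneg]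

lemma II_sub {F G : ℝ → ℝ → ℝ} (hF : Bnd F) (hG : Bnd G) {S T : Set ℝ}
    (hS : Gd S) (hT : Gd T) :
    II S T (fun x y => F x y - G x y) = II S T F - II S T G := by
  unfold II
  rw [← integral_sub (hF.outer_int hS hT) (hG.outer_int hS hT)]
  refine setIntegral_congr_fun hS.meas (fun x _ => ?_)
  exact integral_sub (hF.inner_int hT x) (hG.inner_int hT x)

lemma II_sum {ι : Type*} [Fintype ι] {F : ι → ℝ → ℝ → ℝ} (hF : ∀ i, Bnd (F i))
    {S T : Set ℝ} (hS : Gd S) (hT : Gd T) :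
    II S T (fun x y => ∑ i, F i x y) = ∑ i, II S T (F i) := by
  classical
  unfold II
  rw [← integral_finset_sum _ (fun i _ => (hF i).outer_int hS hT)]
  refine setIntegral_congr_fun hS.meas (fun x _ => ?_)
  exact integral_finset_sum _ (fun i _ => (hF i).inner_int hT x)

lemma II_const (S T : Set ℝ) (c : ℝ) :
    II S T (fun _ _ => c) = (volume S).toReal * ((volume T).toReal * c) := by
  unfold II
  simp [setIntegral_const, smul_eq_mul, measureReal_def]

lemma II_congr {F G : ℝ → ℝ → ℝ} {S T : Set ℝ} (hS : MeasurableSet S) (hT : MeasurableSet T)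
    (h : ∀ x ∈ S, ∀ y ∈ T, F x y = G x y) : II S T F = II S T G := by
  unfold II
  refine setIntegral_congr_fun hS (fun x hx => ?_)
  exact setIntegral_congr_fun hT (fun y hy => h x hx y hy)

lemma II_null_left {F : ℝ → ℝ → ℝ} {S : Set ℝ} (hS : volume S = 0) (T : Set ℝ) :
    II S T F = 0 := by
  unfold II
  rw [Measure.restrict_eq_zero.mpr hS, integral_zero_measure]

lemma II_null_right {F : ℝ → ℝ → ℝ} (S : Set ℝ) {T : Set ℝ} (hT : volume T = 0) :
    II S T F = 0 := by
  unfold II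
  have : ∀ x, (∫ y in T, F x y) = 0 := fun x => by
    rw [Measure.restrict_eq_zero.mpr hT, integral_zero_measure]
  simp [this]

lemma II_nonneg {F : ℝ → ℝ → ℝ} (S T : Set ℝ) (h : ∀ x y, 0 ≤ F x y) :
    0 ≤ II S T F := by
  unfold II
  refine integral_nonneg (fun x => integral_nonneg (fun y => h x y))


/-! ### step forms and partitions -/

noncomputable def stepform {ι : Type*} [Fintype ι] (V : ι → Set ℝ) (c : ι → ι → ℝ)
    (x y : ℝ) : ℝ :=
  ∑ i, ∑ j,
    Set.indicator (V i) (fun _ => (1:ℝ)) x * Set.indicator (V j) (fun _ => (1:ℝ)) y * c i j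

noncomputable def coef {ι : Type*} [Fintype ι] (V : ι → Set ℝ) (W : ℝ → ℝ → ℝ)
    (i j : ι) : ℝ :=
  (∫ u in V i, ∫ v in V j, W u v) /
    (MeasureTheory.volume (V i)).toReal / (MeasureTheory.volume (V j)).toReal

lemma stepW_eq_stepform {ι : Type*} [Fintype ι] (V : ι → Set ℝ) (W : ℝ → ℝ → ℝ) :
    stepW V W = stepform V (coef V W) := rfl

lemma partGd {ι : Type*} {V : ι → Set ℝ} (hV : IsPartition V) (i : ι) :
    Gd (V i) := ⟨hV.1 i, by rw [← hV.2.2]; exact subset_iUnion V i⟩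

lemma Bnd.stepform {ι : Type*} [Fintype ι] {V : ι → Set ℝ} (hV : ∀ i, MeasurableSet (V i))
    (c : ι → ι → ℝ) : Bnd (WR.stepform V c) := by
  unfold WR.stepform
  exact Bnd.sum (fun i => Bnd.sum (fun j => Bnd.indmul (hV i) (hV j) (c i j)))

lemma stepform_collapse {ι : Type*} [Fintype ι] {V : ι → Set ℝ}
    (hd : Pairwise (fun i j => Disjoint (V i) (V j))) (c : ι → ι → ℝ) {a b : ι} {x y : ℝ}
    (hx : x ∈ V a) (hy : y ∈ V b) : stepform V c x y = c a b := by
  unfold stepform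
  rw [Finset.sum_eq_single a]
  · rw [Finset.sum_eq_single b]
    · simp [hx, hy]
    · intro j _ hj
      have : y ∉ V j := fun h => Set.disjoint_left.mp (hd hj) h hy
      simp [this]
    · simp
  · intro i _ hi
    have : x ∉ V i := fun h => Set.disjoint_left.mp (hd hi) h hx
    simp [this]
  · simp

lemma II_cell_stepform {ι : Type*} [Fintype ι] {V : ι → Set ℝ} (hV : IsPartition V)
    (c : ι → ι → ℝ) (a b : ι) :
    II (V a) (V b) (stepform V c) =
      (volume (V a)).toReal * ((volume (V b)).toReal * c a b) := by
  rw [II_congr (hV.1 a) (hV.1 b)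
    (fun x hx y hy => stepform_collapse hV.2.1 c hx hy (b := b)), II_const]

lemma toReal_zero_iff {S : Set ℝ} (hS : Gd S) :
    (volume S).toReal = 0 ↔ volume S = 0 := by
  rw [ENNReal.toReal_eq_zero_iff]
  exact ⟨fun h => h.resolve_right (by exact fun ht => absurd ht (ne_of_lt hS.fin)),
    fun h => Or.inl h⟩

lemma II_cell_stepW {ι : Type*} [Fintype ι] {V : ι → Set ℝ} (hV : IsPartition V)
    (W : ℝ → ℝ → ℝ) (a b : ι) :
    II (V a) (V b) (stepW V W) = II (V a) (V b) W := by
  rw [stepW_eq_stepform, II_cell_stepform hV]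
  unfold coef
  have hIW : (∫ u in V a, ∫ v in V b, W u v) = II (V a) (V b) W := rfl
  rw [hIW]
  by_cases ha : (volume (V a)).toReal = 0
  · rw [II_null_left ((toReal_zero_iff (partGd hV a)).mp ha) (V b) (F := W)]
    simp [ha]
  by_cases hb : (volume (V b)).toReal = 0
  · rw [II_null_right (V a) ((toReal_zero_iff (partGd hV b)).mp hb) (F := W)]
    simp [hb]
  · field_simp


/-! ### the bilinear form e -/

noncomputable def e (F G : ℝ → ℝ → ℝ) : ℝ :=
  II (Icc 0 1) (Icc 0 1) (fun x y => F x y * G x y)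

lemma e_self_nonneg (F : ℝ → ℝ → ℝ) : 0 ≤ e F F :=
  II_nonneg _ _ (fun x y => mul_self_nonneg _)

lemma e_comm (F G : ℝ → ℝ → ℝ) : e F G = e G F := by
  unfold e
  congr 1
  funext x y
  ring

lemma II_smul {F : ℝ → ℝ → ℝ} (S T : Set ℝ) (r : ℝ) :
    II S T (fun x y => r * F x y) = r * II S T F := by
  unfold II
  simp_rw [integral_const_mul]

lemma II_mul_ind {F : ℝ → ℝ → ℝ} (hF : Bnd F) {A B : Set ℝ} (hA : Gd A) (hB : Gd B)
    (c : ℝ) :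
    II (Icc 0 1) (Icc 0 1)
      (fun x y => F x y *
        (Set.indicator A (fun _ => (1:ℝ)) x * Set.indicator B (fun _ => (1:ℝ)) y * c)) =
      c * II A B F := by
  unfold II
  have inner_eq : ∀ x : ℝ,
      (∫ y in Icc (0:ℝ) 1, F x y *
        (Set.indicator A (fun _ => (1:ℝ)) x * Set.indicator B (fun _ => (1:ℝ)) y * c)) =
      Set.indicator A (fun _ => (1:ℝ)) x * ((∫ y in B, F x y) * c) := by
    intro x
    have h1 : ∀ y : ℝ, F x y *
        (Set.indicator A (fun _ => (1:ℝ)) x * Set.indicator B (fun _ => (1:ℝ)) y * c) =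
        Set.indicator B (fun y => F x y * (Set.indicator A (fun _ => (1:ℝ)) x * c)) y := by
      intro y
      by_cases hy : y ∈ B
      · simp only [Set.indicator_of_mem hy]; ring
      · simp [hy]
    rw [integral_congr_ae (Filter.Eventually.of_forall h1), integral_indicator hB.meas,
      Measure.restrict_restrict hB.meas, Set.inter_eq_self_of_subset_left hB.sub,
      integral_mul_const]
    ring
  rw [integral_congr_ae (Filter.Eventually.of_forall inner_eq)]
  have h2 : ∀ x : ℝ, Set.indicator A (fun _ => (1:ℝ)) x * ((∫ y in B, F x y) * c) =
      Set.indicator A (fun x => (∫ y in B, F x y) * c) x := by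
    intro x
    by_cases hx : x ∈ A <;> simp [hx]
  rw [integral_congr_ae (Filter.Eventually.of_forall h2), integral_indicator hA.meas,
    Measure.restrict_restrict hA.meas, Set.inter_eq_self_of_subset_left hA.sub,
    integral_mul_const]
  ring

lemma e_stepform {ι : Type*} [Fintype ι] {F : ℝ → ℝ → ℝ} (hF : Bnd F) {V : ι → Set ℝ}
    (hV : ∀ i, Gd (V i)) (c : ι → ι → ℝ) :
    e F (stepform V c) = ∑ i, ∑ j, c i j * II (V i) (V j) F := by
  unfold e stepform
  have h1 : (fun x y => F x y * ∑ i, ∑ j,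
      Set.indicator (V i) (fun _ => (1:ℝ)) x * Set.indicator (V j) (fun _ => (1:ℝ)) y * c i j)
      = fun x y => ∑ i, ∑ j, F x y *
        (Set.indicator (V i) (fun _ => (1:ℝ)) x * Set.indicator (V j) (fun _ => (1:ℝ)) y * c i j) := by
    funext x y
    simp_rw [Finset.mul_sum]
  rw [h1]
  have hB : ∀ i j : ι, Bnd (fun x y => F x y *
      (Set.indicator (V i) (fun _ => (1:ℝ)) x * Set.indicator (V j) (fun _ => (1:ℝ)) y * c i j)) :=
    fun i j => hF.mul (Bnd.indmul (hV i).meas (hV j).meas (c i j))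
  rw [II_sum (fun i => Bnd.sum (fun j => hB i j)) Gd.icc Gd.icc]
  refine Finset.sum_congr rfl (fun i _ => ?_)
  rw [II_sum (fun j => hB i j) Gd.icc Gd.icc]
  exact Finset.sum_congr rfl (fun j _ => II_mul_ind hF (hV i) (hV j) (c i j))

/-- Orthogonality: `W - W_P` is orthogonal to anything agreeing with a `P`-step
function on the unit square. -/
lemma ortho {ι : Type*} [Fintype ι] {W : ℝ → ℝ → ℝ} (hW : Bnd W) {V : ι → Set ℝ}
    (hV : IsPartition V) {G : ℝ → ℝ → ℝ} (c : ι → ι → ℝ)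
    (hGc : ∀ x ∈ Icc (0:ℝ) 1, ∀ y ∈ Icc (0:ℝ) 1, G x y = stepform V c x y) :
    e (fun x y => W x y - stepW V W x y) G = 0 := by
  have hstep : Bnd (stepW V W) := by
    rw [stepW_eq_stepform]
    exact Bnd.stepform hV.1 _
  have hH : Bnd (fun x y => W x y - stepW V W x y) := hW.sub hstep
  have congr1 : e (fun x y => W x y - stepW V W x y) G =
      e (fun x y => W x y - stepW V W x y) (stepform V c) := by
    unfold e
    exact II_congr measurableSet_Icc measurableSet_Icc
      (fun x hx y hy => by rw [hGc x hx y hy])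
  rw [congr1, e_stepform hH (partGd hV) c]
  refine Finset.sum_eq_zero (fun i _ => Finset.sum_eq_zero (fun j _ => ?_))
  rw [II_sub hW hstep (partGd hV i) (partGd hV j), II_cell_stepW hV]
  · ring


lemma Bnd.smul {F : ℝ → ℝ → ℝ} (r : ℝ) (hF : Bnd F) : Bnd (fun x y => r * F x y) :=
  (Bnd.const r).mul hF

lemma e_sub_left {F G H : ℝ → ℝ → ℝ} (hF : Bnd F) (hG : Bnd G) (hH : Bnd H) :
    e (fun x y => F x y - G x y) H = e F H - e G H := by
  unfold e
  have h : (fun x y => (F x y - G x y) * H x y) =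
      fun x y => F x y * H x y - G x y * H x y := by funext x y; ring
  rw [h]
  exact II_sub (hF.mul hH) (hG.mul hH) Gd.icc Gd.icc

lemma e_expand_quad {F G : ℝ → ℝ → ℝ} (hF : Bnd F) (hG : Bnd G) (r s : ℝ) :
    e (fun x y => r * F x y - s * G x y) (fun x y => r * F x y - s * G x y) =
      r^2 * e F F - 2*(r*s) * e F G + s^2 * e G G := by
  unfold e
  have h : (fun x y => (r * F x y - s * G x y) * (r * F x y - s * G x y)) =
      fun x y => r^2 * (F x y * F x y) -
        (2*(r*s) * (F x y * G x y) - s^2 * (G x y * G x y)) := by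
    funext x y; ring
  rw [h, II_sub (Bnd.smul _ (hF.mul hF))
    (((Bnd.smul _ (hF.mul hG))).sub (Bnd.smul _ (hG.mul hG))) Gd.icc Gd.icc,
    II_sub (Bnd.smul _ (hF.mul hG)) (Bnd.smul _ (hG.mul hG)) Gd.icc Gd.icc,
    II_smul, II_smul, II_smul]
  ring

noncomputable def indST (S T : Set ℝ) (x y : ℝ) : ℝ :=
  Set.indicator S (fun _ => (1:ℝ)) x * Set.indicator T (fun _ => (1:ℝ)) y

lemma Bnd.indST {S T : Set ℝ} (hS : MeasurableSet S) (hT : MeasurableSet T) :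
    Bnd (WR.indST S T) := by
  have := Bnd.indmul hS hT 1
  constructor
  · unfold WR.indST
    exact ((measurable_const.indicator hS).comp measurable_fst).mul
      ((measurable_const.indicator hT).comp measurable_snd)
  · refine ⟨1, zero_le_one, fun x y => ?_⟩
    unfold WR.indST
    by_cases hx : x ∈ S <;> by_cases hy : y ∈ T <;> simp [hx, hy]

lemma e_indST {F : ℝ → ℝ → ℝ} (hF : Bnd F) {S T : Set ℝ} (hS : Gd S) (hT : Gd T) :
    e F (indST S T) = II S T F := by
  unfold e indST
  have h : (fun x y => F x y *
      (Set.indicator S (fun _ => (1:ℝ)) x * Set.indicator T (fun _ => (1:ℝ)) y)) =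
      fun x y => F x y *
      (Set.indicator S (fun _ => (1:ℝ)) x * Set.indicator T (fun _ => (1:ℝ)) y * 1) := by
    funext x y; ring
  rw [h, II_mul_ind hF hS hT 1, one_mul]

lemma e_indST_self {S T : Set ℝ} (hS : Gd S) (hT : Gd T) :
    e (indST S T) (indST S T) = (volume S).toReal * ((volume T).toReal * 1) := by
  have h2 : e (indST S T) (indST S T) = e (fun _ _ => (1:ℝ)) (indST S T) := by
    unfold e
    congr 1
    funext x y
    unfold indST
    by_cases hx : x ∈ S <;> by_cases hy : y ∈ T <;> simp [hx, hy]
  rw [h2, e_indST (Bnd.const 1) hS hT, II_const]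

lemma cs_bound {H : ℝ → ℝ → ℝ} (hH : Bnd H) {S T : Set ℝ} (hS : Gd S) (hT : Gd T) :
    (II S T H)^2 ≤ e H H := by
  have hG : Bnd (indST S T) := Bnd.indST hS.meas hT.meas
  set a := e H H with ha_def
  set b := II S T H with hb_def
  set c := (volume S).toReal * ((volume T).toReal * 1) with hc_def
  have hbe : e H (indST S T) = b := e_indST hH hS hT
  have hcST : e (indST S T) (indST S T) = c := e_indST_self hS hT
  have h0 : 0 ≤ c^2 * a - 2*(c*b) * b + b^2 * c := by
    have hq := e_expand_quad hH hG c b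
    rw [hbe, hcST] at hq
    rw [← hq]
    exact e_self_nonneg _
  have ha : 0 ≤ a := e_self_nonneg H
  have hc0 : 0 ≤ c := by positivity
  have hc1 : c ≤ 1 := by
    have := hS.le_one
    have := hT.le_one
    have := ENNReal.toReal_nonneg (a := volume S)
    have := ENNReal.toReal_nonneg (a := volume T)
    nlinarith
  rcases eq_or_lt_of_le hc0 with hceq | hclt
  · -- c = 0 : one of the sets is null, so b = 0
    have hb0 : b = 0 := by
      have h := hceq.symm
      rw [hc_def, mul_one] at h
      rcases mul_eq_zero.mp h with h' | h'
      · rw [hb_def]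
        exact II_null_left ((toReal_zero_iff hS).mp h') T
      · rw [hb_def]
        exact II_null_right S ((toReal_zero_iff hT).mp h')
    rw [hb0]
    simpa using ha
  · nlinarith [h0, ha, hc1, hclt, mul_le_mul_of_nonneg_right hc1 ha]


/-! ### energy -/

noncomputable def energy {ι : Type*} [Fintype ι] (V : ι → Set ℝ) (W : ℝ → ℝ → ℝ) : ℝ :=
  e (stepW V W) (stepW V W)

lemma Bnd.stepW {ι : Type*} [Fintype ι] {V : ι → Set ℝ} (hV : ∀ i, MeasurableSet (V i))
    (W : ℝ → ℝ → ℝ) : Bnd (stepW V W) := by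
  rw [stepW_eq_stepform]
  exact Bnd.stepform hV _

lemma e_WP_eq {ι : Type*} [Fintype ι] {W : ℝ → ℝ → ℝ} (hW : Bnd W) {V : ι → Set ℝ}
    (hV : IsPartition V) : e W (stepW V W) = energy V W := by
  have hP : Bnd (stepW V W) := Bnd.stepW hV.1 W
  have h := ortho hW hV (coef V W) (G := stepW V W)
    (fun x _ y _ => by rw [stepW_eq_stepform])
  rw [e_sub_left hW hP hP] at h
  unfold energy
  linarith

lemma energy_le {ι : Type*} [Fintype ι] {W : ℝ → ℝ → ℝ} (hW : Bnd W) {V : ι → Set ℝ}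
    (hV : IsPartition V) : energy V W ≤ e W W := by
  have hP : Bnd (stepW V W) := Bnd.stepW hV.1 W
  have hsub : Bnd (fun x y => W x y - stepW V W x y) := hW.sub hP
  have h1 : e (fun x y => W x y - stepW V W x y) (fun x y => W x y - stepW V W x y) =
      e W (fun x y => W x y - stepW V W x y) - e (stepW V W) (fun x y => W x y - stepW V W x y) :=
    e_sub_left hW hP hsub
  have h2 : e W (fun x y => W x y - stepW V W x y) =
      e (fun x y => W x y - stepW V W x y) W := e_comm _ _
  have h3 : e (stepW V W) (fun x y => W x y - stepW V W x y) =
      e (fun x y => W x y - stepW V W x y) (stepW V W) := e_comm _ _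
  have h4 : e (fun x y => W x y - stepW V W x y) W = e W W - e (stepW V W) W :=
    e_sub_left hW hP hW
  have h5 : e (fun x y => W x y - stepW V W x y) (stepW V W) = 0 :=
    ortho hW hV (coef V W) (fun x _ y _ => by rw [stepW_eq_stepform])
  have h6 : e (stepW V W) W = e W (stepW V W) := e_comm _ _
  have h7 := e_WP_eq hW hV
  have h8 := e_self_nonneg (fun x y => W x y - stepW V W x y)
  rw [h1, h2, h3, h4, h5, h6, h7] at h8
  linarith

/-! ### refinement -/

def refine {ι : Type*} (V : ι → Set ℝ) (S T : Set ℝ) (p : ι × Bool × Bool) : Set ℝ :=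
  V p.1 ∩ (cond p.2.1 S Sᶜ) ∩ (cond p.2.2 T Tᶜ)

lemma refine_isPartition {ι : Type*} {V : ι → Set ℝ} (hV : IsPartition V)
    {S T : Set ℝ} (hS : MeasurableSet S) (hT : MeasurableSet T) :
    IsPartition (refine V S T) := by
  refine ⟨fun p => ?_, fun p q hpq => ?_, ?_⟩
  · exact ((hV.1 p.1).inter (by rcases p.2.1 <;> [exact hS.compl; exact hS])).inter
      (by rcases p.2.2 <;> [exact hT.compl; exact hT])
  · rcases p with ⟨i, s, t⟩
    rcases q with ⟨j, u, v⟩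
    by_cases hij : i = j
    · subst hij
      by_cases hsu : s = u
      · subst hsu
        have htv : t ≠ v := by
          intro h
          exact hpq (by rw [h])
        refine Set.disjoint_left.mpr (fun x hx hx2 => ?_)
        have h1 := hx.2
        have h2 := hx2.2
        rcases t <;> rcases v <;> simp_all
      · refine Set.disjoint_left.mpr (fun x hx hx2 => ?_)
        have h1 := hx.1.2
        have h2 := hx2.1.2
        rcases s <;> rcases u <;> simp_all
    · exact Set.disjoint_left.mpr (fun x hx hx2 =>
        Set.disjoint_left.mp (hV.2.1 hij) hx.1.1 hx2.1.1)
  · apply Set.Subset.antisymm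
    · refine Set.iUnion_subset (fun p => ?_)
      intro x hx
      rw [← hV.2.2]
      exact Set.mem_iUnion.mpr ⟨p.1, hx.1.1⟩
    · intro x hx
      rw [← hV.2.2] at hx
      obtain ⟨i, hi⟩ := Set.mem_iUnion.mp hx
      classical
      refine Set.mem_iUnion.mpr ⟨⟨i, if x ∈ S then true else false, if x ∈ T then true else false⟩, ?_⟩
      refine ⟨⟨hi, ?_⟩, ?_⟩
      · by_cases hxS : x ∈ S <;> simp [hxS]
      · by_cases hxT : x ∈ T <;> simp [hxT]

lemma mem_refine_S {ι : Type*} {V : ι → Set ℝ} {S T : Set ℝ} {p : ι × Bool × Bool} {x : ℝ}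
    (hx : x ∈ refine V S T p) : Set.indicator S (fun _ => (1:ℝ)) x = cond p.2.1 1 0 := by
  have h := hx.1.2
  rcases hp : p.2.1 <;> rw [hp] at h <;> simp_all [Set.indicator_apply]

lemma mem_refine_T {ι : Type*} {V : ι → Set ℝ} {S T : Set ℝ} {p : ι × Bool × Bool} {x : ℝ}
    (hx : x ∈ refine V S T p) : Set.indicator T (fun _ => (1:ℝ)) x = cond p.2.2 1 0 := by
  have h := hx.2
  rcases hp : p.2.2 <;> rw [hp] at h <;> simp_all [Set.indicator_apply]


lemma energy_increment {ι : Type*} [Fintype ι] {W : ℝ → ℝ → ℝ} (hW : Bnd W)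
    {V : ι → Set ℝ} (hV : IsPartition V) {S T : Set ℝ} (hS : Gd S) (hT : Gd T) :
    energy V W + (II S T (fun x y => W x y - stepW V W x y))^2 ≤
      energy (refine V S T) W := by
  have hV' : IsPartition (refine V S T) := refine_isPartition hV hS.meas hT.meas
  set P := stepW V W with hP_def
  set D := stepW (refine V S T) W with hD_def
  have hP : Bnd P := Bnd.stepW hV.1 W
  have hD : Bnd D := Bnd.stepW hV'.1 W
  have hWP : Bnd (fun x y => W x y - P x y) := hW.sub hP
  have hWD : Bnd (fun x y => W x y - D x y) := hW.sub hD
  have hDP : Bnd (fun x y => D x y - P x y) := hD.sub hP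
  have hind : Bnd (indST S T) := Bnd.indST hS.meas hT.meas
  -- pointwise stepform representations over the refined partition
  have hmem : ∀ x ∈ Icc (0:ℝ) 1, ∃ p, x ∈ refine V S T p := by
    intro x hx
    rw [← hV'.2.2] at hx
    exact Set.mem_iUnion.mp hx
  have hPc : ∀ x ∈ Icc (0:ℝ) 1, ∀ y ∈ Icc (0:ℝ) 1,
      P x y = stepform (refine V S T) (fun p q => coef V W p.1 q.1) x y := by
    intro x hx y hy
    obtain ⟨p, hp⟩ := hmem x hx
    obtain ⟨q, hq⟩ := hmem y hy
    rw [stepform_collapse hV'.2.1 _ hp hq, hP_def, stepW_eq_stepform,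
      stepform_collapse hV.2.1 _ hp.1.1 hq.1.1]
  have hIc : ∀ x ∈ Icc (0:ℝ) 1, ∀ y ∈ Icc (0:ℝ) 1,
      indST S T x y = stepform (refine V S T)
        (fun p q => cond p.2.1 (1:ℝ) 0 * cond q.2.2 (1:ℝ) 0) x y := by
    intro x hx y hy
    obtain ⟨p, hp⟩ := hmem x hx
    obtain ⟨q, hq⟩ := hmem y hy
    rw [stepform_collapse hV'.2.1 _ hp hq]
    unfold indST
    rw [mem_refine_S hp, mem_refine_T hq]
  -- orthogonality relations
  have o2 : e (fun x y => W x y - D x y) P = 0 := ortho hW hV' _ hPc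
  have o3 : e (fun x y => W x y - D x y) (indST S T) = 0 := ortho hW hV' _ hIc
  have o4 : e (fun x y => W x y - P x y) P = 0 :=
    ortho hW hV _ (fun x _ y _ => by rw [hP_def, stepW_eq_stepform])
  -- inner products with P
  have eWP : e W P - e D P = 0 := by rw [← e_sub_left hW hD hP]; exact o2
  have eWP2 : e W P - e P P = 0 := by rw [← e_sub_left hW hP hP]; exact o4
  have eDP : e D P = e P P := by linarith
  -- b = II S T (W - P)
  set b := II S T (fun x y => W x y - P x y) with hb_def
  have hbe : e (fun x y => W x y - P x y) (indST S T) = b := e_indST hWP hS hT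
  have hsplit : (fun x y => D x y - P x y) =
      (fun x y => (W x y - P x y) - (W x y - D x y)) := by funext x y; ring
  have hb2 : II S T (fun x y => D x y - P x y) = b := by
    rw [← e_indST hDP hS hT, hsplit, e_sub_left hWP hWD hind, hbe, o3, sub_zero]
  -- Cauchy–Schwarz
  have hcs : b^2 ≤ e (fun x y => D x y - P x y) (fun x y => D x y - P x y) := by
    rw [← hb2]
    exact cs_bound hDP hS hT
  -- Pythagoras
  have hpy : e (fun x y => D x y - P x y) (fun x y => D x y - P x y) =
      e D D - e P P := by
    rw [e_sub_left hD hP hDP,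
      e_comm D (fun x y => D x y - P x y), e_sub_left hD hP hD,
      e_comm P (fun x y => D x y - P x y), e_sub_left hD hP hP,
      e_comm P D, eDP]
    ring
  unfold energy
  rw [← hP_def, ← hD_def]
  linarith [hcs, hpy]


/-! ### reindexing -/

lemma stepW_reindex {ι κ : Type*} [Fintype ι] [Fintype κ] (eqv : κ ≃ ι) (V : ι → Set ℝ)
    (W : ℝ → ℝ → ℝ) : stepW (fun k => V (eqv k)) W = stepW V W := by
  funext x y
  unfold stepW
  refine Fintype.sum_equiv eqv _ _ (fun k => ?_)
  exact Fintype.sum_equiv eqv _ _ (fun l => rfl)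

lemma isPartition_reindex {ι κ : Type*} (eqv : κ ≃ ι) {V : ι → Set ℝ}
    (hV : IsPartition V) : IsPartition (fun k => V (eqv k)) :=
  ⟨fun k => hV.1 _, fun k l hkl => hV.2.1 (fun h => hkl (eqv.injective h)),
    by rw [← hV.2.2]; exact eqv.surjective.iUnion_comp V⟩

/-! ### cut norm lemmas -/

lemma cutNorm_le {U : ℝ → ℝ → ℝ} {δ : ℝ} (hδ : 0 ≤ δ)
    (h : ∀ S T : Set ℝ, Gd S → Gd T → |II S T U| ≤ δ) : cutNorm U ≤ δ := by
  apply Real.sSup_le _ hδ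
  rintro r ⟨S, T, hS, hT, hSs, hTs, rfl⟩
  exact h S T ⟨hS, hSs⟩ ⟨hT, hTs⟩

lemma lt_of_not_cutNorm_le {U : ℝ → ℝ → ℝ} {δ : ℝ} (hδ : 0 ≤ δ)
    (h : ¬ cutNorm U ≤ δ) : ∃ S T : Set ℝ, Gd S ∧ Gd T ∧ δ < |II S T U| := by
  by_contra hc
  push_neg at hc
  exact h (cutNorm_le hδ (fun S T hS hT => hc S T hS hT))

end WR

section MainProof

open WR Set

theorem weak_regularity' (W : ℝ → ℝ → ℝ)
    (hmeas : Measurable (Function.uncurry W)) (hsymm : ∀ x y, W x y = W y x)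
    (hbdd : ∃ C : ℝ, ∀ x y, |W x y| ≤ C)
    (ε : ℝ) (hε : 0 < ε) :
    ∃ (m : ℕ) (V : Fin m → Set ℝ), IsPartition V ∧
      (m : ℝ) ≤ (4 : ℝ) ^ ((1 : ℝ) / ε ^ 2) ∧
      cutNorm (fun x y => W x y - stepW V W x y) ≤ ε * L2Norm W := by
  obtain ⟨C0, hC0⟩ := hbdd
  have hW : Bnd W := ⟨hmeas, C0, le_trans (abs_nonneg _) (hC0 0 0), hC0⟩
  have hL2 : L2Norm W = Real.sqrt (e W W) := by
    unfold L2Norm WR.e WR.II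
    congr 1
    refine integral_congr_ae (Filter.Eventually.of_forall (fun x => ?_))
    refine integral_congr_ae (Filter.Eventually.of_forall (fun y => ?_))
    ring
  have heWW : 0 ≤ e W W := e_self_nonneg W
  have hsq : (L2Norm W)^2 = e W W := by rw [hL2, Real.sq_sqrt heWW]
  have hL2nn : 0 ≤ L2Norm W := by rw [hL2]; exact Real.sqrt_nonneg _
  have hδnn : 0 ≤ ε * L2Norm W := mul_nonneg hε.le hL2nn
  have h4 : (1:ℝ) ≤ (4:ℝ) ^ ((1:ℝ)/ε^2) :=
    Real.one_le_rpow (by norm_num) (by positivity)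
  have htrivpart : IsPartition (fun _ : Fin 1 => Icc (0:ℝ) 1) :=
    ⟨fun _ => measurableSet_Icc, fun i j hij => absurd (Subsingleton.elim i j) hij, Set.iUnion_const _⟩
  by_cases h0 : e W W = 0
  · -- degenerate case : ‖W‖₂ = 0
    have hIW : ∀ S' T' : Set ℝ, Gd S' → Gd T' → II S' T' W = 0 := by
      intro S' T' hS' hT'
      have h1 := cs_bound hW hS' hT'
      rw [h0] at h1
      nlinarith [sq_nonneg (II S' T' W)]
    have hstep0 : ∀ x y, stepW (fun _ : Fin 1 => Icc (0:ℝ) 1) W x y = 0 := by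
      intro x y
      unfold stepW
      rw [Fin.sum_univ_one, Fin.sum_univ_one,
        show (∫ u in Icc (0:ℝ) 1, ∫ v in Icc (0:ℝ) 1, W u v) = 0 from
          hIW _ _ Gd.icc Gd.icc]
      simp
    refine ⟨1, fun _ => Icc 0 1, htrivpart, by simpa using h4, ?_⟩
    apply cutNorm_le hδnn
    intro S T hS hT
    have hfun : (fun x y => W x y - stepW (fun _ : Fin 1 => Icc (0:ℝ) 1) W x y) = W := by
      funext x y
      rw [hstep0 x y, sub_zero]
    rw [hfun, hIW S T hS hT, abs_zero]
    exact hδnn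
  · -- main case
    have heWWpos : 0 < e W W := lt_of_le_of_ne heWW (Ne.symm h0)
    have hL2pos : 0 < L2Norm W := by rw [hL2]; exact Real.sqrt_pos.mpr heWWpos
    have hδpos : 0 < ε * L2Norm W := mul_pos hε hL2pos
    set δ := ε * L2Norm W with hδ_def
    have hδsq : δ^2 = ε^2 * e W W := by rw [hδ_def, mul_pow, hsq]
    by_contra hgoal
    push_neg at hgoal
    have key : ∀ n : ℕ, ∃ (m : ℕ) (V : Fin m → Set ℝ), IsPartition V ∧ m ≤ 4^n ∧
        (n : ℝ) * δ^2 ≤ energy V W := by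
      intro n
      induction n with
      | zero =>
        refine ⟨1, fun _ => Icc 0 1, htrivpart, by norm_num, ?_⟩
        have := e_self_nonneg (stepW (fun _ : Fin 1 => Icc (0:ℝ) 1) W)
        simpa [WR.energy] using this
      | succ n ih =>
        obtain ⟨m, V, hVpart, hm, hEn⟩ := ih
        have hEle : energy V W ≤ e W W := energy_le hW hVpart
        have hnle : (n:ℝ) ≤ 1/ε^2 := by
          rw [le_div_iff₀ (by positivity : (0:ℝ) < ε^2)]
          nlinarith [hEn, hEle, hδsq, heWWpos]
        have hnotgood : ¬ cutNorm (fun x y => W x y - stepW V W x y) ≤ δ := by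
          intro hgood
          have hmb : (m:ℝ) ≤ (4:ℝ) ^ ((1:ℝ)/ε^2) := by
            calc (m:ℝ) ≤ ((4^n : ℕ) : ℝ) := by exact_mod_cast hm
            _ = (4:ℝ) ^ (n : ℝ) := by
                push_cast
                rw [← Real.rpow_natCast 4 n]
            _ ≤ (4:ℝ) ^ ((1:ℝ)/ε^2) :=
                Real.rpow_le_rpow_of_exponent_le (by norm_num) hnle
          exact absurd hgood (not_le.mpr (hgoal m V hVpart hmb))
        obtain ⟨S, T, hS, hT, hb⟩ := lt_of_not_cutNorm_le hδpos.le hnotgood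
        have hinc := energy_increment hW hVpart hS hT
        set V2 := WR.refine V S T with hV2_def
        have hV2part : IsPartition V2 := refine_isPartition hVpart hS.meas hT.meas
        have hcard : 4 * m = Fintype.card (Fin m × Bool × Bool) := by
          simp [Fintype.card_prod]
          ring
        let eqv : Fin (4*m) ≃ (Fin m × Bool × Bool) :=
          Fintype.equivOfCardEq (by simpa using hcard)
        refine ⟨4*m, fun k => V2 (eqv k), isPartition_reindex eqv hV2part, ?_, ?_⟩
        · calc 4*m ≤ 4*4^n := by omega
          _ = 4^(n+1) := by rw [pow_succ]; ring
        · have hen : energy (fun k => V2 (eqv k)) W = energy V2 W := by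
            unfold WR.energy
            rw [stepW_reindex eqv V2 W]
          rw [hen]
          have habs : δ^2 ≤ (II S T (fun x y => W x y - stepW V W x y))^2 := by
            have h1 : δ ≤ |II S T (fun x y => W x y - stepW V W x y)| := hb.le
            nlinarith [abs_nonneg (II S T (fun x y => W x y - stepW V W x y)),
              sq_abs (II S T (fun x y => W x y - stepW V W x y)), hδpos]
          push_cast
          nlinarith [hinc, hEn]
    -- final contradiction
    set n₀ := Nat.floor ((1:ℝ)/ε^2) + 1 with hn₀
    obtain ⟨m, V, hVp, _, hE⟩ := key n₀
    have hfl : ((1:ℝ)/ε^2) < (n₀ : ℝ) := by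
      rw [hn₀]
      push_cast
      exact Nat.lt_floor_add_one _
    have hEle : energy V W ≤ e W W := energy_le hW hVp
    have : (n₀:ℝ) * δ^2 > e W W := by
      rw [hδsq]
      have h1 : 1 < (n₀:ℝ) * ε^2 := by
        rw [div_lt_iff₀ (by positivity : (0:ℝ) < ε^2)] at hfl
        linarith
      nlinarith [heWWpos]
    linarith [hE, hEle]

end MainProof

/-- Weak regularity lemma for graphons: for every graphon `W` and `ε > 0` there
is a measurable partition `P` of `[0,1]` into at most `4^{1/ε²}` classes with
`‖W − W_P‖_□ ≤ ε ‖W‖₂`. -/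
theorem weak_regularity (W : ℝ → ℝ → ℝ)
    (hmeas : Measurable (Function.uncurry W)) (hsymm : ∀ x y, W x y = W y x)
    (hbdd : ∃ C : ℝ, ∀ x y, |W x y| ≤ C)
    (ε : ℝ) (hε : 0 < ε) :
    ∃ (m : ℕ) (V : Fin m → Set ℝ), IsPartition V ∧
      (m : ℝ) ≤ (4 : ℝ) ^ ((1 : ℝ) / ε ^ 2) ∧
      cutNorm (fun x y => W x y - stepW V W x y) ≤ ε * L2Norm W := by
  exact weak_regularity' W hmeas hsymm hbdd ε hε
end
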